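/- arXiv:1903.04338 — 10 statements merged into one kernel-verified Lean document; each statement's English description precedes it below -/
import Mathlib

section
/- Let α > 0 and M ≥ 1 be real numbers, let Γ ⊆ [0, M] be a set of real numbers satisfying the DCC, and let Γ'' ⊆ ℝ be a topologically closed set satisfying the ACC. Then there exist a finite set Γ' contained in the closure of Γ and a function g from the closure of Γ to ℝ whose image is contained in Γ' and which satisfies g(x) = x for every x ∈ Γ' (so g ∘ g = g on the closure of Γ), such that: (1) γ ≤ g(γ) ≤ γ + α for every γ ∈ Γ; (2) if γ, γ' ∈ Γ and γ ≤ γ', then g(γ) ≤ g(γ'); (3) for every β ∈ Γ'' and every γ ∈ Γ, if β ≥ γ then β ≥ g(γ). -/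
private lemma gap_above (S : Set ℝ)
    (h : ¬ ∃ f : ℕ → ℝ, StrictAnti f ∧ ∀ n, f n ∈ S) (x : ℝ) :
    ∃ b, x < b ∧ S ∩ Set.Ioo x b = ∅ := by
  by_contra hc
  push_neg at hc
  have key : ∀ b : {y : ℝ // x < y}, ∃ y : {y : ℝ // x < y}, y.1 ∈ S ∧ y.1 < b.1 := by
    rintro ⟨b, hb⟩
    have h2 := hc b hb
    obtain ⟨y, hyS, hy1, hy2⟩ := h2
    exact ⟨⟨y, hy1⟩, hyS, hy2⟩
  choose pick hpS hplt using key
  set F : ℕ → {y : ℝ // x < y} :=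
    fun n => Nat.rec (pick ⟨x + 1, by linarith⟩) (fun _ p => pick p) n with hF
  have hFs : ∀ n, F (n + 1) = pick (F n) := fun n => rfl
  refine h ⟨fun n => (F n).1, strictAnti_nat_of_succ_lt (fun n => ?_), fun n => ?_⟩
  · rw [hFs]; exact hplt (F n)
  · cases n with
    | zero => exact hpS _
    | succ m => exact hpS (F m)

private lemma gap_below (S : Set ℝ)
    (h : ¬ ∃ f : ℕ → ℝ, StrictMono f ∧ ∀ n, f n ∈ S) (x : ℝ) :
    ∃ a, a < x ∧ S ∩ Set.Ioo a x = ∅ := by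
  by_contra hc
  push_neg at hc
  have key : ∀ b : {y : ℝ // y < x}, ∃ y : {y : ℝ // y < x}, y.1 ∈ S ∧ b.1 < y.1 := by
    rintro ⟨b, hb⟩
    have h2 := hc b hb
    obtain ⟨y, hyS, hy1, hy2⟩ := h2
    exact ⟨⟨y, hy2⟩, hyS, hy1⟩
  choose pick hpS hplt using key
  set F : ℕ → {y : ℝ // y < x} :=
    fun n => Nat.rec (pick ⟨x - 1, by linarith⟩) (fun _ p => pick p) n with hF
  have hFs : ∀ n, F (n + 1) = pick (F n) := fun n => rfl
  refine h ⟨fun n => (F n).1, strictMono_nat_of_lt_succ (fun n => ?_), fun n => ?_⟩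
  · rw [hFs]; exact hplt (F n)
  · cases n with
    | zero => exact hpS _
    | succ m => exact hpS (F m)

/-- ACC for minimal log discrepancies paper, Lemma 5.3 (`lem: accdcc projection`):
Given `α > 0`, `M ≥ 1`, a DCC set `Γ ⊆ [0, M]`, and a closed ACC set `Γ''`, there are a
finite set `Γ' ⊆ closure Γ` and a projection `g : closure Γ → Γ'` with the stated
monotonicity and comparison properties. -/
theorem stmt_0 (α M : ℝ) (hα : 0 < α) (hM : 1 ≤ M)
    (Γ : Set ℝ) (hΓsub : Γ ⊆ Set.Icc 0 M)
    (hΓdcc : ¬ ∃ f : ℕ → ℝ, StrictAnti f ∧ ∀ n, f n ∈ Γ)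
    (Γ'' : Set ℝ) (hΓ''closed : IsClosed Γ'')
    (hΓ''acc : ¬ ∃ f : ℕ → ℝ, StrictMono f ∧ ∀ n, f n ∈ Γ'') :
    ∃ (Γ' : Set ℝ) (g : ℝ → ℝ),
      Γ'.Finite ∧ Γ' ⊆ closure Γ ∧
      (∀ x ∈ closure Γ, g x ∈ Γ') ∧
      (∀ x ∈ Γ', g x = x) ∧
      (∀ γ ∈ Γ, γ ≤ g γ ∧ g γ ≤ γ + α) ∧
      (∀ γ ∈ Γ, ∀ γ' ∈ Γ, γ ≤ γ' → g γ ≤ g γ') ∧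
      (∀ β ∈ Γ'', ∀ γ ∈ Γ, γ ≤ β → g γ ≤ β) := by
  set D := closure Γ with hD
  have hDsub : D ⊆ Set.Icc 0 M := closure_minimal hΓsub isClosed_Icc
  have hDcomp : IsCompact D := isCompact_Icc.of_isClosed_subset isClosed_closure hDsub
  -- gap above each point, for D
  have hgapD : ∀ x : ℝ, ∃ b, x < b ∧ D ∩ Set.Ioo x b = ∅ := by
    intro x
    obtain ⟨b, hxb, hbe⟩ := gap_above Γ hΓdcc x
    refine ⟨b, hxb, Set.eq_empty_iff_forall_notMem.2 ?_⟩
    rintro y ⟨hyD, hy⟩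
    obtain ⟨z, hz1, hz2⟩ := mem_closure_iff.1 hyD (Set.Ioo x b) isOpen_Ioo hy
    exact Set.eq_empty_iff_forall_notMem.1 hbe z ⟨hz2, hz1⟩
  choose b hb hbe using hgapD
  -- gap below each point, for Γ''
  have hgap2 : ∀ x : ℝ, ∃ a, a < x ∧ a ≥ x - α ∧ Γ'' ∩ Set.Ioo a x = ∅ := by
    intro x
    obtain ⟨a0, ha0, hae⟩ := gap_below Γ'' hΓ''acc x
    refine ⟨max a0 (x - α), by simp [ha0, hα], le_max_right _ _, ?_⟩
    refine Set.eq_empty_iff_forall_notMem.2 ?_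
    rintro y ⟨hyΓ, hy1, hy2⟩
    exact Set.eq_empty_iff_forall_notMem.1 hae y ⟨hyΓ, lt_of_le_of_lt (le_max_left _ _) hy1, hy2⟩
  choose a ha haα hae using hgap2
  -- finite subcover
  obtain ⟨t, htD, hcov⟩ := hDcomp.elim_nhds_subcover (fun x => Set.Ioo (a x) (b x))
    (fun x _ => isOpen_Ioo.mem_nhds ⟨ha x, hb x⟩)
  -- key: every point of D is dominated by some center
  have key : ∀ y ∈ D, ∃ c ∈ t, a c < y ∧ y ≤ c := by
    intro y hy
    obtain ⟨c, hct, hyc⟩ := Set.mem_iUnion₂.1 (hcov hy)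
    refine ⟨c, hct, hyc.1, ?_⟩
    by_contra hcy
    push_neg at hcy
    exact Set.eq_empty_iff_forall_notMem.1 (hbe c) y ⟨hy, hcy, hyc.2⟩
  set g : ℝ → ℝ := fun x => sInf ((t : Set ℝ) ∩ Set.Ici x) with hg
  have hfin : ∀ x : ℝ, ((t : Set ℝ) ∩ Set.Ici x).Finite :=
    fun x => t.finite_toSet.inter_of_left _
  have hne : ∀ y ∈ D, ((t : Set ℝ) ∩ Set.Ici y).Nonempty := by
    intro y hy
    obtain ⟨c, hct, _, hyc⟩ := key y hy
    exact ⟨c, hct, hyc⟩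
  have hmem : ∀ y ∈ D, g y ∈ (t : Set ℝ) ∩ Set.Ici y :=
    fun y hy => (hne y hy).csInf_mem (hfin y)
  have hΓD : Γ ⊆ D := subset_closure
  refine ⟨(t : Set ℝ), g, t.finite_toSet, fun c hc => htD c hc, ?_, ?_, ?_, ?_, ?_⟩
  · exact fun x hx => (hmem x hx).1
  · intro x hx
    refine le_antisymm (csInf_le (hfin x).bddBelow ⟨hx, le_refl x⟩) ?_
    exact le_csInf ⟨x, hx, le_refl x⟩ (fun c hc => hc.2)
  · intro γ hγ
    obtain ⟨c, hct, hac, hγc⟩ := key γ (hΓD hγ)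
    constructor
    · exact le_csInf (hne γ (hΓD hγ)) (fun d hd => hd.2)
    · have h1 : g γ ≤ c := csInf_le (hfin γ).bddBelow ⟨hct, hγc⟩
      have h2 := haα c
      linarith
  · intro γ hγ γ' hγ' hle
    exact csInf_le_csInf (hfin γ).bddBelow (hne γ' (hΓD hγ'))
      (Set.inter_subset_inter_right _ (Set.Ici_subset_Ici.2 hle))
  · intro β hβ γ hγ hγβ
    obtain ⟨c, hct, hac, hγc⟩ := key γ (hΓD hγ)
    have h1 : g γ ≤ c := csInf_le (hfin γ).bddBelow ⟨hct, hγc⟩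
    have h2 : c ≤ β := by
      by_contra hcb
      push_neg at hcb
      exact Set.eq_empty_iff_forall_notMem.1 (hae c) β ⟨hβ, lt_of_lt_of_le hac hγβ, hcb⟩
    linarith
end

section
/- Let n be a positive integer and let ‖·‖₁ and ‖·‖₂ be two norms on ℝⁿ. Then there exists a positive real number M such that for all nonzero vectors a, b ∈ ℝⁿ one has ‖ a/‖a‖₁ − b/‖b‖₁ ‖₁ ≤ M · ‖ a/‖a‖₂ − b/‖b‖₂ ‖₂. -/
section aux
variable {n : ℕ} {N : (Fin n → ℝ) → ℝ}

lemma my_nonneg (h0 : ∀ x, N x = 0 ↔ x = 0)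
    (hs : ∀ (t : ℝ) (x : Fin n → ℝ), N (t • x) = |t| * N x)
    (ha : ∀ x y, N (x + y) ≤ N x + N y) (x : Fin n → ℝ) : 0 ≤ N x := by
  have hneg : N (-x) = N x := by
    have := hs (-1) x
    simpa using this
  have h := ha x (-x)
  have hz : N 0 = 0 := (h0 0).mpr rfl
  simp [hz, hneg] at h
  linarith

lemma my_sub (h0 : ∀ x, N x = 0 ↔ x = 0)
    (hs : ∀ (t : ℝ) (x : Fin n → ℝ), N (t • x) = |t| * N x)
    (ha : ∀ x y, N (x + y) ≤ N x + N y) (x y : Fin n → ℝ) :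
    |N x - N y| ≤ N (x - y) := by
  have hneg : ∀ z : Fin n → ℝ, N (-z) = N z := fun z => by simpa using hs (-1) z
  have h1 := ha (x - y) y
  have h2 := ha (y - x) x
  simp only [sub_add_cancel] at h1 h2
  rw [abs_le]
  constructor
  · have : N (y - x) = N (x - y) := by rw [← hneg (x - y)]; ring_nf
    linarith
  · linarith

lemma norm_le_C (h0 : ∀ x, N x = 0 ↔ x = 0)
    (hs : ∀ (t : ℝ) (x : Fin n → ℝ), N (t • x) = |t| * N x)
    (ha : ∀ x y, N (x + y) ≤ N x + N y) :
    ∃ C, 0 < C ∧ ∀ x, N x ≤ C * ‖x‖ := by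
  set K : ℝ := ∑ i : Fin n, N (Pi.single i 1) with hK
  have hKnn : 0 ≤ K := Finset.sum_nonneg fun i _ => my_nonneg h0 hs ha _
  refine ⟨K + 1, by linarith, fun x => ?_⟩
  have hsingle : ∀ i : Fin n, Pi.single i (x i) = (x i) • (Pi.single i 1 : Fin n → ℝ) := by
    intro i
    funext j
    simp [Pi.single_apply, mul_ite]
  calc N x = N (∑ i : Fin n, Pi.single i (x i)) := by rw [Finset.univ_sum_single]
    _ ≤ ∑ i : Fin n, N (Pi.single i (x i)) := by
        apply Finset.le_sum_of_subadditive N ((h0 0).mpr rfl).le ha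
    _ = ∑ i : Fin n, |x i| * N (Pi.single i (1:ℝ)) := by
        apply Finset.sum_congr rfl
        intro i _
        rw [hsingle i, hs]
    _ ≤ ∑ i : Fin n, ‖x‖ * N (Pi.single i (1:ℝ)) := by
        apply Finset.sum_le_sum
        intro i _
        exact mul_le_mul_of_nonneg_right (by simpa using norm_le_pi_norm x i)
          (my_nonneg h0 hs ha _)
    _ = ‖x‖ * K := by rw [← Finset.mul_sum]
    _ ≤ (K + 1) * ‖x‖ := by nlinarith [norm_nonneg x]

lemma c_le_norm (hn : 0 < n) (h0 : ∀ x, N x = 0 ↔ x = 0)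
    (hs : ∀ (t : ℝ) (x : Fin n → ℝ), N (t • x) = |t| * N x)
    (ha : ∀ x y, N (x + y) ≤ N x + N y) :
    ∃ c, 0 < c ∧ ∀ x, c * ‖x‖ ≤ N x := by
  obtain ⟨C, hC, hCle⟩ := norm_le_C h0 hs ha
  -- N is continuous
  have hlip : LipschitzWith (Real.toNNReal C) N := by
    apply LipschitzWith.of_dist_le_mul
    intro x y
    rw [Real.dist_eq, dist_eq_norm]
    calc |N x - N y| ≤ N (x - y) := my_sub h0 hs ha x y
      _ ≤ C * ‖x - y‖ := hCle _
      _ ≤ Real.toNNReal C * ‖x - y‖ := by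
          gcongr
          exact Real.le_coe_toNNReal C
  have hcont : Continuous N := hlip.continuous
  haveI : Nonempty (Fin n) := ⟨⟨0, hn⟩⟩
  have hsne : (Metric.sphere (0 : Fin n → ℝ) 1).Nonempty := by
    refine ⟨fun _ => 1, ?_⟩
    simp [Metric.mem_sphere, dist_eq_norm]
  have hcompact : IsCompact (Metric.sphere (0 : Fin n → ℝ) 1) := isCompact_sphere 0 1
  obtain ⟨z, hz, hzmin⟩ := hcompact.exists_isMinOn hsne hcont.continuousOn
  have hznorm : ‖z‖ = 1 := by simpa [dist_eq_norm] using hz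
  have hzne : z ≠ 0 := by intro h; rw [h] at hznorm; simp at hznorm
  have hc : 0 < N z := by
    rcases lt_or_eq_of_le (my_nonneg h0 hs ha z) with h | h
    · exact h
    · exact absurd ((h0 z).mp h.symm) hzne
  refine ⟨N z, hc, fun x => ?_⟩
  rcases eq_or_ne x 0 with rfl | hx
  · simp [(h0 0).mpr rfl]
  · have hxn : (0:ℝ) < ‖x‖ := norm_pos_iff.mpr hx
    have hmem : ‖x‖⁻¹ • x ∈ Metric.sphere (0 : Fin n → ℝ) 1 := by
      simp [dist_eq_norm, norm_smul, abs_of_pos (inv_pos.mpr hxn), inv_mul_cancel₀ hxn.ne']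
    have hmin := hzmin hmem
    have : N x = ‖x‖ * N (‖x‖⁻¹ • x) := by
      rw [hs, abs_of_pos (inv_pos.mpr hxn)]
      field_simp
    rw [this]
    calc N z * ‖x‖ = ‖x‖ * N z := by ring
      _ ≤ ‖x‖ * N (‖x‖⁻¹ • x) := by
          apply mul_le_mul_of_nonneg_left hmin (le_of_lt hxn)

end aux

lemma my_equiv {n : ℕ} (hn : 0 < n) (N₁ N₂ : (Fin n → ℝ) → ℝ)
    (h01 : ∀ x, N₁ x = 0 ↔ x = 0)
    (hs1 : ∀ (t : ℝ) (x : Fin n → ℝ), N₁ (t • x) = |t| * N₁ x)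
    (ha1 : ∀ x y, N₁ (x + y) ≤ N₁ x + N₁ y)
    (h02 : ∀ x, N₂ x = 0 ↔ x = 0)
    (hs2 : ∀ (t : ℝ) (x : Fin n → ℝ), N₂ (t • x) = |t| * N₂ x)
    (ha2 : ∀ x y, N₂ (x + y) ≤ N₂ x + N₂ y) :
    ∃ K, 0 < K ∧ ∀ x, N₁ x ≤ K * N₂ x := by
  obtain ⟨C, hC, hCle⟩ := norm_le_C h01 hs1 ha1
  obtain ⟨c, hc, hcle⟩ := c_le_norm hn h02 hs2 ha2
  refine ⟨C / c, div_pos hC hc, fun x => ?_⟩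
  have h1 := hCle x
  have h2 := hcle x
  rw [div_mul_eq_mul_div, le_div_iff₀ hc]
  nlinarith



/-- Lemma 6.6 (`lem: equivnorm`): for any two norms `N₁, N₂` on `ℝⁿ` there is `M > 0` such that
`N₁(a/N₁(a) − b/N₁(b)) ≤ M · N₂(a/N₂(a) − b/N₂(b))` for all nonzero `a, b`. -/
theorem stmt_6 (n : ℕ) (hn : 0 < n)
    (N₁ N₂ : (Fin n → ℝ) → ℝ)
    (hN₁zero : ∀ x, N₁ x = 0 ↔ x = 0)
    (hN₁smul : ∀ (t : ℝ) (x : Fin n → ℝ), N₁ (t • x) = |t| * N₁ x)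
    (hN₁add : ∀ x y, N₁ (x + y) ≤ N₁ x + N₁ y)
    (hN₂zero : ∀ x, N₂ x = 0 ↔ x = 0)
    (hN₂smul : ∀ (t : ℝ) (x : Fin n → ℝ), N₂ (t • x) = |t| * N₂ x)
    (hN₂add : ∀ x y, N₂ (x + y) ≤ N₂ x + N₂ y) :
    ∃ M : ℝ, 0 < M ∧ ∀ a b : Fin n → ℝ, a ≠ 0 → b ≠ 0 →
      N₁ ((N₁ a)⁻¹ • a - (N₁ b)⁻¹ • b) ≤ M * N₂ ((N₂ a)⁻¹ • a - (N₂ b)⁻¹ • b) := by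

  obtain ⟨K, hK, hKle⟩ := my_equiv hn N₁ N₂ hN₁zero hN₁smul hN₁add hN₂zero hN₂smul hN₂add
  obtain ⟨K', hK', hK'le⟩ := my_equiv hn N₂ N₁ hN₂zero hN₂smul hN₂add hN₁zero hN₁smul hN₁add
  refine ⟨2 * K * K', by positivity, fun a b ha hb => ?_⟩
  have hpos : ∀ x : Fin n → ℝ, x ≠ 0 → 0 < N₁ x := fun x hx =>
    lt_of_le_of_ne (my_nonneg hN₁zero hN₁smul hN₁add x)
      (fun h => hx ((hN₁zero x).mp h.symm))
  have hpos2 : ∀ x : Fin n → ℝ, x ≠ 0 → 0 < N₂ x := fun x hx =>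
    lt_of_le_of_ne (my_nonneg hN₂zero hN₂smul hN₂add x)
      (fun h => hx ((hN₂zero x).mp h.symm))
  set u : Fin n → ℝ := (N₂ a)⁻¹ • a with hu
  set v : Fin n → ℝ := (N₂ b)⁻¹ • b with hv
  clear_value u v
  have hNa2 := hpos2 a ha
  have hNb2 := hpos2 b hb
  have hune : u ≠ 0 := by
    simp [hu, smul_eq_zero, inv_eq_zero]
    exact ⟨fun h => absurd h hNa2.ne', ha⟩
  have hvne : v ≠ 0 := by
    simp [hv, smul_eq_zero, inv_eq_zero]
    exact ⟨fun h => absurd h hNb2.ne', hb⟩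
  have hN2u : N₂ u = 1 := by
    rw [hu, hN₂smul, abs_of_pos (inv_pos.mpr hNa2), inv_mul_cancel₀ hNa2.ne']
  have hN2v : N₂ v = 1 := by
    rw [hv, hN₂smul, abs_of_pos (inv_pos.mpr hNb2), inv_mul_cancel₀ hNb2.ne']
  have hN1u := hpos u hune
  have hN1v := hpos v hvne
  have hNa1 := hpos a ha
  have hNb1 := hpos b hb
  -- rewrite the N₁-normalized vectors in terms of u, v
  have hrw1 : (N₁ a)⁻¹ • a = (N₁ u)⁻¹ • u := by
    rw [hu, hN₁smul, abs_of_pos (inv_pos.mpr hNa2), smul_smul, mul_inv, inv_inv]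
    congr 1
    field_simp
  have hrw2 : (N₁ b)⁻¹ • b = (N₁ v)⁻¹ • v := by
    rw [hv, hN₁smul, abs_of_pos (inv_pos.mpr hNb2), smul_smul, mul_inv, inv_inv]
    congr 1
    field_simp
  rw [hrw1, hrw2]
  -- key decomposition
  have hdecomp : (N₁ u)⁻¹ • u - (N₁ v)⁻¹ • v
      = (N₁ u)⁻¹ • (u - v) + ((N₁ u)⁻¹ - (N₁ v)⁻¹) • v := by
    rw [smul_sub, sub_smul]
    abel
  have step1 : N₁ ((N₁ u)⁻¹ • u - (N₁ v)⁻¹ • v) ≤ 2 * N₁ (u - v) / N₁ u := by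
    rw [hdecomp]
    calc N₁ ((N₁ u)⁻¹ • (u - v) + ((N₁ u)⁻¹ - (N₁ v)⁻¹) • v)
        ≤ N₁ ((N₁ u)⁻¹ • (u - v)) + N₁ (((N₁ u)⁻¹ - (N₁ v)⁻¹) • v) := hN₁add _ _
      _ = (N₁ u)⁻¹ * N₁ (u - v) + |(N₁ u)⁻¹ - (N₁ v)⁻¹| * N₁ v := by
          rw [hN₁smul, hN₁smul, abs_of_pos (inv_pos.mpr hN1u)]
      _ ≤ 2 * N₁ (u - v) / N₁ u := by
          have habs : |(N₁ u)⁻¹ - (N₁ v)⁻¹| * N₁ v ≤ N₁ (u - v) / N₁ u := by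
            have : (N₁ u)⁻¹ - (N₁ v)⁻¹ = (N₁ v - N₁ u) / (N₁ u * N₁ v) := by
              field_simp
            rw [this, abs_div, abs_of_pos (mul_pos hN1u hN1v)]
            rw [div_mul_eq_mul_div, div_le_div_iff₀ (mul_pos hN1u hN1v) hN1u]
            have hsub : |N₁ v - N₁ u| ≤ N₁ (u - v) := by
              have := my_sub hN₁zero hN₁smul hN₁add v u
              have heq : N₁ (v - u) = N₁ (u - v) := by
                have : v - u = (-1 : ℝ) • (u - v) := by
                  rw [neg_one_smul]; exact (neg_sub u v).symm
                rw [this, hN₁smul]; simp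
              rwa [heq] at this
            calc |N₁ v - N₁ u| * N₁ v * N₁ u
                ≤ N₁ (u - v) * N₁ v * N₁ u :=
                  mul_le_mul_of_nonneg_right
                    (mul_le_mul_of_nonneg_right hsub hN1v.le) hN1u.le
              _ = N₁ (u - v) * (N₁ u * N₁ v) := by ring
          have h1 : (N₁ u)⁻¹ * N₁ (u - v) = N₁ (u - v) / N₁ u := by
            rw [div_eq_inv_mul]
          have h2 : 2 * N₁ (u - v) / N₁ u = N₁ (u - v) / N₁ u + N₁ (u - v) / N₁ u := by
            ring
          rw [h1, h2]
          linarith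
  have hy : 1 ≤ K' * N₁ u := by
    have := hK'le u
    rwa [hN2u] at this
  have hZ : 0 ≤ N₂ (u - v) := my_nonneg hN₂zero hN₂smul hN₂add _
  have hX : N₁ (u - v) ≤ K * N₂ (u - v) := hKle _
  calc N₁ ((N₁ u)⁻¹ • u - (N₁ v)⁻¹ • v) ≤ 2 * N₁ (u - v) / N₁ u := step1
    _ ≤ 2 * K * K' * N₂ (u - v) := by
        rw [div_le_iff₀ hN1u]
        nlinarith [mul_nonneg (mul_nonneg hK.le hZ) (by linarith : (0:ℝ) ≤ K' * N₁ u - 1)]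
end

section
/- Let n be a positive integer, let ‖·‖₁ and ‖·‖₂ be two norms on ℝⁿ, and let m₁, m₂ > 0 be real numbers such that m₁·‖x‖₂ ≤ ‖x‖₁ ≤ m₂·‖x‖₂ for all x ∈ ℝⁿ. Then for all nonzero vectors a, b ∈ ℝⁿ one has ‖ a/‖a‖₁ − b/‖b‖₁ ‖₁ ≤ (2m₂/m₁) · ‖ a/‖a‖₂ − b/‖b‖₂ ‖₂. -/
section Aux

variable {n : ℕ} (N : (Fin n → ℝ) → ℝ)

lemma myNonneg (hz : ∀ x, N x = 0 ↔ x = 0)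
    (hs : ∀ (t : ℝ) (x : Fin n → ℝ), N (t • x) = |t| * N x)
    (ha : ∀ x y, N (x + y) ≤ N x + N y) (x : Fin n → ℝ) : 0 ≤ N x := by
  have h0 : N 0 = 0 := (hz 0).mpr rfl
  have hneg : N (-x) = N x := by
    have := hs (-1) x
    simpa using this
  have := ha x (-x)
  simp [h0, hneg] at this
  linarith

lemma mySubComm (hs : ∀ (t : ℝ) (x : Fin n → ℝ), N (t • x) = |t| * N x)
    (x y : Fin n → ℝ) : N (x - y) = N (y - x) := by
  have := hs (-1) (x - y)
  simpa [neg_sub] using this.symm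

lemma myPos (hz : ∀ x, N x = 0 ↔ x = 0)
    (hs : ∀ (t : ℝ) (x : Fin n → ℝ), N (t • x) = |t| * N x)
    (ha : ∀ x y, N (x + y) ≤ N x + N y) {x : Fin n → ℝ} (hx : x ≠ 0) : 0 < N x :=
  lt_of_le_of_ne (myNonneg N hz hs ha x) (fun h => hx ((hz x).mp h.symm))

lemma myAbsSub (hs : ∀ (t : ℝ) (x : Fin n → ℝ), N (t • x) = |t| * N x)
    (ha : ∀ x y, N (x + y) ≤ N x + N y) (x y : Fin n → ℝ) :
    |N x - N y| ≤ N (x - y) := by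
  have h1 : N x ≤ N (x - y) + N y := by
    have := ha (x - y) y
    simpa using this
  have h2 : N y ≤ N (y - x) + N x := by
    have := ha (y - x) x
    simpa using this
  rw [← mySubComm N hs x y] at h2
  rw [abs_le]
  constructor <;> linarith

/-- The key single-norm estimate:
`N(u/N(u) - v/N(v)) ≤ 2 N(u-v) / N(u)` for nonzero `u, v`. -/
lemma key_est (hz : ∀ x, N x = 0 ↔ x = 0)
    (hs : ∀ (t : ℝ) (x : Fin n → ℝ), N (t • x) = |t| * N x)
    (ha : ∀ x y, N (x + y) ≤ N x + N y) {u v : Fin n → ℝ}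
    (hu : u ≠ 0) (hv : v ≠ 0) :
    N ((N u)⁻¹ • u - (N v)⁻¹ • v) ≤ 2 * N (u - v) / N u := by
  have hNu := myPos N hz hs ha hu
  have hNv := myPos N hz hs ha hv
  have hsplit : (N u)⁻¹ • u - (N v)⁻¹ • v
      = (N u)⁻¹ • (u - v) + ((N u)⁻¹ - (N v)⁻¹) • v := by
    simp [smul_sub, sub_smul]
  rw [hsplit]
  have h1 := ha ((N u)⁻¹ • (u - v)) (((N u)⁻¹ - (N v)⁻¹) • v)
  rw [hs, hs] at h1
  have e1 : |(N u)⁻¹| = (N u)⁻¹ := abs_of_pos (inv_pos.mpr hNu)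
  have e2 : |(N u)⁻¹ - (N v)⁻¹| * N v = |N v - N u| / N u := by
    have hd : (N u)⁻¹ - (N v)⁻¹ = (N v - N u) * (N u * N v)⁻¹ := by
      field_simp
    rw [hd, abs_mul, abs_inv, abs_mul, abs_of_pos hNu, abs_of_pos hNv]
    field_simp
  rw [e1, e2] at h1
  have habs : |N v - N u| ≤ N (u - v) := by
    have := myAbsSub N hs ha v u
    rwa [mySubComm N hs v u] at this
  have h4 : |N v - N u| / N u ≤ N (u - v) / N u := by gcongr
  have e5 : (N u)⁻¹ * N (u - v) = N (u - v) / N u := by ring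
  have e3 : 2 * N (u - v) / N u = N (u - v) / N u + N (u - v) / N u := by ring
  rw [e3]
  rw [e5] at h1
  linarith

end Aux

/-- Quantitative version of Lemma 6.6: if `m₁·N₂(x) ≤ N₁(x) ≤ m₂·N₂(x)` for all `x`, then
`N₁(a/N₁(a) − b/N₁(b)) ≤ (2m₂/m₁) · N₂(a/N₂(a) − b/N₂(b))` for all nonzero `a, b`. -/
theorem stmt_7 (n : ℕ) (hn : 0 < n)
    (N₁ N₂ : (Fin n → ℝ) → ℝ)
    (hN₁zero : ∀ x, N₁ x = 0 ↔ x = 0)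
    (hN₁smul : ∀ (t : ℝ) (x : Fin n → ℝ), N₁ (t • x) = |t| * N₁ x)
    (hN₁add : ∀ x y, N₁ (x + y) ≤ N₁ x + N₁ y)
    (hN₂zero : ∀ x, N₂ x = 0 ↔ x = 0)
    (hN₂smul : ∀ (t : ℝ) (x : Fin n → ℝ), N₂ (t • x) = |t| * N₂ x)
    (hN₂add : ∀ x y, N₂ (x + y) ≤ N₂ x + N₂ y)
    (m₁ m₂ : ℝ) (hm₁ : 0 < m₁) (hm₂ : 0 < m₂)
    (hle : ∀ x, m₁ * N₂ x ≤ N₁ x ∧ N₁ x ≤ m₂ * N₂ x) :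
    ∀ a b : Fin n → ℝ, a ≠ 0 → b ≠ 0 →
      N₁ ((N₁ a)⁻¹ • a - (N₁ b)⁻¹ • b) ≤ (2 * m₂ / m₁) * N₂ ((N₂ a)⁻¹ • a - (N₂ b)⁻¹ • b) := by
  intro a b ha hb
  have hN₂a := myPos N₂ hN₂zero hN₂smul hN₂add ha
  have hN₂b := myPos N₂ hN₂zero hN₂smul hN₂add hb
  have hN₁a := myPos N₁ hN₁zero hN₁smul hN₁add ha
  have hN₁b := myPos N₁ hN₁zero hN₁smul hN₁add hb
  set u := (N₂ a)⁻¹ • a with hu_def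
  set v := (N₂ b)⁻¹ • b with hv_def
  have hu : u ≠ 0 := by
    simp [hu_def, smul_eq_zero, ha, inv_eq_zero, hN₂a.ne']
  have hv : v ≠ 0 := by
    simp [hv_def, smul_eq_zero, hb, inv_eq_zero, hN₂b.ne']
  have hN₁u : N₁ u = (N₂ a)⁻¹ * N₁ a := by
    rw [hu_def, hN₁smul, abs_of_pos (inv_pos.mpr hN₂a)]
  have hN₁v : N₁ v = (N₂ b)⁻¹ * N₁ b := by
    rw [hv_def, hN₁smul, abs_of_pos (inv_pos.mpr hN₂b)]
  have hua : (N₁ u)⁻¹ • u = (N₁ a)⁻¹ • a := by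
    rw [hN₁u, hu_def, smul_smul, mul_inv, inv_inv]
    congr 1
    field_simp
  have hvb : (N₁ v)⁻¹ • v = (N₁ b)⁻¹ • b := by
    rw [hN₁v, hv_def, smul_smul, mul_inv, inv_inv]
    congr 1
    field_simp
  rw [← hua, ← hvb]
  have hkey := key_est N₁ hN₁zero hN₁smul hN₁add hu hv
  refine hkey.trans ?_
  have hN₁u_ge : m₁ ≤ N₁ u := by
    have := (hle u).1
    have hN₂u : N₂ u = 1 := by
      rw [hu_def, hN₂smul, abs_of_pos (inv_pos.mpr hN₂a), inv_mul_cancel₀ hN₂a.ne']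
    rw [hN₂u] at this; linarith
  have hN₁uv : N₁ (u - v) ≤ m₂ * N₂ (u - v) := (hle (u - v)).2
  have hN₂uv : 0 ≤ N₂ (u - v) := myNonneg N₂ hN₂zero hN₂smul hN₂add _
  have hN₁u_pos : 0 < N₁ u := myPos N₁ hN₁zero hN₁smul hN₁add hu
  rw [div_le_iff₀ hN₁u_pos]
  have h2 : (2 * m₂ / m₁) * N₂ (u - v) * m₁ ≤ (2 * m₂ / m₁) * N₂ (u - v) * N₁ u := by
    apply mul_le_mul_of_nonneg_left hN₁u_ge
    positivity
  have h3 : (2 * m₂ / m₁) * N₂ (u - v) * m₁ = 2 * (m₂ * N₂ (u - v)) := by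
    field_simp
  nlinarith [myNonneg N₁ hN₁zero hN₁smul hN₁add (u - v)]
end

section
/- Let p₀, l, s₀ be positive integers, k₀ a nonnegative integer, and ε₁ > 0 a real number. Let r₁, …, r_{s₀+k₀} be positive real numbers such that 1, r₁, …, r_{s₀+k₀} are linearly independent over ℚ, and let e' = (e₁, …, e_{s₀}) ∈ ℝ^{s₀} be a nonzero vector with all coordinates ≥ 0. Then there exist a positive integer n₀ and a point r' = (r₁', …, r_{s₀+k₀}') ∈ ℝ^{s₀+k₀} such that: (1) p₀ divides n₀; (2) n₀·rⱼ' ∈ l·ℤ for every 1 ≤ j ≤ s₀+k₀; (3) ‖r − r'‖∞ < ε₁/n₀, where r = (r₁, …, r_{s₀+k₀}); and (4) c ≠ d and ‖ (c − d)/‖c − d‖∞ − e'/‖e'‖∞ ‖∞ < ε₁, where c = (r₁, …, r_{s₀}) and d = (r₁', …, r_{s₀}'). -/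
open Finset
set_option maxHeartbeats 1000000

noncomputable def ee (x : ℝ) : ℂ := Complex.exp ((Real.pi * x : ℝ) * Complex.I)

lemma ee_add (x y : ℝ) : ee (x + y) = ee x * ee y := by
  rw [ee, ee, ee, ← Complex.exp_add]
  congr 1
  push_cast
  ring

lemma ee_zero : ee 0 = 1 := by simp [ee]

lemma ee_mul_ee_neg (x : ℝ) : ee x * ee (-x) = 1 := by
  rw [← ee_add]
  simp [ee_zero]

lemma ee_abs (x : ℝ) : ‖ee x‖ = 1 := Complex.norm_exp_ofReal_mul_I _

lemma ee_pow (x : ℝ) (n : ℕ) : ee x ^ n = ee (n * x) := by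
  rw [ee, ee, ← Complex.exp_nat_mul]
  congr 1
  push_cast
  ring

lemma ee_eq_one_iff {x : ℝ} : ee x = 1 ↔ ∃ z : ℤ, x = 2 * z := by
  rw [ee, Complex.exp_eq_one_iff]
  constructor
  · rintro ⟨nn, h⟩
    refine ⟨nn, ?_⟩
    have h2 : ((Real.pi * x : ℝ) : ℂ) * Complex.I = ((nn * (2 * Real.pi) : ℝ) : ℂ) * Complex.I := by
      rw [h]; push_cast; ring
    have h3 : (Real.pi * x : ℝ) = (nn * (2 * Real.pi) : ℝ) := by
      exact_mod_cast mul_right_cancel₀ Complex.I_ne_zero h2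
    have hπ : (Real.pi : ℝ) ≠ 0 := Real.pi_ne_zero
    have h4 : Real.pi * x = Real.pi * (2 * nn) := by linarith
    exact mul_left_cancel₀ Real.pi_ne_zero h4
  · rintro ⟨zz, rfl⟩
    refine ⟨zz, ?_⟩
    push_cast
    ring

lemma geom_sum_Icc (z : ℂ) (N : ℕ) : (z - 1) * ∑ n ∈ Icc 1 N, z ^ n = z ^ (N + 1) - z := by
  induction N with
  | zero => simp
  | succ N ih =>
    rw [Finset.sum_Icc_succ_top (by omega), mul_add, ih]
    ring

lemma geom_bound (z : ℂ) (hz : ‖z‖ = 1) (h1 : z ≠ 1) (N : ℕ) :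
    ‖∑ n ∈ Icc 1 N, z ^ n‖ ≤ 2 / ‖z - 1‖ := by
  have hz1 : ‖z - 1‖ ≠ 0 := by
    simpa [sub_eq_zero] using h1
  rw [le_div_iff₀ (lt_of_le_of_ne (norm_nonneg _) (Ne.symm hz1))]
  have habs : ‖∑ n ∈ Icc 1 N, z ^ n‖ * ‖z - 1‖ = ‖z ^ (N + 1) - z‖ := by
    rw [mul_comm, ← norm_mul, geom_sum_Icc z N]
  rw [habs]
  calc ‖z ^ (N + 1) - z‖ ≤ ‖z ^ (N + 1)‖ + ‖z‖ := by
        exact norm_sub_le (z ^ (N + 1)) z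
    _ ≤ 2 := by rw [norm_pow, hz]; norm_num

lemma cos_pow_expand (M : ℕ) (θ : ℝ) :
    ((Real.cos (Real.pi * θ)) ^ (2 * M) : ℂ) =
      ∑ k ∈ range (2 * M + 1),
        ((((2 * M).choose k : ℝ) / 4 ^ M : ℝ) : ℂ) * ee (2 * ((k : ℝ) - M) * θ) := by
  have hcos : ((Real.cos (Real.pi * θ) : ℝ) : ℂ) = (ee θ + ee (-θ)) / 2 := by
    rw [Complex.ofReal_cos]
    simp only [Complex.cos, ee]
    have h2 : ((Real.pi * -θ : ℝ) : ℂ) * Complex.I = -(((Real.pi * θ : ℝ) : ℂ) * Complex.I) := by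
      push_cast; ring
    rw [h2]
    ring
  rw [hcos, div_pow, add_pow, Finset.sum_div]
  refine Finset.sum_congr rfl ?_
  intro k hk
  have hk' : k ≤ 2 * M := Nat.lt_succ_iff.mp (mem_range.mp hk)
  rw [ee_pow, ee_pow, ← ee_add]
  have harg : (k : ℝ) * θ + ((2 * M - k : ℕ) : ℝ) * (-θ) = 2 * ((k : ℝ) - M) * θ := by
    have hc : ((2 * M - k : ℕ) : ℝ) = 2 * (M : ℝ) - k := by
      push_cast [Nat.cast_sub hk']; ring
    rw [hc]; ring
  rw [harg]
  have h4 : ((2 : ℂ) ^ (2 * M)) = 4 ^ M := by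
    rw [pow_mul]; norm_num
  rw [h4]
  have h4' : ((4 : ℂ) ^ M) ≠ 0 := pow_ne_zero _ (by norm_num)
  field_simp
  push_cast
  rw [mul_assoc (ee _), mul_div_assoc', mul_div_cancel_left₀ _ h4']

lemma ee_sum {ι : Type*} (s : Finset ι) (f : ι → ℝ) : ee (∑ i ∈ s, f i) = ∏ i ∈ s, ee (f i) := by
  classical
  induction s using Finset.induction with
  | empty => simp [ee_zero]
  | insert _ _ h ih => rw [Finset.sum_insert h, Finset.prod_insert h, ee_add, ih]

lemma kronecker {m : ℕ} (α t : Fin m → ℝ)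
    (hα : ∀ (k : Fin m → ℤ) (z : ℤ), ∑ j, (k j : ℝ) * α j = (z : ℝ) → ∀ j, k j = 0)
    {η : ℝ} (hη : 0 < η) (hη2 : η ≤ 1 / 2) :
    ∃ n : ℕ, 0 < n ∧ ∀ j, ∃ z : ℤ, |(n : ℝ) * α j - z - t j| < η := by
  by_contra hcon
  push_neg at hcon
  -- basic facts about ρ = cos(πη)²
  set ρ : ℝ := Real.cos (Real.pi * η) ^ 2 with hρdef
  have hπ := Real.pi_pos
  have hπη0 : 0 < Real.pi * η := by positivity
  have hπη2 : Real.pi * η ≤ Real.pi / 2 := by nlinarith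
  have hcosnn : 0 ≤ Real.cos (Real.pi * η) :=
    Real.cos_nonneg_of_mem_Icc ⟨by linarith, hπη2⟩
  have hcoslt : Real.cos (Real.pi * η) < 1 := by
    have h0 : (0:ℝ) ∈ Set.Icc 0 Real.pi := ⟨le_refl _, le_of_lt hπ⟩
    have h1 : Real.pi * η ∈ Set.Icc 0 Real.pi := ⟨le_of_lt hπη0, by linarith⟩
    have := Real.strictAntiOn_cos h0 h1 hπη0
    simpa using this
  have hρ0 : 0 ≤ ρ := sq_nonneg _
  have hρ1 : ρ < 1 := by nlinarith
  -- choose M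
  obtain ⟨M, hM1, hMlt⟩ : ∃ M : ℕ, 0 < M ∧ ((2 * M : ℝ)) ^ m * ρ ^ M < 1 := by
    have hsml : Summable (fun n : ℕ => (n : ℝ) ^ m * ρ ^ n) :=
      summable_pow_mul_geometric_of_norm_lt_one m
        (by rwa [Real.norm_eq_abs, abs_of_nonneg hρ0])
    have htend := hsml.tendsto_atTop_zero
    have hev := htend.eventually (gt_mem_nhds (show (0:ℝ) < 1 / 2 ^ m by positivity))
    obtain ⟨M, hM⟩ := (hev.and (Filter.eventually_ge_atTop 1)).exists
    refine ⟨M, hM.2, ?_⟩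
    have h1 : (M : ℝ) ^ m * ρ ^ M < 1 / 2 ^ m := hM.1
    have h2 : ((2 * M : ℝ)) ^ m = 2 ^ m * (M : ℝ) ^ m := by rw [mul_pow]
    have h3 : (0:ℝ) < 2 ^ m := by positivity
    rw [h2]
    calc 2 ^ m * (M:ℝ) ^ m * ρ ^ M = 2 ^ m * ((M:ℝ) ^ m * ρ ^ M) := by ring
      _ < 2 ^ m * (1 / 2 ^ m) := by
          exact (mul_lt_mul_iff_right₀ h3).mpr h1
      _ = 1 := by field_simp
  classical
  -- the main objects
  set c₀ : ℝ := (Nat.centralBinom M : ℝ) / 4 ^ M with hc₀def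
  have hc₀pos : 0 < c₀ := by
    apply div_pos
    · exact_mod_cast Nat.centralBinom_pos M
    · positivity
  have hc₀low : 1 / (2 * M : ℝ) ≤ c₀ := by
    rw [div_le_div_iff₀ (by positivity) (by positivity)]
    have h := Nat.four_pow_le_two_mul_self_mul_centralBinom M hM1
    have h' : (4:ℝ) ^ M ≤ 2 * M * Nat.centralBinom M := by exact_mod_cast h
    linarith
  have hρMc₀ : ρ ^ M < c₀ ^ m := by
    have h2M : (0:ℝ) < (2 * M : ℝ) := by positivity
    have h1 : ρ ^ M < (1 / (2 * M : ℝ)) ^ m := by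
      rw [div_pow, one_pow, lt_div_iff₀ (by positivity)]
      linarith [hMlt]
    calc ρ ^ M < (1 / (2 * M : ℝ)) ^ m := h1
      _ ≤ c₀ ^ m := pow_le_pow_left₀ (by positivity) hc₀low m
  set Λ : Finset (Fin m → ℕ) := Fintype.piFinset (fun _ : Fin m => Finset.range (2 * M + 1))
    with hΛdef
  set κ₀ : Fin m → ℕ := fun _ => M with hκ₀def
  have hκ₀Λ : κ₀ ∈ Λ := by
    rw [hΛdef, Fintype.mem_piFinset]
    intro j
    rw [Finset.mem_range]
    simp only [hκ₀def]
    omega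
  set coef : ℕ → ℝ := fun k => ((2 * M).choose k : ℝ) / 4 ^ M with hcoefdef
  have hcoefnn : ∀ k, 0 ≤ coef k := fun k => by positivity
  set W : (Fin m → ℕ) → ℝ := fun κ => ∏ j, coef (κ j) with hWdef
  have hWnn : ∀ κ, 0 ≤ W κ := fun κ => Finset.prod_nonneg (fun j _ => hcoefnn _)
  set freq : (Fin m → ℕ) → ℝ := fun κ => ∑ j, 2 * ((κ j : ℝ) - M) * α j with hfreqdef
  set ph : (Fin m → ℕ) → ℝ := fun κ => ∑ j, 2 * ((κ j : ℝ) - M) * t j with hphdef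
  set F : ℕ → ℝ := fun n => ∏ j, Real.cos (Real.pi * ((n : ℝ) * α j - t j)) ^ (2 * M) with hFdef
  have hcoefM : coef M = c₀ := by
    rw [hcoefdef, hc₀def, Nat.centralBinom]
  have hWκ₀ : W κ₀ = c₀ ^ m := by
    rw [hWdef]
    simp only [hκ₀def, hcoefM]
    rw [Finset.prod_const, Finset.card_univ, Fintype.card_fin]
  have hfreqκ₀ : freq κ₀ = 0 := by
    rw [hfreqdef]
    simp [hκ₀def]
  have hphκ₀ : ph κ₀ = 0 := by
    rw [hphdef]
    simp [hκ₀def]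
  -- expansion of F n
  have hexp : ∀ n : ℕ, ((F n : ℝ) : ℂ) =
      ∑ κ ∈ Λ, ((W κ : ℝ) : ℂ) * ee (-(ph κ)) * ee (freq κ) ^ n := by
    intro n
    have step1 : ((F n : ℝ) : ℂ)
        = ∏ j, ((Real.cos (Real.pi * ((n:ℝ) * α j - t j)) : ℝ) : ℂ) ^ (2 * M) := by
      rw [hFdef, Complex.ofReal_prod]
      exact Finset.prod_congr rfl fun j _ => Complex.ofReal_pow _ _
    rw [step1]
    rw [Finset.prod_congr rfl (fun j _ => cos_pow_expand M ((n:ℝ) * α j - t j)),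
      Finset.prod_univ_sum]
    refine Finset.sum_congr rfl ?_
    intro κ hκ
    rw [Finset.prod_mul_distrib, ← ee_sum]
    have harg : (∑ j, 2 * ((κ j : ℝ) - M) * ((n:ℝ) * α j - t j))
        = -(ph κ) + (n : ℝ) * freq κ := by
      rw [hphdef, hfreqdef, Finset.mul_sum]
      rw [show -(∑ j, 2 * ((κ j : ℝ) - M) * t j) = ∑ j, -(2 * ((κ j : ℝ) - M) * t j) by
        rw [← Finset.sum_neg_distrib]]
      rw [← Finset.sum_add_distrib]
      refine Finset.sum_congr rfl ?_
      intro j _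
      ring
    rw [harg, ee_add, ← ee_pow]
    have hWcast : ((W κ : ℝ) : ℂ) = ∏ j, ((((2 * M).choose (κ j) : ℝ) / 4 ^ M : ℝ) : ℂ) := by
      rw [hWdef, Complex.ofReal_prod]
    rw [hWcast]
    ring
  -- nonzero frequencies give nontrivial characters
  have hfreqne : ∀ κ ∈ Λ, κ ≠ κ₀ → ee (freq κ) ≠ 1 := by
    intro κ hκ hne h1
    obtain ⟨zz, hzz⟩ := ee_eq_one_iff.mp h1
    have h2 : (2:ℝ) * ∑ j, ((κ j : ℝ) - M) * α j = 2 * zz := by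
      rw [Finset.mul_sum]
      rw [← hzz, hfreqdef]
      refine Finset.sum_congr rfl ?_
      intro j _
      ring
    have h3 : ∑ j, (((κ j : ℤ) - M : ℤ) : ℝ) * α j = (zz : ℝ) := by
      push_cast
      linarith
    have h4 := hα (fun j => (κ j : ℤ) - M) zz h3
    apply hne
    funext j
    have h5 : (κ j : ℤ) - M = 0 := h4 j
    simp only [hκ₀def]
    omega
  -- the error constant
  set C : ℝ := ∑ κ ∈ Λ.erase κ₀, W κ * (2 / ‖ee (freq κ) - 1‖) with hCdef
  have hCnn : 0 ≤ C := by
    apply Finset.sum_nonneg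
    intro κ hκ
    have := hWnn κ
    positivity
  -- Claim D
  have hD : ∀ N : ℕ, |(∑ n ∈ Icc 1 N, F n) - N * c₀ ^ m| ≤ C := by
    intro N
    have hterm : ∀ κ ∈ Λ, (∑ n ∈ Icc 1 N, ((W κ : ℝ) : ℂ) * ee (-(ph κ)) * ee (freq κ) ^ n)
        = ((W κ : ℝ) : ℂ) * ee (-(ph κ)) * ∑ n ∈ Icc 1 N, ee (freq κ) ^ n := by
      intro κ _
      rw [Finset.mul_sum]
    have hsum0 : (∑ n ∈ Icc 1 N, ((F n : ℝ) : ℂ))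
        = (N : ℂ) * ((c₀ : ℝ) : ℂ) ^ m +
          ∑ κ ∈ Λ.erase κ₀, ((W κ : ℝ) : ℂ) * ee (-(ph κ)) * ∑ n ∈ Icc 1 N, ee (freq κ) ^ n := by
      rw [Finset.sum_congr rfl (fun n _ => hexp n), Finset.sum_comm]
      rw [Finset.sum_congr rfl hterm]
      rw [← Finset.add_sum_erase Λ _ hκ₀Λ, hWκ₀, hfreqκ₀, hphκ₀]
      congr 1
      rw [neg_zero, ee_zero]
      have h1 : ∑ n ∈ Icc 1 N, (1:ℂ) ^ n = (N:ℂ) := by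
        simp [Nat.card_Icc]
      rw [h1]
      rw [Complex.ofReal_pow]
      ring
    have hsum : ((((∑ n ∈ Icc 1 N, F n) - N * c₀ ^ m : ℝ)) : ℂ)
        = ∑ κ ∈ Λ.erase κ₀, ((W κ : ℝ) : ℂ) * ee (-(ph κ)) * ∑ n ∈ Icc 1 N, ee (freq κ) ^ n := by
      rw [Complex.ofReal_sub, Complex.ofReal_sum, Complex.ofReal_mul, Complex.ofReal_pow,
        Complex.ofReal_natCast, hsum0]
      ring
    have habs : |(∑ n ∈ Icc 1 N, F n) - N * c₀ ^ m|
        = ‖((((∑ n ∈ Icc 1 N, F n) - N * c₀ ^ m : ℝ)) : ℂ)‖ := by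
      rw [Complex.norm_real, Real.norm_eq_abs]
    rw [habs, hsum]
    calc ‖∑ κ ∈ Λ.erase κ₀, ((W κ : ℝ) : ℂ) * ee (-(ph κ)) * ∑ n ∈ Icc 1 N, ee (freq κ) ^ n‖
        ≤ ∑ κ ∈ Λ.erase κ₀, ‖((W κ : ℝ) : ℂ) * ee (-(ph κ)) * ∑ n ∈ Icc 1 N, ee (freq κ) ^ n‖ := by
          exact norm_sum_le _ _
      _ ≤ C := by
          rw [hCdef]
          apply Finset.sum_le_sum
          intro κ hκ
          rw [norm_mul, norm_mul, Complex.norm_real, Real.norm_eq_abs, ee_abs, abs_of_nonneg (hWnn κ), mul_one]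
          have hκΛ : κ ∈ Λ := Finset.mem_of_mem_erase hκ
          have hκne : κ ≠ κ₀ := Finset.ne_of_mem_erase hκ
          have hgb := geom_bound (ee (freq κ)) (ee_abs _) (hfreqne κ hκΛ hκne) N
          exact mul_le_mul_of_nonneg_left hgb (hWnn κ)
  -- Claim E : bad points
  have hE : ∀ n : ℕ, 0 < n → F n ≤ ρ ^ M := by
    intro n hn
    obtain ⟨j, hj⟩ := hcon n hn
    set θ : ℝ := (n : ℝ) * α j - t j with hθdef
    have hδ2 : |θ - round θ| ≤ 1 / 2 := abs_sub_round θ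
    have hδη : η ≤ |θ - round θ| := by
      have h0 := hj (round θ)
      have heq : |(n:ℝ) * α j - round θ - t j| = |θ - round θ| := by
        congr 1
        rw [hθdef]
        ring
      linarith [heq ▸ h0]
    have hcid : Real.cos (Real.pi * θ)
        = (-1 : ℝ) ^ (round θ) * Real.cos (Real.pi * (θ - round θ)) := by
      conv_lhs => rw [show Real.pi * θ = Real.pi * (θ - round θ) + (round θ : ℝ) * Real.pi by ring]
      rw [Real.cos_add_int_mul_pi]
    have hsq1 : ((-1:ℝ) ^ (round θ)) ^ 2 = 1 := by
      rw [← zpow_natCast ((-1:ℝ) ^ (round θ)) 2, ← zpow_mul, mul_comm, zpow_mul]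
      norm_num
    have hsqeq : Real.cos (Real.pi * θ) ^ 2 = Real.cos (Real.pi * (θ - round θ)) ^ 2 := by
      rw [hcid, mul_pow, hsq1, one_mul]
    have hccos : |Real.cos (Real.pi * (θ - round θ))| ≤ Real.cos (Real.pi * η) := by
      have h1 : Real.cos (Real.pi * (θ - round θ)) = Real.cos (Real.pi * |θ - round θ|) := by
        rw [show Real.pi * |θ - round θ| = |Real.pi * (θ - round θ)| by
          rw [abs_mul, abs_of_pos hπ]]
        rw [Real.cos_abs]
      have h0 : (0:ℝ) ≤ Real.pi * |θ - round θ| := mul_nonneg hπ.le (abs_nonneg _)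
      have h2 : Real.pi * |θ - round θ| ≤ Real.pi / 2 := by
        have := mul_le_mul_of_nonneg_left hδ2 hπ.le
        linarith
      have h3 : 0 ≤ Real.cos (Real.pi * |θ - round θ|) :=
        Real.cos_nonneg_of_mem_Icc ⟨by linarith, h2⟩
      have h5 : Real.pi * η ≤ Real.pi * |θ - round θ| := mul_le_mul_of_nonneg_left hδη hπ.le
      have h4 : Real.cos (Real.pi * |θ - round θ|) ≤ Real.cos (Real.pi * η) :=
        Real.cos_le_cos_of_nonneg_of_le_pi (le_of_lt hπη0) (by linarith) h5
      rw [h1, abs_of_nonneg h3]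
      exact h4
    have hfacbound : Real.cos (Real.pi * θ) ^ (2 * M) ≤ ρ ^ M := by
      rw [pow_mul, hρdef]
      apply pow_le_pow_left₀ (sq_nonneg _)
      calc Real.cos (Real.pi * θ) ^ 2 = |Real.cos (Real.pi * (θ - round θ))| ^ 2 := by
            rw [sq_abs]
            exact hsqeq
        _ ≤ Real.cos (Real.pi * η) ^ 2 := pow_le_pow_left₀ (abs_nonneg _) hccos 2
    -- product bound
    have hfacnn : ∀ j' : Fin m, 0 ≤ Real.cos (Real.pi * ((n:ℝ) * α j' - t j')) ^ (2 * M) := by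
      intro j'
      rw [pow_mul]
      positivity
    have hfacle1 : ∀ j' : Fin m, Real.cos (Real.pi * ((n:ℝ) * α j' - t j')) ^ (2 * M) ≤ 1 := by
      intro j'
      rw [pow_mul]
      refine pow_le_one₀ (sq_nonneg _) ?_
      nlinarith [Real.neg_one_le_cos (Real.pi * ((n:ℝ) * α j' - t j')),
        Real.cos_le_one (Real.pi * ((n:ℝ) * α j' - t j'))]
    rw [hFdef]
    calc (∏ j', Real.cos (Real.pi * ((n:ℝ) * α j' - t j')) ^ (2 * M))
        = Real.cos (Real.pi * θ) ^ (2 * M) *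
          ∏ j' ∈ Finset.univ.erase j, Real.cos (Real.pi * ((n:ℝ) * α j' - t j')) ^ (2 * M) := by
          exact (Finset.mul_prod_erase Finset.univ _ (Finset.mem_univ j)).symm
      _ ≤ Real.cos (Real.pi * θ) ^ (2 * M) * 1 := by
          apply mul_le_mul_of_nonneg_left _ (hfacnn j)
          exact Finset.prod_le_one (fun j' _ => hfacnn j') (fun j' _ => hfacle1 j')
      _ ≤ ρ ^ M := by rw [mul_one]; exact hfacbound
  -- final contradiction
  set gap : ℝ := c₀ ^ m - ρ ^ M with hgapdef
  have hgap : 0 < gap := by rw [hgapdef]; linarith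
  set N : ℕ := ⌈(C + 1) / gap⌉₊ with hNdef
  have hN : (C + 1) / gap ≤ (N : ℝ) := Nat.le_ceil _
  have hNgap : C + 1 ≤ (N : ℝ) * gap := by
    rw [div_le_iff₀ hgap] at hN
    linarith
  have hDN := hD N
  have hEN : (∑ n ∈ Icc 1 N, F n) ≤ N * ρ ^ M := by
    calc (∑ n ∈ Icc 1 N, F n) ≤ ∑ n ∈ Icc 1 N, ρ ^ M := by
          apply Finset.sum_le_sum
          intro n hn
          exact hE n (by have := (Finset.mem_Icc.mp hn).1; omega)
      _ = N * ρ ^ M := by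
          rw [Finset.sum_const, Nat.card_Icc]
          have hc : N + 1 - 1 = N := by omega
          rw [hc, nsmul_eq_mul]
  have h1 : (N : ℝ) * c₀ ^ m - C ≤ ∑ n ∈ Icc 1 N, F n := by
    have := abs_le.mp hDN
    linarith [this.1]
  have h2 : (N : ℝ) * gap ≤ C := by
    rw [hgapdef]
    nlinarith
  linarith

lemma unit_smul {E : Type*} [NormedAddCommGroup E] [NormedSpace ℝ E] {c : ℝ} (hc : 0 < c)
    (w : E) : ‖c • w‖⁻¹ • (c • w) = ‖w‖⁻¹ • w := by
  rcases eq_or_ne w 0 with rfl | hw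
  · simp
  · have hww : ‖w‖ ≠ 0 := norm_ne_zero_iff.mpr hw
    rw [norm_smul, Real.norm_eq_abs, abs_of_pos hc, smul_smul]
    congr 1
    field_simp

lemma norm_dir {E : Type*} [NormedAddCommGroup E] [NormedSpace ℝ E] (v w : E) (hw : w ≠ 0)
    (β : ℝ) (hvw : ‖v - w‖ ≤ β) (hβ : 2 * β ≤ ‖w‖) :
    ‖‖v‖⁻¹ • v - ‖w‖⁻¹ • w‖ ≤ 4 * β / ‖w‖ := by
  have hb : 0 < ‖w‖ := norm_pos_iff.mpr hw
  have hβ0 : 0 ≤ β := le_trans (norm_nonneg _) hvw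
  have hdiff : |‖v‖ - ‖w‖| ≤ β := le_trans (abs_norm_sub_norm_le v w) hvw
  have ha : ‖w‖ / 2 ≤ ‖v‖ := by
    have h := abs_le.mp hdiff
    linarith [h.1]
  have ha0 : 0 < ‖v‖ := by linarith
  have key : ‖v‖⁻¹ • v - ‖w‖⁻¹ • w = ‖v‖⁻¹ • (v - w) + (‖v‖⁻¹ - ‖w‖⁻¹) • w := by
    rw [smul_sub, sub_smul]
    abel
  rw [key]
  have h1 : ‖v‖⁻¹ * ‖v - w‖ ≤ β / ‖v‖ := by
    rw [inv_mul_eq_div]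
    exact (div_le_div_iff_of_pos_right ha0).mpr hvw
  have h2 : |‖v‖⁻¹ - ‖w‖⁻¹| * ‖w‖ ≤ β / ‖v‖ := by
    have hid : ‖v‖⁻¹ - ‖w‖⁻¹ = (‖w‖ - ‖v‖) / (‖v‖ * ‖w‖) := by field_simp
    rw [hid, abs_div, abs_of_pos (mul_pos ha0 hb)]
    rw [div_mul_eq_mul_div, div_le_div_iff₀ (mul_pos ha0 hb) ha0]
    have habs2 : |‖w‖ - ‖v‖| ≤ β := by rw [abs_sub_comm]; exact hdiff
    nlinarith [mul_le_mul_of_nonneg_right habs2 (le_of_lt (mul_pos ha0 hb))]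
  calc ‖‖v‖⁻¹ • (v - w) + (‖v‖⁻¹ - ‖w‖⁻¹) • w‖
      ≤ ‖‖v‖⁻¹ • (v - w)‖ + ‖(‖v‖⁻¹ - ‖w‖⁻¹) • w‖ := norm_add_le _ _
    _ = ‖v‖⁻¹ * ‖v - w‖ + |‖v‖⁻¹ - ‖w‖⁻¹| * ‖w‖ := by
        rw [norm_smul, norm_smul, Real.norm_eq_abs, Real.norm_eq_abs,
          abs_of_pos (inv_pos.mpr ha0)]
    _ ≤ β / ‖v‖ + β / ‖v‖ := add_le_add h1 h2
    _ ≤ 4 * β / ‖w‖ := by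
        rw [← add_div, div_le_div_iff₀ ha0 hb]
        nlinarith

/-- Lemma 6.8 (`lem: linearindependentdiufantu`): simultaneous Diophantine approximation with
divisibility, integrality and anisotropy constraints. Here the norm on `Fin m → ℝ` is the
maximum norm. -/
theorem stmt_8 (p₀ l s₀ k₀ : ℕ) (hp₀ : 0 < p₀) (hl : 0 < l) (hs₀ : 0 < s₀)
    (ε₁ : ℝ) (hε₁ : 0 < ε₁)
    (r : Fin (s₀ + k₀) → ℝ) (hrpos : ∀ i, 0 < r i)
    (hlin : ∀ (q₀ : ℚ) (q : Fin (s₀ + k₀) → ℚ),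
      (q₀ : ℝ) + ∑ i, (q i : ℝ) * r i = 0 → q₀ = 0 ∧ ∀ i, q i = 0)
    (e : Fin s₀ → ℝ) (he : ∀ i, 0 ≤ e i) (he0 : e ≠ 0) :
    ∃ (n₀ : ℕ) (r' : Fin (s₀ + k₀) → ℝ), 0 < n₀ ∧ p₀ ∣ n₀ ∧
      (∀ j, ∃ z : ℤ, (n₀ : ℝ) * r' j = (l : ℝ) * (z : ℝ)) ∧
      ‖r - r'‖ < ε₁ / n₀ ∧
      (fun i : Fin s₀ => r (Fin.castAdd k₀ i)) ≠ (fun i : Fin s₀ => r' (Fin.castAdd k₀ i)) ∧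
      ‖(‖(fun i : Fin s₀ => r (Fin.castAdd k₀ i)) -
            (fun i : Fin s₀ => r' (Fin.castAdd k₀ i))‖)⁻¹ •
          ((fun i : Fin s₀ => r (Fin.castAdd k₀ i)) -
            (fun i : Fin s₀ => r' (Fin.castAdd k₀ i))) -
        ‖e‖⁻¹ • e‖ < ε₁ := by
  have hlpos : (0:ℝ) < l := by exact_mod_cast hl
  have hp₀pos : (0:ℝ) < p₀ := by exact_mod_cast hp₀
  have hene : (0:ℝ) < ‖e‖ := norm_pos_iff.mpr he0
  set δ : ℝ := ε₁ / (4 * l) with hδdef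
  have hδ : 0 < δ := by positivity
  set η : ℝ := min (1/2) (min (δ/2) (δ * ε₁ / 8)) with hηdef
  have hη : 0 < η := lt_min (by norm_num) (lt_min (by positivity) (by positivity))
  have hη12 : η ≤ 1/2 := min_le_left _ _
  have hηδ2 : η ≤ δ/2 := le_trans (min_le_right _ _) (min_le_left _ _)
  have hηε : η ≤ δ * ε₁ / 8 := le_trans (min_le_right _ _) (min_le_right _ _)
  set α : Fin (s₀ + k₀) → ℝ := fun j => p₀ * r j / l with hαdef
  set t : Fin (s₀ + k₀) → ℝ :=
    fun j => if h : (j : ℕ) < s₀ then δ * e ⟨j, h⟩ / ‖e‖ else 0 with htdef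
  have ht : ∀ j, 0 ≤ t j ∧ t j ≤ δ := by
    intro j
    simp only [htdef]
    by_cases h : (j : ℕ) < s₀
    · rw [dif_pos h]
      constructor
      · exact div_nonneg (mul_nonneg hδ.le (he _)) hene.le
      · rw [div_le_iff₀ hene]
        have h1 : e ⟨(j : ℕ), h⟩ ≤ ‖e‖ := by
          have := norm_le_pi_norm e ⟨(j : ℕ), h⟩
          rw [Real.norm_eq_abs] at this
          exact le_trans (le_abs_self _) this
        nlinarith
    · rw [dif_neg h]
      exact ⟨le_refl _, hδ.le⟩
  have hα : ∀ (k : Fin (s₀ + k₀) → ℤ) (z : ℤ),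
      ∑ j, (k j : ℝ) * α j = (z : ℝ) → ∀ j, k j = 0 := by
    intro k z hsum j
    have hmain := hlin (-(z : ℚ)) (fun i => (k i : ℚ) * p₀ / l) ?_
    · have h2 := hmain.2 j
      have hl0 : (l : ℚ) ≠ 0 := by exact_mod_cast hl.ne'
      have hp0 : (p₀ : ℚ) ≠ 0 := by exact_mod_cast hp₀.ne'
      field_simp at h2
      rw [mul_zero] at h2
      rcases mul_eq_zero.mp h2 with h3 | h3
      · exact_mod_cast h3
      · exact absurd h3 hp0
    · push_cast
      have hcong : ∑ i, ((k i : ℝ) * p₀ / l) * r i = ∑ i, (k i : ℝ) * α i := by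
        refine Finset.sum_congr rfl ?_
        intro i _
        rw [hαdef]
        field_simp
      rw [hcong, hsum]
      ring
  obtain ⟨n, hn, hzz⟩ := kronecker α t hα hη hη12
  choose zf hzf using hzz
  have hn₀pos : 0 < n * p₀ := Nat.mul_pos hn hp₀
  have hn₀R : (0:ℝ) < ((n * p₀ : ℕ) : ℝ) := by exact_mod_cast hn₀pos
  set r' : Fin (s₀ + k₀) → ℝ := fun j => l * zf j / ((n * p₀ : ℕ) : ℝ) with hr'def
  set err : Fin (s₀ + k₀) → ℝ := fun j => (n : ℝ) * α j - zf j - t j with herrdef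
  have herr : ∀ j, |err j| < η := fun j => hzf j
  have hdiffj : ∀ j, r j - r' j = ((l : ℝ) / ((n * p₀ : ℕ) : ℝ)) * (err j + t j) := by
    intro j
    rw [hr'def, herrdef, hαdef]
    have hnp : ((n * p₀ : ℕ) : ℝ) = (n : ℝ) * (p₀ : ℝ) := by push_cast; ring
    rw [hnp]
    field_simp
    ring
  set v : Fin s₀ → ℝ := (fun i : Fin s₀ => r (Fin.castAdd k₀ i)) -
      (fun i : Fin s₀ => r' (Fin.castAdd k₀ i)) with hvdef
  set wv : Fin s₀ → ℝ := ((l : ℝ) / ((n * p₀ : ℕ) : ℝ) * δ / ‖e‖) • e with hwdef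
  have htc : ∀ i : Fin s₀, t (Fin.castAdd k₀ i) = δ * e i / ‖e‖ := by
    intro i
    simp only [htdef]
    have hi : ((Fin.castAdd k₀ i : Fin (s₀ + k₀)) : ℕ) < s₀ := by simpa using i.isLt
    rw [dif_pos hi]
    have hfin : (⟨((Fin.castAdd k₀ i : Fin (s₀ + k₀)) : ℕ), hi⟩ : Fin s₀) = i := by
      apply Fin.ext
      simp
    rw [hfin]
  have hvi : ∀ i : Fin s₀, v i =
      ((l : ℝ) / ((n * p₀ : ℕ) : ℝ)) * (err (Fin.castAdd k₀ i) + t (Fin.castAdd k₀ i)) := by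
    intro i
    rw [hvdef, Pi.sub_apply]
    exact hdiffj _
  have hwi : ∀ i : Fin s₀, wv i = ((l : ℝ) / ((n * p₀ : ℕ) : ℝ)) * t (Fin.castAdd k₀ i) := by
    intro i
    rw [hwdef, Pi.smul_apply, smul_eq_mul, htc i]
    field_simp
  set β : ℝ := (l : ℝ) / ((n * p₀ : ℕ) : ℝ) * η with hβdef
  have hlnp : 0 < (l : ℝ) / ((n * p₀ : ℕ) : ℝ) := div_pos hlpos hn₀R
  have hβpos : 0 < β := mul_pos hlnp hη
  have hvw : ‖v - wv‖ ≤ β := by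
    rw [pi_norm_le_iff_of_nonneg hβpos.le]
    intro i
    rw [Pi.sub_apply, hvi i, hwi i, Real.norm_eq_abs]
    have hid : ((l : ℝ) / ((n * p₀ : ℕ) : ℝ)) * (err (Fin.castAdd k₀ i) + t (Fin.castAdd k₀ i)) -
        ((l : ℝ) / ((n * p₀ : ℕ) : ℝ)) * t (Fin.castAdd k₀ i)
        = ((l : ℝ) / ((n * p₀ : ℕ) : ℝ)) * err (Fin.castAdd k₀ i) := by ring
    rw [hid, abs_mul, abs_of_pos hlnp, hβdef]
    exact mul_le_mul_of_nonneg_left (herr _).le hlnp.le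
  have hwnorm : ‖wv‖ = (l : ℝ) / ((n * p₀ : ℕ) : ℝ) * δ := by
    rw [hwdef, norm_smul, Real.norm_eq_abs, abs_of_pos (by positivity)]
    field_simp
  have hw0 : wv ≠ 0 := by
    rw [hwdef]
    exact smul_ne_zero (by positivity) he0
  have h2β : 2 * β ≤ ‖wv‖ := by
    rw [hwnorm, hβdef]
    nlinarith [mul_le_mul_of_nonneg_left (show 2 * η ≤ δ by linarith) hlnp.le]
  refine ⟨n * p₀, r', hn₀pos, dvd_mul_left p₀ n, ?_, ?_, ?_, ?_⟩
  · intro j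
    refine ⟨zf j, ?_⟩
    rw [hr'def]
    field_simp
  · rw [pi_norm_lt_iff (by positivity)]
    intro j
    rw [Pi.sub_apply, Real.norm_eq_abs, hdiffj j]
    have hlδ : (l : ℝ) * δ = ε₁ / 4 := by
      rw [hδdef]
      field_simp
    have habs : |err j + t j| ≤ η + δ := by
      have h1 := (herr j).le
      have h2 := ht j
      have := abs_add_le (err j) (t j)
      have h3 : |t j| ≤ δ := by rw [abs_of_nonneg h2.1]; exact h2.2
      linarith
    have hstep : (l : ℝ) * (η + δ) < ε₁ := by nlinarith
    calc |((l : ℝ) / ((n * p₀ : ℕ) : ℝ)) * (err j + t j)|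
        = ((l : ℝ) / ((n * p₀ : ℕ) : ℝ)) * |err j + t j| := by
          rw [abs_mul, abs_of_pos (by positivity)]
      _ ≤ ((l : ℝ) / ((n * p₀ : ℕ) : ℝ)) * (η + δ) := by
          exact mul_le_mul_of_nonneg_left habs (by positivity)
      _ = (l : ℝ) * (η + δ) / ((n * p₀ : ℕ) : ℝ) := by ring
      _ < ε₁ / ((n * p₀ : ℕ) : ℝ) := by
          exact (div_lt_div_iff_of_pos_right hn₀R).mpr hstep
  · -- distinctness
    intro heq
    have hveq : v = 0 := by
      rw [hvdef, heq]
      simp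
    have h1 : ‖v - wv‖ = ‖wv‖ := by rw [hveq, zero_sub, norm_neg]
    rw [h1] at hvw
    linarith
  · -- direction
    have hdirle := norm_dir v wv hw0 β hvw h2β
    have hsmul : ‖wv‖⁻¹ • wv = ‖e‖⁻¹ • e :=
      unit_smul (show (0:ℝ) < (l : ℝ) / ((n * p₀ : ℕ) : ℝ) * δ / ‖e‖ by positivity) e
    rw [← hsmul]
    refine lt_of_le_of_lt hdirle ?_
    rw [hwnorm, hβdef, div_lt_iff₀ (by positivity)]
    have h4η : 4 * η < ε₁ * δ := by nlinarith
    nlinarith [mul_lt_mul_of_pos_left h4η hlnp]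
end

section
/- Let n₁ and k be positive integers and let a₁, …, a_k ∈ (0,1] be real numbers with a₁ + … + a_k = 1. Suppose ε₀ > 0 satisfies: ε₀ < aᵢ/(k·n₁²) for every 1 ≤ i ≤ k, and ε₀ < (1/(k·n₁))·(1 − (1/n₁)·(a₁m₁ + … + a_k m_k)) for all natural numbers m₁, …, m_k for which the right-hand side is positive. Let n₀ be any positive integer, set n := n₀·n₁, and let a₁', …, a_k' be positive real numbers with a₁' + … + a_k' = 1 and |aᵢ − aᵢ'| < ε₀/n₀ for every i. Let b₁, …, b_k ∈ [0,1] be real numbers such that n₁·bᵢ ∈ ℤ for every i and n·(a₁'b₁ + … + a_k'b_k) ∈ ℤ. Then: (a) if a₁b₁ + … + a_k b_k = 1, then a₁'b₁ + … + a_k'b_k = 1; and (b) if a₁b₁ + … + a_k b_k < 1, then ⌊(n+1)·(a₁b₁ + … + a_k b_k)⌋ = n·(a₁'b₁ + … + a_k'b_k). -/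
set_option maxHeartbeats 1000000 in
/-- The arithmetic core of the proof of Theorem 6.1 (`thm: dcc existence n complement with part
two`): rounding of convex combinations of `n₁`-complement coefficients. -/
theorem stmt_10 (n₁ k : ℕ) (hn₁ : 0 < n₁) (hk : 0 < k)
    (a : Fin k → ℝ) (ha : ∀ i, a i ∈ Set.Ioc (0 : ℝ) 1) (hsum : ∑ i, a i = 1)
    (ε₀ : ℝ) (hε₀pos : 0 < ε₀)
    (hε₀1 : ∀ i, ε₀ < a i / ((k : ℝ) * (n₁ : ℝ) ^ 2))
    (hε₀2 : ∀ m : Fin k → ℕ,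
      0 < (1 / ((k : ℝ) * n₁)) * (1 - (1 / (n₁ : ℝ)) * ∑ i, a i * (m i : ℝ)) →
      ε₀ < (1 / ((k : ℝ) * n₁)) * (1 - (1 / (n₁ : ℝ)) * ∑ i, a i * (m i : ℝ)))
    (n₀ : ℕ) (hn₀ : 0 < n₀)
    (a' : Fin k → ℝ) (ha' : ∀ i, 0 < a' i) (hsum' : ∑ i, a' i = 1)
    (hclose : ∀ i, |a i - a' i| < ε₀ / n₀)
    (b : Fin k → ℝ) (hb : ∀ i, b i ∈ Set.Icc (0 : ℝ) 1)
    (hbint : ∀ i, ∃ z : ℤ, (n₁ : ℝ) * b i = (z : ℝ))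
    (hint : ∃ z : ℤ, ((n₀ * n₁ : ℕ) : ℝ) * ∑ i, a' i * b i = (z : ℝ)) :
    (∑ i, a i * b i = 1 → ∑ i, a' i * b i = 1) ∧
    (∑ i, a i * b i < 1 →
      (⌊(((n₀ * n₁ : ℕ) : ℝ) + 1) * ∑ i, a i * b i⌋ : ℝ) =
        ((n₀ * n₁ : ℕ) : ℝ) * ∑ i, a' i * b i) := by
  set S := ∑ i, a i * b i with hS
  set S' := ∑ i, a' i * b i with hS'
  obtain ⟨z, hz⟩ := hint
  have hn₁R : (0:ℝ) < n₁ := by exact_mod_cast hn₁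
  have hn₀R : (0:ℝ) < n₀ := by exact_mod_cast hn₀
  have hkR : (0:ℝ) < k := by exact_mod_cast hk
  have hNR : ((n₀*n₁:ℕ):ℝ) = (n₀:ℝ)*(n₁:ℝ) := by push_cast; ring
  have habs : |S - S'| < (k:ℝ) * (ε₀ / n₀) := by
    have hdiff : S - S' = ∑ i, (a i - a' i) * b i := by
      rw [hS, hS', ← Finset.sum_sub_distrib]
      exact Finset.sum_congr rfl fun i _ => by ring
    rw [hdiff]
    calc |∑ i, (a i - a' i) * b i| ≤ ∑ i, |(a i - a' i) * b i| :=
          Finset.abs_sum_le_sum_abs _ _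
      _ ≤ ∑ i, |a i - a' i| := Finset.sum_le_sum fun i _ => by
          rw [abs_mul, abs_of_nonneg (hb i).1]
          exact mul_le_of_le_one_right (abs_nonneg _) (hb i).2
      _ < ∑ _i : Fin k, (ε₀ / n₀) := by
          apply Finset.sum_lt_sum_of_nonempty ⟨⟨0, hk⟩, Finset.mem_univ _⟩
          intro i _; exact hclose i
      _ = (k:ℝ) * (ε₀ / n₀) := by
          rw [Finset.sum_const, Finset.card_univ, Fintype.card_fin, nsmul_eq_mul]
  constructor
  · intro h1
    have hb1 : ∀ i, b i = 1 := by
      have hzero : ∑ i, a i * (1 - b i) = 0 := by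
        have : ∑ i, a i * (1 - b i) = (∑ i, a i) - S := by
          rw [hS, ← Finset.sum_sub_distrib]
          exact Finset.sum_congr rfl fun i _ => by ring
        rw [this, hsum, h1]; ring
      intro i
      have hterm := (Finset.sum_eq_zero_iff_of_nonneg
        (fun j _ => mul_nonneg (le_of_lt (ha j).1) (by linarith [(hb j).2]))).mp
        hzero i (Finset.mem_univ i)
      have hai := (ha i).1
      nlinarith
    rw [hS']
    simp only [hb1, mul_one]
    exact hsum'
  · intro hlt
    have hm : ∀ i, ∃ m : ℕ, (n₁:ℝ) * b i = m := by
      intro i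
      obtain ⟨zi, hzi⟩ := hbint i
      have hz0 : 0 ≤ zi := by
        have : (0:ℝ) ≤ (zi:ℝ) := by rw [← hzi]; exact mul_nonneg hn₁R.le (hb i).1
        exact_mod_cast this
      exact ⟨zi.toNat, by rw [hzi]; exact_mod_cast (Int.toNat_of_nonneg hz0).symm⟩
    choose m hmdef using hm
    have hbm : ∀ i, b i = (m i : ℝ) / n₁ := fun i => by
      rw [eq_div_iff hn₁R.ne']; linarith [hmdef i]
    have hSm : (1/(n₁:ℝ)) * ∑ i, a i * (m i : ℝ) = S := by
      rw [hS, Finset.mul_sum]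
      exact Finset.sum_congr rfl fun i _ => by rw [hbm i]; field_simp
    have hkey : ε₀ < (1/((k:ℝ)*n₁)) * (1 - S) := by
      have h := hε₀2 m
      rw [hSm] at h
      exact h (mul_pos (by positivity) (by linarith))
    have hkn : (k:ℝ)*n₁*ε₀ < 1 - S := by
      rw [one_div, inv_mul_eq_div, lt_div_iff₀ (by positivity)] at hkey
      linarith
    have hdist : |((n₀*n₁:ℕ):ℝ) * S - (z:ℝ)| < (k:ℝ) * n₁ * ε₀ := by
      rw [← hz, ← mul_sub, abs_mul, abs_of_nonneg (by positivity : (0:ℝ) ≤ ((n₀*n₁:ℕ):ℝ))]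
      calc ((n₀*n₁:ℕ):ℝ) * |S - S'| < ((n₀*n₁:ℕ):ℝ) * ((k:ℝ) * (ε₀/n₀)) := by
            apply mul_lt_mul_of_pos_left habs
            rw [hNR]; positivity
        _ = (k:ℝ) * n₁ * ε₀ := by rw [hNR]; field_simp
    have hSnn : 0 ≤ S := Finset.sum_nonneg fun j _ => mul_nonneg (ha j).1.le (hb j).1
    rcases eq_or_lt_of_le hSnn with h0 | hpos
    · -- S = 0 case
      have hb0 : ∀ i, b i = 0 := by
        intro i
        have hterm := (Finset.sum_eq_zero_iff_of_nonneg
          (fun j _ => mul_nonneg (ha j).1.le (hb j).1)).mp h0.symm i (Finset.mem_univ i)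
        have hai := (ha i).1
        nlinarith
      have hS'0 : S' = 0 := by
        rw [hS']
        exact Finset.sum_eq_zero fun i _ => by rw [hb0 i, mul_zero]
      rw [hS'0, ← h0]
      simp
    · -- S > 0 case
      obtain ⟨i, hi⟩ : ∃ i, 0 < b i := by
        by_contra hcon
        push_neg at hcon
        have hball : ∀ i, b i = 0 := fun i => le_antisymm (hcon i) (hb i).1
        have : S = 0 := Finset.sum_eq_zero fun i _ => by rw [hball i, mul_zero]
        linarith
      have hmi : 1 ≤ m i := by
        rcases Nat.eq_zero_or_pos (m i) with h | h
        · rw [hbm i, h] at hi; simp at hi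
        · exact h
      have hbi : 1/(n₁:ℝ) ≤ b i := by
        rw [hbm i]
        gcongr
        exact_mod_cast hmi
      have hSlow : (k:ℝ)*n₁*ε₀ < S := by
        have h1 := hε₀1 i
        rw [lt_div_iff₀ (by positivity)] at h1
        have h2 : a i * b i ≤ S :=
          Finset.single_le_sum (fun j _ => mul_nonneg (ha j).1.le (hb j).1)
            (Finset.mem_univ i)
        have h3 : a i * (1/(n₁:ℝ)) ≤ a i * b i :=
          mul_le_mul_of_nonneg_left hbi (ha i).1.le
        have hn₁inv : (0:ℝ) < 1/(n₁:ℝ) := by positivity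
        have h4 := mul_lt_mul_of_pos_right h1 hn₁inv
        have h5 : (k:ℝ)*n₁*ε₀ = ε₀ * ((k:ℝ) * (n₁:ℝ)^2) * (1/n₁) := by
          field_simp
        linarith
      rw [hz]
      obtain ⟨hlo, hhi⟩ := abs_lt.mp hdist
      have hfloor : ⌊(((n₀*n₁:ℕ):ℝ) + 1) * S⌋ = z := by
        have hb1 : (z:ℝ) ≤ (((n₀*n₁:ℕ):ℝ) + 1) * S := by nlinarith
        have hb2 : (((n₀*n₁:ℕ):ℝ) + 1) * S < (z:ℝ) + 1 := by nlinarith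
        exact Int.floor_eq_iff.mpr ⟨hb1, by push_cast at hb2 ⊢; linarith⟩
      rw [hfloor]
end

section
/- Let s be a positive integer and let v = (v₁, …, v_s) ∈ [0,1]ˢ be a point with v ∉ ℚˢ such that Span_{ℚ≥0}({v₁, …, v_s} \ ℚ) ∩ (ℚ \ {0}) = ∅. Let V ⊆ ℝˢ be the rational envelope of v. Then there exist a vector e in the direction of V with ‖e‖∞ = 1 and a real number ε > 0 such that every point v⁺ = (v₁⁺, …, v_s⁺) ∈ V with v⁺ ≠ v and ‖ (v − v⁺)/‖v − v⁺‖∞ − e ‖∞ < ε satisfies vᵢ⁺ ≥ vᵢ for every 1 ≤ i ≤ s. -/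
open Submodule Finset
open scoped RealInnerProductSpace


def RatPt {ι : Type*} (x : ι → ℝ) : Prop := ∀ i, ∃ q : ℚ, x i = (q : ℝ)

lemma RatPt.zero {ι : Type*} : RatPt (0 : ι → ℝ) := fun _ => ⟨0, by simp⟩

lemma RatPt.add {ι : Type*} {x y : ι → ℝ} (hx : RatPt x) (hy : RatPt y) : RatPt (x + y) := by
  intro i; obtain ⟨a, ha⟩ := hx i; obtain ⟨b, hb⟩ := hy i
  exact ⟨a + b, by simp [ha, hb]⟩

lemma RatPt.sub {ι : Type*} {x y : ι → ℝ} (hx : RatPt x) (hy : RatPt y) : RatPt (x - y) := by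
  intro i; obtain ⟨a, ha⟩ := hx i; obtain ⟨b, hb⟩ := hy i
  exact ⟨a - b, by simp [ha, hb]⟩

lemma RatPt.smul {ι : Type*} {c : ℝ} (hc : ∃ q : ℚ, c = (q : ℝ)) {x : ι → ℝ} (hx : RatPt x) :
    RatPt (c • x) := by
  intro i; obtain ⟨a, ha⟩ := hc; obtain ⟨b, hb⟩ := hx i
  exact ⟨a * b, by simp [ha, hb, Pi.smul_apply]⟩

lemma RatPt.single {ι : Type*} [DecidableEq ι] (j : ι) (q : ℚ) :
    RatPt (Pi.single j (q : ℝ)) := by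
  intro i
  by_cases h : i = j
  · subst h; exact ⟨q, by simp⟩
  · exact ⟨0, by simp [Pi.single_apply, h]⟩

lemma RatPt.dot {ι : Type*} [Fintype ι] {x y : ι → ℝ} (hx : RatPt x) (hy : RatPt y) :
    ∃ q : ℚ, ∑ i, x i * y i = (q : ℝ) := by
  choose a ha using hx; choose b hb using hy
  refine ⟨∑ i, a i * b i, ?_⟩
  push_cast
  exact Finset.sum_congr rfl fun i _ => by rw [ha, hb]

lemma ratpt_sum {ι κ : Type*} (t : Finset κ) (f : κ → ι → ℝ) (h : ∀ j ∈ t, RatPt (f j)) :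
    RatPt (∑ j ∈ t, f j) :=
  Finset.sum_induction f RatPt (fun _ _ => RatPt.add) RatPt.zero h

lemma dense_rat_solutions {ι : Type*} [Fintype ι] :
    ∀ (Z : List (ι → ℝ)), (∀ u ∈ Z, RatPt u) →
    ∀ x : ι → ℝ, (∀ u ∈ Z, ∑ i, u i * x i = 0) → ∀ ε : ℝ, 0 < ε →
    ∃ r : ι → ℝ, RatPt r ∧ (∀ u ∈ Z, ∑ i, u i * r i = 0) ∧ ‖x - r‖ < ε := by
  intro Z
  induction Z with
  | nil =>
    intro _ x _ ε hε
    choose q hq using fun i => exists_rat_near (x i) hε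
    refine ⟨fun i => (q i : ℝ), fun i => ⟨q i, rfl⟩, by simp, ?_⟩
    rw [pi_norm_lt_iff hε]
    intro i
    simpa [Real.norm_eq_abs] using hq i
  | cons u Z ih =>
    intro hrat x hx ε hε
    have hZrat : ∀ u' ∈ Z, RatPt u' := fun u' h => hrat u' (List.mem_cons_of_mem _ h)
    have hurat : RatPt u := hrat u (List.mem_cons_self)
    have hxZ : ∀ u' ∈ Z, ∑ i, u' i * x i = 0 := fun u' h => hx u' (List.mem_cons_of_mem _ h)
    have hxu : ∑ i, u i * x i = 0 := hx u (List.mem_cons_self)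
    by_cases hy : ∃ y : ι → ℝ, RatPt y ∧ (∀ u' ∈ Z, ∑ i, u' i * y i = 0) ∧ ∑ i, u i * y i ≠ 0
    · obtain ⟨y, hyrat, hyZ, hyu⟩ := hy
      set c0 := ∑ i, u i * y i with hc0def
      have hc0 : 0 < |c0| := abs_pos.2 hyu
      set C : ℝ := 1 + (∑ i, |u i|) * ‖y‖ / |c0| with hC
      have hsums : 0 ≤ (∑ i, |u i|) := Finset.sum_nonneg fun i _ => abs_nonneg _
      have hCpos : 0 < C := by positivity
      obtain ⟨r', hr'rat, hr'Z, hr'x⟩ := ih hZrat x hxZ (ε / C) (by positivity)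
      set t := ∑ i, u i * r' i with htdef
      have expand : ∀ a : ι → ℝ,
          ∑ i, a i * (r' - (t / c0) • y) i = (∑ i, a i * r' i) - (t / c0) * ∑ i, a i * y i := by
        intro a
        rw [Finset.mul_sum, ← Finset.sum_sub_distrib]
        exact Finset.sum_congr rfl fun i _ => by
          simp [Pi.smul_apply, smul_eq_mul]; ring
      refine ⟨r' - (t / c0) • y, ?_, ?_, ?_⟩
      · obtain ⟨qt, hqt⟩ := hurat.dot hr'rat
        obtain ⟨qc, hqc⟩ := hurat.dot hyrat
        have : t / c0 = ((qt / qc : ℚ) : ℝ) := by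
          rw [← htdef] at hqt; rw [← hc0def] at hqc
          rw [hqt, hqc]; push_cast; ring
        exact hr'rat.sub (RatPt.smul ⟨_, this⟩ hyrat)
      · intro u' hu'
        rcases List.mem_cons.1 hu' with h | h
        · subst h
          rw [expand, ← htdef, ← hc0def, div_mul_cancel₀ _ hyu, sub_self]
        · rw [expand, hr'Z u' h, hyZ u' h, mul_zero, sub_zero]
      · have hxr : x - (r' - (t / c0) • y) = (x - r') + (t / c0) • y := by ring_nf
        have htbound : |t| ≤ (∑ i, |u i|) * ‖x - r'‖ := by
          have ht2 : t = ∑ i, u i * (r' i - x i) := by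
            rw [htdef]
            rw [← sub_zero (∑ i, u i * r' i), ← hxu, ← Finset.sum_sub_distrib]
            exact Finset.sum_congr rfl fun i _ => by ring
          rw [ht2]
          calc |∑ i, u i * (r' i - x i)| ≤ ∑ i, |u i * (r' i - x i)| := Finset.abs_sum_le_sum_abs _ _
            _ ≤ ∑ i, |u i| * ‖x - r'‖ := by
                refine Finset.sum_le_sum fun i _ => ?_
                rw [abs_mul]
                refine mul_le_mul_of_nonneg_left ?_ (abs_nonneg _)
                have := norm_le_pi_norm (x - r') i
                simpa [Real.norm_eq_abs, abs_sub_comm] using this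
            _ = (∑ i, |u i|) * ‖x - r'‖ := by rw [Finset.sum_mul]
        have : ‖x - (r' - (t / c0) • y)‖ ≤ ‖x - r'‖ * C := by
          rw [hxr]
          calc ‖(x - r') + (t / c0) • y‖ ≤ ‖x - r'‖ + ‖(t / c0) • y‖ := norm_add_le _ _
            _ = ‖x - r'‖ + |t| / |c0| * ‖y‖ := by
                rw [norm_smul, Real.norm_eq_abs, abs_div]
            _ ≤ ‖x - r'‖ + ((∑ i, |u i|) * ‖x - r'‖) / |c0| * ‖y‖ := by
                gcongr
            _ = ‖x - r'‖ * C := by rw [hC]; ring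
        calc ‖x - (r' - (t / c0) • y)‖ ≤ ‖x - r'‖ * C := this
          _ < (ε / C) * C := by exact mul_lt_mul_of_pos_right hr'x hCpos
          _ = ε := div_mul_cancel₀ _ (ne_of_gt hCpos)
    · push_neg at hy
      obtain ⟨r', hr'rat, hr'Z, hr'x⟩ := ih hZrat x hxZ ε hε
      refine ⟨r', hr'rat, ?_, hr'x⟩
      intro u' hu'
      rcases List.mem_cons.1 hu' with h | h
      · subst h; exact hy r' hr'rat hr'Z
      · exact hr'Z u' h

lemma mem_span_of_dense {ι : Type*} [Fintype ι] {Sset : Set (ι → ℝ)} {x : ι → ℝ}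
    (h : ∀ ε : ℝ, 0 < ε → ∃ r ∈ Sset, ‖x - r‖ < ε) : x ∈ Submodule.span ℝ Sset := by
  have hx : x ∈ closure Sset := Metric.mem_closure_iff.2 fun ε hε => by
    obtain ⟨r, hr, hn⟩ := h ε hε
    exact ⟨r, hr, by rwa [dist_eq_norm]⟩
  have hmono : closure Sset ⊆ closure (Submodule.span ℝ Sset : Set (ι → ℝ)) :=
    closure_mono Submodule.subset_span
  have hcl : IsClosed (Submodule.span ℝ Sset : Set (ι → ℝ)) :=
    Submodule.closed_of_finiteDimensional _
  have := hmono hx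
  rwa [hcl.closure_eq] at this

lemma exists_finset_span {M : Type*} [AddCommGroup M] [Module ℝ M] [FiniteDimensional ℝ M]
    (S : Set M) [DecidableEq M] :
    ∃ T : Finset M, ↑T ⊆ S ∧ Submodule.span ℝ (↑T : Set M) = Submodule.span ℝ S := by
  have hfg : (Submodule.span ℝ S).FG := IsNoetherian.noetherian _
  obtain ⟨G, hG⟩ := hfg
  have hmem : ∀ g : {x // x ∈ G}, ∃ t : Finset M, ↑t ⊆ S ∧ (g : M) ∈ Submodule.span ℝ (↑t : Set M) := by
    intro g
    have : (g : M) ∈ Submodule.span ℝ S := by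
      rw [← hG]; exact Submodule.subset_span g.2
    exact Submodule.mem_span_finite_of_mem_span this
  choose t ht1 ht2 using hmem
  refine ⟨G.attach.biUnion t, ?_, ?_⟩
  · intro x hx
    simp only [Finset.coe_biUnion, Set.mem_iUnion, Finset.mem_coe] at hx
    obtain ⟨g, _, hg⟩ := hx
    exact ht1 g hg
  · apply le_antisymm
    · apply Submodule.span_mono
      intro x hx
      simp only [Finset.coe_biUnion, Set.mem_iUnion, Finset.mem_coe] at hx
      obtain ⟨g, _, hg⟩ := hx
      exact ht1 g hg
    · rw [← hG]
      rw [Submodule.span_le]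
      intro g hg
      have := ht2 ⟨g, hg⟩
      exact Submodule.span_mono (by
        intro y hy
        simp only [Finset.coe_biUnion, Set.mem_iUnion, Finset.mem_coe]
        exact ⟨⟨g, hg⟩, Finset.mem_attach _ _, hy⟩) this

lemma gordan {n : ℕ} {ι : Type*} [Fintype ι] (w : ι → (Fin n → ℝ)) (F : Finset (Fin n))
    (hF : F.Nonempty) :
    (∃ d : Fin n → ℝ, d ∈ Submodule.span ℝ (Set.range w) ∧ ∀ i ∈ F, d i < 0) ∨
    (∃ a : Fin n → ℝ, (∀ i, 0 ≤ a i) ∧ (∀ i ∉ F, a i = 0) ∧ (∑ i, a i = 1) ∧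
      ∀ j, ∑ i, a i * w j i = 0) := by
  classical
  let E := EuclideanSpace ℝ (Fin n)
  let eqv : E ≃ₗ[ℝ] (Fin n → ℝ) := WithLp.linearEquiv 2 ℝ (Fin n → ℝ)
  let w' : ι → E := fun j => eqv.symm (w j)
  let D' : Submodule ℝ E := Submodule.span ℝ (Set.range w')
  let Δ : Set E := {l | (∀ i, 0 ≤ eqv l i) ∧ (∀ i ∉ F, eqv l i = 0) ∧ ∑ i, eqv l i = 1}
  have heqvc : Continuous (fun l : E => eqv l) :=
    eqv.toLinearMap.continuous_of_finiteDimensional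
  have happ : ∀ (l : E) (i : Fin n), eqv l i = l i := fun l i => rfl
  have happ' : ∀ (x : Fin n → ℝ) (i : Fin n), (eqv.symm x : E) i = x i := fun l i => rfl
  have hΔconv : Convex ℝ Δ := by
    intro x hx y hy a b ha hb hab
    have key : ∀ i, eqv (a • x + b • y) i = a * eqv x i + b * eqv y i := by
      intro i; simp [map_add, map_smul]
    refine ⟨fun i => ?_, fun i hi => ?_, ?_⟩
    · rw [key]
      have h1 := hx.1 i; have h2 := hy.1 i
      positivity
    · rw [key, hx.2.1 i hi, hy.2.1 i hi]; ring
    · simp only [key]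
      rw [Finset.sum_add_distrib, ← Finset.mul_sum, ← Finset.mul_sum, hx.2.2, hy.2.2]
      simpa using hab
  have hΔclosed : IsClosed Δ := by
    have h1 : IsClosed {l : E | ∀ i, 0 ≤ eqv l i} := by
      have : {l : E | ∀ i, 0 ≤ eqv l i} = ⋂ i, {l : E | 0 ≤ eqv l i} := by ext; simp
      rw [this]
      exact isClosed_iInter fun i =>
        isClosed_le continuous_const ((continuous_apply i).comp heqvc)
    have h2 : IsClosed {l : E | ∀ i ∉ F, eqv l i = 0} := by
      have : {l : E | ∀ i ∉ F, eqv l i = 0} =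
          ⋂ (i) (_ : i ∉ F), {l : E | eqv l i = 0} := by ext; simp
      rw [this]
      exact isClosed_iInter fun i => isClosed_iInter fun _ =>
        isClosed_eq ((continuous_apply i).comp heqvc) continuous_const
    have h3 : IsClosed {l : E | ∑ i, eqv l i = 1} := by
      exact isClosed_eq (continuous_finset_sum _ fun i _ => (continuous_apply i).comp heqvc)
        continuous_const
    have : Δ = {l : E | ∀ i, 0 ≤ eqv l i} ∩
        ({l : E | ∀ i ∉ F, eqv l i = 0} ∩ {l : E | ∑ i, eqv l i = 1}) := by
      ext l; simp only [Δ, Set.mem_setOf_eq, Set.mem_inter_iff]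
    rw [this]
    exact h1.inter (h2.inter h3)
  have hΔbdd : Bornology.IsBounded Δ := by
    refine (Metric.isBounded_closedBall (x := (0 : E)) (r := 1)).subset ?_
    intro l hl
    rw [Metric.mem_closedBall, dist_zero_right]
    have hle1 : ∀ i, eqv l i ≤ 1 := by
      intro i
      rw [← hl.2.2]
      exact Finset.single_le_sum (fun i _ => hl.1 i) (Finset.mem_univ i)
    have : ‖l‖ = Real.sqrt (∑ i, ‖l i‖ ^ 2) := EuclideanSpace.norm_eq l
    rw [this]
    refine Real.sqrt_le_one.2 ?_
    calc ∑ i, ‖l i‖ ^ 2 ≤ ∑ i, eqv l i := by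
          refine Finset.sum_le_sum fun i _ => ?_
          have h0 := hl.1 i
          rw [Real.norm_eq_abs, ← happ l i, abs_of_nonneg h0, sq]
          calc eqv l i * eqv l i ≤ 1 * eqv l i := mul_le_mul_of_nonneg_right (hle1 i) h0
            _ = eqv l i := one_mul _
      _ = 1 := hl.2.2
  have hΔcomp : IsCompact Δ := Metric.isCompact_of_isClosed_isBounded hΔclosed hΔbdd
  have hδmem : ∀ i ∈ F, (eqv.symm (Pi.single i 1) : E) ∈ Δ := by
    intro i hi
    refine ⟨fun k => ?_, fun k hk => ?_, ?_⟩
    · rw [LinearEquiv.apply_symm_apply]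
      by_cases h : k = i
      · subst h; simp
      · simp [Pi.single_apply, h]
    · rw [LinearEquiv.apply_symm_apply]
      have : k ≠ i := fun h => hk (h ▸ hi)
      simp [Pi.single_apply, this]
    · simp only [LinearEquiv.apply_symm_apply]
      simp [Pi.single_apply]
  have hΔne : Δ.Nonempty := by
    obtain ⟨i0, hi0⟩ := hF
    exact ⟨_, hδmem i0 hi0⟩
  let pf : E → E := fun l => ↑(orthogonalProjection D' l)
  have hpflin : IsLinearMap ℝ pf := by
    constructor
    · intro x y; simp [pf, map_add]
    · intro c x; simp [pf, map_smul]
  have hpfc : Continuous pf := continuous_subtype_val.comp (orthogonalProjection D').continuous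
  let K : Set E := pf '' Δ
  have hKconv : Convex ℝ K := hΔconv.is_linear_image hpflin
  have hKcomp : IsCompact K := hΔcomp.image hpfc
  have hKne : K.Nonempty := hΔne.image pf
  have hKD : ∀ y ∈ K, y ∈ D' := by
    rintro y ⟨l, _, rfl⟩
    exact SetLike.coe_mem _
  obtain ⟨m, hmK, hmin⟩ := hKcomp.exists_isMinOn hKne continuous_norm.continuousOn
  haveI : Nonempty K := ⟨⟨m, hmK⟩⟩
  have hbdd : BddBelow (Set.range fun y : K => ‖(0 : E) - y‖) := by
    refine ⟨0, ?_⟩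
    rintro z ⟨y, rfl⟩
    exact norm_nonneg _
  have hinf : ‖(0 : E) - m‖ = ⨅ y : K, ‖(0 : E) - y‖ := by
    apply le_antisymm
    · refine le_ciInf fun y => ?_
      simp only [zero_sub, norm_neg]
      exact hmin y.2
    · exact ciInf_le hbdd ⟨m, hmK⟩
  have hvar := (norm_eq_iInf_iff_real_inner_le_zero hKconv hmK).1 hinf
  have hvar' : ∀ y ∈ K, (inner ℝ m m) ≤ (inner ℝ m y) := by
    intro y hy
    have := hvar y hy
    simp only [zero_sub, inner_neg_left, inner_sub_right] at this
    linarith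
  by_cases hm0 : m = 0
  · right
    subst hm0
    obtain ⟨l, hlΔ, hl0⟩ := hmK
    have hproj0 : orthogonalProjection D' l = 0 := ZeroMemClass.coe_eq_zero.1 hl0
    have hlperp : l ∈ D'ᗮ := Submodule.orthogonalProjectionOnto_eq_zero_iff.1 hproj0
    refine ⟨eqv l, hlΔ.1, hlΔ.2.1, hlΔ.2.2, ?_⟩
    intro j
    have hwj : w' j ∈ D' := Submodule.subset_span ⟨j, rfl⟩
    have h0 : (inner ℝ (w' j) l) = 0 := (Submodule.mem_orthogonal D' l).1 hlperp (w' j) hwj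
    rw [PiLp.inner_apply] at h0
    simp only [RCLike.inner_apply, conj_trivial] at h0
    rw [← h0]
    refine Finset.sum_congr rfl fun i _ => ?_
    simp only [w', happ, happ']
  · left
    have hmD : m ∈ D' := hKD m hmK
    have hmpos : (0 : ℝ) < ‖m‖ := norm_pos_iff.2 hm0
    have hnormpos : (0 : ℝ) < ‖m‖ ^ 2 := by positivity
    have hinner : ∀ i ∈ F, ‖m‖ ^ 2 ≤ eqv m i := by
      intro i hi
      set δ : E := eqv.symm (Pi.single i 1) with hδ
      have hpfδK : pf δ ∈ K := Set.mem_image_of_mem pf (hδmem i hi)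
      have h1 : (inner ℝ m m) ≤ (inner ℝ m (pf δ)) := hvar' _ hpfδK
      have hperp : (inner ℝ m (δ - pf δ)) = 0 :=
        (Submodule.mem_orthogonal D' (δ - pf δ)).1 (Submodule.sub_starProjection_mem_orthogonal (K := D') δ) m hmD
      have h2 : (inner ℝ m δ) = (inner ℝ m (pf δ)) := by
        have := inner_sub_right (𝕜 := ℝ) m δ (pf δ)
        rw [hperp] at this
        linarith
      have h3 : (inner ℝ m δ) = eqv m i := by
        rw [PiLp.inner_apply]
        simp only [RCLike.inner_apply, conj_trivial]
        simp only [δ, happ, happ', Pi.single_apply, mul_ite, mul_one, mul_zero]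
        simp [Finset.sum_ite_eq']
      have h4 : (inner ℝ m m) = ‖m‖ ^ 2 := real_inner_self_eq_norm_sq m
      linarith
    refine ⟨eqv (-m), ?_, ?_⟩
    · have hmap : Submodule.map (eqv : E →ₗ[ℝ] (Fin n → ℝ)) D' = Submodule.span ℝ (Set.range w) := by
        rw [Submodule.map_span]
        have hcomp : ⇑(eqv : E →ₗ[ℝ] (Fin n → ℝ)) ∘ w' = w := funext fun j => eqv.apply_symm_apply (w j)
        rw [← Set.range_comp, hcomp]
      rw [← hmap]
      exact Submodule.mem_map_of_mem (neg_mem hmD)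
    · intro i hi
      have : eqv (-m) i = -(eqv m i) := by simp [map_neg]
      rw [this]
      have := hinner i hi
      linarith


/-- `Span_{ℚ≥0}(S)`: all finite sums `λ₁s₁ + … + λ_r s_r` with `r ≥ 1`, each `λᵢ` a
nonnegative rational and each `sᵢ ∈ S`. -/
def qnnSpan (S : Set ℝ) : Set ℝ :=
  {x | ∃ (r : ℕ), 0 < r ∧ ∃ (l : Fin r → ℚ) (s : Fin r → ℝ),
    (∀ i, 0 ≤ l i) ∧ (∀ i, s i ∈ S) ∧ x = ∑ i, (l i : ℝ) * s i}

/-- A point of `ℝˢ` with all rational coordinates. -/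
def IsRationalPoint {s : ℕ} (x : Fin s → ℝ) : Prop := ∀ i, ∃ q : ℚ, x i = (q : ℝ)

/-- An affine subspace of `ℝˢ` is defined over `ℚ` if it equals the affine span of its
rational points. -/
def IsRationalAffine {s : ℕ} (W : AffineSubspace ℝ (Fin s → ℝ)) : Prop :=
  (W : Set (Fin s → ℝ)) = ↑(affineSpan ℝ {x : Fin s → ℝ | x ∈ W ∧ IsRationalPoint x})

set_option maxHeartbeats 4000000 in
/-- Step in the proof of Theorem 1.10: if `Span_{ℚ≥0}({v₁,…,v_s} \ ℚ) ∩ (ℚ \ {0}) = ∅`, there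
are a unit direction `e` of the rational envelope `V` of `v` and `ε > 0` such that every
`v⁺ ∈ V` whose normalized difference from `v` is `ε`-close to `e` satisfies `v⁺ ≥ v`
coordinatewise. The norm on `Fin s → ℝ` is the maximum norm. -/
theorem stmt_11 (s : ℕ) (hs : 0 < s)
    (v : Fin s → ℝ) (hv01 : ∀ i, v i ∈ Set.Icc (0 : ℝ) 1)
    (hvirr : ¬ IsRationalPoint v)
    (hspan : qnnSpan (Set.range v \ Set.range ((↑) : ℚ → ℝ)) ∩
      (Set.range ((↑) : ℚ → ℝ) \ {0}) = ∅)
    (V : AffineSubspace ℝ (Fin s → ℝ)) (hvV : v ∈ V) (hVrat : IsRationalAffine V)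
    (hVmin : ∀ W : AffineSubspace ℝ (Fin s → ℝ), v ∈ W → IsRationalAffine W → V ≤ W) :
    ∃ e : Fin s → ℝ, e ∈ V.direction ∧ ‖e‖ = 1 ∧
      ∃ ε : ℝ, 0 < ε ∧
        ∀ vp : Fin s → ℝ, vp ∈ V → vp ≠ v →
          ‖(‖v - vp‖)⁻¹ • (v - vp) - e‖ < ε → ∀ i, v i ≤ vp i := by

  classical
  set R : Set (Fin s → ℝ) := {x | x ∈ V ∧ IsRationalPoint x} with hRdef
  have hVspan : V = affineSpan ℝ R := SetLike.coe_injective hVrat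
  have hRne : R.Nonempty := by
    by_contra h
    rw [Set.not_nonempty_iff_eq_empty] at h
    have hvspan : v ∈ affineSpan ℝ R := hVspan ▸ hvV
    rw [h] at hvspan
    rw [AffineSubspace.span_empty, ← AffineSubspace.mem_coe, AffineSubspace.bot_coe] at hvspan
    exact hvspan
  obtain ⟨p₀, hp₀V, hp₀rat⟩ := hRne
  have hp₀R : p₀ ∈ R := ⟨hp₀V, hp₀rat⟩
  have hdir : V.direction = Submodule.span ℝ ((fun x => x - p₀) '' R) := by
    rw [hVspan, direction_affineSpan, vectorSpan_eq_span_vsub_set_right ℝ hp₀R]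
    rfl
  obtain ⟨T, hTS, hTspan⟩ := exists_finset_span ((fun x => x - p₀) '' R)
  set ι := {x : Fin s → ℝ // x ∈ T} with hι
  set w : ι → (Fin s → ℝ) := fun j => (j : Fin s → ℝ) with hw
  have hrange : Set.range w = (↑T : Set (Fin s → ℝ)) := Subtype.range_coe
  have hW : Submodule.span ℝ (Set.range w) = V.direction := by rw [hrange, hTspan, hdir]
  have hwrat : ∀ j, RatPt (w j) := by
    intro j
    obtain ⟨r, hrR, hreq⟩ := hTS j.2
    rw [hw]
    simp only
    rw [← hreq]
    exact RatPt.sub hrR.2 hp₀rat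
  have hwdir : ∀ j, w j ∈ V.direction := fun j => hW ▸ Submodule.subset_span ⟨j, rfl⟩
  set FP : Fin s → Prop := fun i => ∃ j, w j i ≠ 0 with hFP
  have hz : ∀ d ∈ V.direction, ∀ i, ¬ FP i → d i = 0 := by
    intro d hd i hni
    simp only [hFP, ne_eq, not_exists, not_not] at hni
    have hker : V.direction ≤ LinearMap.ker (LinearMap.proj i : (Fin s → ℝ) →ₗ[ℝ] ℝ) := by
      rw [← hW, Submodule.span_le]
      rintro _ ⟨j, rfl⟩
      exact LinearMap.mem_ker.2 (hni j)
    exact hker hd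
  have hvsub : v - p₀ ∈ V.direction := by
    have := AffineSubspace.vsub_mem_direction hvV hp₀V
    rwa [vsub_eq_sub] at this
  -- L1 : free coordinates are irrational
  have hirr : ∀ i, FP i → ¬ ∃ q : ℚ, v i = (q : ℝ) := by
    rintro i ⟨j₀, hj₀⟩ ⟨q, hq⟩
    set α : ι → ℝ := fun j => w j i with hα
    have hαrat : RatPt α := fun j => hwrat j i
    obtain ⟨c, hc⟩ : ∃ c : ι → ℝ, ∑ j, c j • w j = v - p₀ := by
      have hmem : v - p₀ ∈ Submodule.span ℝ (Set.range w) := by rw [hW]; exact hvsub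
      exact (mem_span_range_iff_exists_fun ℝ).1 hmem
    set β : ℝ := v i - p₀ i with hβ
    have hcsum : ∑ j, α j * c j = β := by
      have h1 : (∑ j, c j • w j) i = v i - p₀ i := by rw [hc]; rfl
      rw [Finset.sum_apply] at h1
      rw [hβ, ← h1]
      exact Finset.sum_congr rfl fun j _ => by simp only [Pi.smul_apply, smul_eq_mul, hα]; ring
    obtain ⟨qp, hqp⟩ := hp₀rat i
    obtain ⟨qα, hqα⟩ := hwrat j₀ i
    set vq : ℚ := (q - qp) / qα with hvq
    have hvqr : (vq : ℝ) = β / α j₀ := by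
      rw [hvq, hβ, hα]
      simp only
      rw [hq, hqp, hqα]
      push_cast
      ring
    set c₀ : ι → ℝ := Pi.single j₀ ((vq : ℝ)) with hc₀
    have hc₀rat : RatPt c₀ := RatPt.single j₀ vq
    have hc₀sum : ∑ j, α j * c₀ j = β := by
      rw [hc₀]
      simp only [Pi.single_apply, mul_ite, mul_zero]
      rw [Finset.sum_ite_eq' Finset.univ j₀]
      simp only [Finset.mem_univ, if_true]
      rw [hvqr, mul_comm, div_mul_cancel₀]
      exact hj₀
    set h := c - c₀ with hh
    have hker : ∑ j, α j * h j = 0 := by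
      rw [hh]
      simp only [Pi.sub_apply, mul_sub]
      rw [Finset.sum_sub_distrib, hcsum, hc₀sum, sub_self]
    set ratker : Set (ι → ℝ) := {y | RatPt y ∧ ∑ j, α j * y j = 0} with hratker
    have hhspan : h ∈ Submodule.span ℝ ratker := by
      apply mem_span_of_dense
      intro ε hε
      obtain ⟨r, hr1, hr2, hr3⟩ := dense_rat_solutions [α]
        (by intro u hu; rw [List.mem_singleton] at hu; rw [hu]; exact hαrat) h
        (by intro u hu; rw [List.mem_singleton] at hu; rw [hu]; exact hker) ε hε
      exact ⟨r, ⟨hr1, hr2 α (List.mem_singleton_self α)⟩, hr3⟩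
    set Sq : Set (Fin s → ℝ) := {x | x ∈ V ∧ IsRationalPoint x ∧ x i = (q : ℝ)} with hSq
    set xf : (ι → ℝ) → (Fin s → ℝ) := fun y => (∑ j, (c₀ j + y j) • w j) + p₀ with hxf
    have hxfmem : ∀ y : ι → ℝ, RatPt y → (∑ j, α j * y j = 0) → xf y ∈ Sq := by
      intro y hyrat hysum
      have hdirmem : (∑ j, (c₀ j + y j) • w j) ∈ V.direction :=
        Submodule.sum_mem _ fun j _ => Submodule.smul_mem _ _ (hwdir j)
      refine ⟨?_, ?_, ?_⟩
      · have hmem := AffineSubspace.vadd_mem_of_mem_direction hdirmem hp₀V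
        rwa [vadd_eq_add] at hmem
      · apply RatPt.add
        · apply ratpt_sum
          intro j _
          apply RatPt.smul
          · obtain ⟨q1, h1⟩ := hc₀rat j
            obtain ⟨q2, h2⟩ := hyrat j
            exact ⟨q1 + q2, by rw [h1, h2]; push_cast; ring⟩
          · exact hwrat j
        · exact hp₀rat
      · show ((∑ j, (c₀ j + y j) • w j) + p₀) i = (q : ℝ)
        rw [Pi.add_apply, Finset.sum_apply]
        have hexp : ∑ j, ((c₀ j + y j) • w j) i = (∑ j, α j * c₀ j) + ∑ j, α j * y j := by
          rw [← Finset.sum_add_distrib]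
          exact Finset.sum_congr rfl fun j _ => by
            simp only [Pi.smul_apply, smul_eq_mul, hα]; ring
        rw [hexp, hc₀sum, hysum, add_zero, hβ, hq]
        ring
    have hx₀ : xf 0 ∈ Sq := hxfmem 0 RatPt.zero (by simp)
    set Lw : (ι → ℝ) →ₗ[ℝ] (Fin s → ℝ) :=
      { toFun := fun y => ∑ j, y j • w j,
        map_add' := fun y z => by
          simp only [Pi.add_apply]
          rw [← Finset.sum_add_distrib]
          exact Finset.sum_congr rfl fun j _ => add_smul _ _ _,
        map_smul' := fun t y => by
          simp only [Pi.smul_apply, smul_eq_mul, RingHom.id_apply]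
          rw [Finset.smul_sum]
          exact Finset.sum_congr rfl fun j _ => (smul_smul t (y j) (w j)).symm } with hLw
    have hLwapp : ∀ y : ι → ℝ, Lw y = ∑ j, y j • w j := fun y => rfl
    have expand : ∀ y : ι → ℝ, xf y = (∑ j, c₀ j • w j) + Lw y + p₀ := by
      intro y
      rw [hxf]
      simp only [hLwapp]
      have : ∑ j, (c₀ j + y j) • w j = ∑ j, (c₀ j • w j + y j • w j) :=
        Finset.sum_congr rfl fun j _ => add_smul _ _ _
      rw [this, Finset.sum_add_distrib]
    have habc : (∑ j, c₀ j • w j) + Lw h = v - p₀ := by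
      rw [← hc, hLwapp, ← Finset.sum_add_distrib]
      exact Finset.sum_congr rfl fun j _ => by
        rw [← add_smul, hh, Pi.sub_apply]
        ring_nf
    have hxf_sub : ∀ y : ι → ℝ, xf y - xf 0 = Lw y := by
      intro y
      rw [expand y, expand 0, map_zero]
      abel
    have hveq : v = Lw h + xf 0 := by
      rw [expand 0, map_zero]
      have h2 : v = ((∑ j, c₀ j • w j) + Lw h) + p₀ := by rw [habc]; abel
      rw [h2]
      abel
    have hdirSq : Lw h ∈ (affineSpan ℝ Sq).direction := by
      rw [direction_affineSpan, vectorSpan_def]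
      have hmem : Lw h ∈ Submodule.map Lw (Submodule.span ℝ ratker) :=
        Submodule.mem_map_of_mem hhspan
      rw [Submodule.map_span] at hmem
      refine Submodule.span_mono ?_ hmem
      rintro _ ⟨y, ⟨hyrat, hysum⟩, rfl⟩
      rw [Set.mem_vsub]
      exact ⟨xf y, hxfmem y hyrat hysum, xf 0, hx₀, by rw [vsub_eq_sub, hxf_sub]⟩
    have hvSq : v ∈ affineSpan ℝ Sq := by
      rw [hveq, ← vadd_eq_add]
      exact AffineSubspace.vadd_mem_of_mem_direction hdirSq (subset_affineSpan ℝ Sq hx₀)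
    have hWrat' : IsRationalAffine (affineSpan ℝ Sq) := by
      have h1 : affineSpan ℝ Sq ≤ affineSpan ℝ {x | x ∈ affineSpan ℝ Sq ∧ IsRationalPoint x} :=
        affineSpan_mono ℝ (fun x hx => ⟨subset_affineSpan ℝ Sq hx, hx.2.1⟩)
      have h2 : affineSpan ℝ {x | x ∈ affineSpan ℝ Sq ∧ IsRationalPoint x} ≤ affineSpan ℝ Sq :=
        affineSpan_le.2 fun x hx => hx.1
      exact congrArg (fun (W : AffineSubspace ℝ (Fin s → ℝ)) => (W : Set (Fin s → ℝ)))
        (le_antisymm h1 h2)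
    have hle := hVmin _ hvSq hWrat'
    have hj₀mem : w j₀ ∈ (affineSpan ℝ Sq).direction :=
      AffineSubspace.direction_le hle (hwdir j₀)
    rw [direction_affineSpan, vectorSpan_def] at hj₀mem
    have hkerq : Submodule.span ℝ (Sq -ᵥ Sq) ≤
        LinearMap.ker (LinearMap.proj i : (Fin s → ℝ) →ₗ[ℝ] ℝ) := by
      rw [Submodule.span_le]
      rintro z hz'
      rw [Set.mem_vsub] at hz'
      obtain ⟨x1, hx1, x2, hx2, rfl⟩ := hz'
      have : (x1 -ᵥ x2) i = 0 := by
        rw [vsub_eq_sub, Pi.sub_apply, hx1.2.2, hx2.2.2, sub_self]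
      exact LinearMap.mem_ker.2 this
    exact hj₀ (LinearMap.mem_ker.1 (hkerq hj₀mem))
  -- main case split
  by_cases hFPex : ∃ i, FP i
  · obtain ⟨i₀, hi₀⟩ := hFPex
    set Fs : Finset (Fin s) := Finset.univ.filter FP with hFs
    have hFsne : Fs.Nonempty := ⟨i₀, by simp [hFs, hi₀]⟩
    have hFsmem : ∀ i, i ∈ Fs ↔ FP i := by intro i; simp [hFs]
    rcases gordan w Fs hFsne with ⟨d, hdmem, hdneg⟩ | ⟨a, ha0, haF, hasum, haw⟩
    · -- good case : build e and ε
      have hd_dir : d ∈ V.direction := hW ▸ hdmem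
      have hd₀ : d i₀ < 0 := hdneg i₀ ((hFsmem i₀).2 hi₀)
      have hdne : d ≠ 0 := by
        intro h0
        rw [h0] at hd₀
        simp at hd₀
      have hnd : (0:ℝ) < ‖d‖ := norm_pos_iff.2 hdne
      refine ⟨‖d‖⁻¹ • d, Submodule.smul_mem _ _ hd_dir, ?_, ?_⟩
      · rw [norm_smul, norm_inv, norm_norm, inv_mul_cancel₀ (ne_of_gt hnd)]
      · set e : Fin s → ℝ := ‖d‖⁻¹ • d with he
        have he_neg : ∀ i ∈ Fs, e i < 0 := by
          intro i hi
          have : e i = ‖d‖⁻¹ * d i := rfl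
          rw [this]
          exact mul_neg_of_pos_of_neg (inv_pos.2 hnd) (hdneg i hi)
        refine ⟨Fs.inf' hFsne (fun i => -(e i)), ?_, ?_⟩
        · rw [Finset.lt_inf'_iff]
          intro i hi
          simpa using he_neg i hi
        · intro vp hvp hne hclose i
          set u : Fin s → ℝ := (‖v - vp‖)⁻¹ • (v - vp) with hu
          have hsub_dir : v - vp ∈ V.direction := by
            have := AffineSubspace.vsub_mem_direction hvV hvp
            rwa [vsub_eq_sub] at this
          have hu_dir : u ∈ V.direction := Submodule.smul_mem _ _ hsub_dir
          have hui : u i ≤ 0 := by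
            by_cases hFPi : FP i
            · have hiFs : i ∈ Fs := (hFsmem i).2 hFPi
              have h1 : u i - e i ≤ |u i - e i| := le_abs_self _
              have h2 : |u i - e i| ≤ ‖u - e‖ := by
                have := norm_le_pi_norm (u - e) i
                simpa [Real.norm_eq_abs] using this
              have h3 : ‖u - e‖ < Fs.inf' hFsne (fun i => -(e i)) := hclose
              have h4 : Fs.inf' hFsne (fun i => -(e i)) ≤ -(e i) := Finset.inf'_le _ hiFs
              linarith
            · rw [hz u hu_dir i hFPi]
          have hnvp : (0:ℝ) < ‖v - vp‖ := by
            rw [norm_pos_iff]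
            exact sub_ne_zero.2 (Ne.symm hne)
          have : v i - vp i = ‖v - vp‖ * u i := by
            rw [hu]
            simp only [Pi.smul_apply, Pi.sub_apply, smul_eq_mul]
            field_simp
          have hle : v i - vp i ≤ 0 := by
            rw [this]
            exact mul_nonpos_of_nonneg_of_nonpos (le_of_lt hnvp) hui
          linarith
    · -- contradiction case
      exfalso
      set Fp : Finset (Fin s) := Finset.univ.filter (fun i => 0 < a i) with hFp
      have hFpmem : ∀ i, i ∈ Fp ↔ 0 < a i := by intro i; simp [hFp]
      have hFpne : Fp.Nonempty := by
        by_contra hne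
        rw [Finset.not_nonempty_iff_eq_empty] at hne
        have hzero : ∑ i, a i = 0 := Finset.sum_eq_zero fun i _ => by
          have hnlt : ¬ 0 < a i := by
            intro hlt
            have hmem : i ∈ Fp := (hFpmem i).2 hlt
            rw [hne] at hmem
            exact absurd hmem (Finset.notMem_empty i)
          linarith [ha0 i]
        rw [hasum] at hzero
        norm_num at hzero
      have hFpFs : ∀ i ∈ Fp, i ∈ Fs := by
        intro i hi
        by_contra hns
        have h0 : a i = 0 := haF i hns
        have h1 : 0 < a i := (hFpmem i).1 hi
        rw [h0] at h1
        exact lt_irrefl 0 h1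
      set ε₀ := Fp.inf' hFpne a with hε₀
      have hε₀pos : 0 < ε₀ := by
        rw [hε₀, Finset.lt_inf'_iff]
        exact fun i hi => (hFpmem i).1 hi
      set Zw : List (Fin s → ℝ) := (Finset.univ.toList (α := ι)).map w with hZw
      set Zs : List (Fin s → ℝ) :=
        ((Finset.univ.filter (fun i : Fin s => i ∉ Fp)).toList).map
          (fun i => Pi.single i (1:ℝ)) with hZs
      set Z := Zw ++ Zs with hZ
      have hZrat : ∀ u ∈ Z, RatPt u := by
        intro u hu
        rw [hZ, List.mem_append] at hu
        rcases hu with hu | hu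
        · rw [hZw, List.mem_map] at hu
          obtain ⟨j, _, rfl⟩ := hu
          exact hwrat j
        · rw [hZs, List.mem_map] at hu
          obtain ⟨i, _, rfl⟩ := hu
          have hsr : RatPt (Pi.single i ((1:ℚ):ℝ)) := RatPt.single i 1
          simpa using hsr
      have hsingle_sum : ∀ (i : Fin s) (x : Fin s → ℝ),
          ∑ k, (Pi.single i (1:ℝ) : Fin s → ℝ) k * x k = x i := by
        intro i x
        simp [Pi.single_apply, ite_mul, Finset.sum_ite_eq]
      have hZa : ∀ u ∈ Z, ∑ k, u k * a k = 0 := by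
        intro u hu
        rw [hZ, List.mem_append] at hu
        rcases hu with hu | hu
        · rw [hZw, List.mem_map] at hu
          obtain ⟨j, _, rfl⟩ := hu
          rw [← haw j]
          exact Finset.sum_congr rfl fun k _ => mul_comm _ _
        · rw [hZs, List.mem_map] at hu
          obtain ⟨i, hi, rfl⟩ := hu
          rw [hsingle_sum]
          rw [Finset.mem_toList, Finset.mem_filter] at hi
          have hni : ¬ 0 < a i := fun hcon => hi.2 ((hFpmem i).2 hcon)
          linarith [ha0 i]
      obtain ⟨a', ha'rat, ha'Z, ha'n⟩ := dense_rat_solutions Z hZrat a hZa ε₀ hε₀pos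
      have ha'pos : ∀ i ∈ Fp, 0 < a' i := by
        intro i hi
        have h1 : a i - a' i ≤ |a i - a' i| := le_abs_self _
        have h2 : |a i - a' i| ≤ ‖a - a'‖ := by
          have hni := norm_le_pi_norm (a - a') i
          simpa [Real.norm_eq_abs] using hni
        have h3 : ε₀ ≤ a i := Finset.inf'_le _ hi
        linarith
      have ha'zero : ∀ i, i ∉ Fp → a' i = 0 := by
        intro i hi
        have hmem : Pi.single i (1:ℝ) ∈ Z := by
          rw [hZ, List.mem_append]
          right
          rw [hZs, List.mem_map]
          refine ⟨i, ?_, rfl⟩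
          rw [Finset.mem_toList, Finset.mem_filter]
          exact ⟨Finset.mem_univ i, hi⟩
        have hval := ha'Z _ hmem
        rwa [hsingle_sum] at hval
      have ha'w : ∀ j, ∑ k, a' k * w j k = 0 := by
        intro j
        have hmem : w j ∈ Z := by
          rw [hZ, List.mem_append]; left
          rw [hZw, List.mem_map]
          exact ⟨j, by simp, rfl⟩
        have hval := ha'Z _ hmem
        rw [← hval]
        exact Finset.sum_congr rfl fun k _ => mul_comm _ _
      obtain ⟨φ, hφapp⟩ : ∃ φ : (Fin s → ℝ) →ₗ[ℝ] ℝ, ∀ d, φ d = ∑ k, a' k * d k :=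
        ⟨{ toFun := fun d => ∑ k, a' k * d k,
           map_add' := fun x y => by
             simp only [Pi.add_apply, mul_add]
             exact Finset.sum_add_distrib,
           map_smul' := fun t x => by
             simp only [Pi.smul_apply, smul_eq_mul, RingHom.id_apply]
             rw [Finset.mul_sum]
             exact Finset.sum_congr rfl fun k _ => by ring }, fun d => rfl⟩
      have hφv : φ (v - p₀) = 0 := by
        have hker : V.direction ≤ LinearMap.ker φ := by
          rw [← hW, Submodule.span_le]
          rintro _ ⟨j, rfl⟩
          exact LinearMap.mem_ker.2 (by rw [hφapp]; exact ha'w j)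
        exact LinearMap.mem_ker.1 (hker hvsub)
      have hdot : ∑ k, a' k * v k = ∑ k, a' k * p₀ k := by
        have hsub : φ (v - p₀) = (∑ k, a' k * v k) - ∑ k, a' k * p₀ k := by
          rw [hφapp]
          simp only [Pi.sub_apply, mul_sub]
          exact Finset.sum_sub_distrib _ _
        rw [hφv] at hsub
        linarith
      obtain ⟨qB, hqB⟩ := RatPt.dot ha'rat hp₀rat
      set B := ∑ k, a' k * v k with hB
      have hBq : B = (qB : ℝ) := hdot.trans hqB
      have hvpos : ∀ i ∈ Fp, 0 < v i := by
        intro i hi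
        have hiFs := hFpFs i hi
        have hirri := hirr i ((hFsmem i).1 hiFs)
        rcases lt_or_eq_of_le (hv01 i).1 with hlt | heq
        · exact hlt
        · exact absurd ⟨0, by rw [← heq]; norm_num⟩ hirri
      have hBeq : B = ∑ k ∈ Fp, a' k * v k := by
        rw [hB]
        symm
        apply Finset.sum_subset (Finset.subset_univ Fp)
        intro k _ hk
        rw [ha'zero k hk, zero_mul]
      have hBpos : 0 < B := by
        rw [hBeq]
        exact Finset.sum_pos (fun k hk => mul_pos (ha'pos k hk) (hvpos k hk)) hFpne
      have hBqnn : B ∈ qnnSpan (Set.range v \ Set.range ((↑) : ℚ → ℝ)) := by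
        choose qa hqa using ha'rat
        refine ⟨Fp.card, Finset.card_pos.2 hFpne, ?_⟩
        set e : {x // x ∈ Fp} ≃ Fin Fp.card :=
          Fintype.equivFinOfCardEq (Fintype.card_coe Fp) with he
        refine ⟨fun t => qa ((e.symm t) : Fin s), fun t => v ((e.symm t) : Fin s), ?_, ?_, ?_⟩
        · intro t
          have hmem := (e.symm t).2
          have hpos := ha'pos _ hmem
          rw [hqa] at hpos
          exact_mod_cast le_of_lt hpos
        · intro t
          constructor
          · exact ⟨((e.symm t) : Fin s), rfl⟩
          · rintro ⟨qq, hqq⟩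
            exact hirr _ ((hFsmem _).1 (hFpFs _ (e.symm t).2)) ⟨qq, hqq.symm⟩
        · rw [hBeq]
          rw [← Finset.sum_coe_sort Fp (fun k => a' k * v k)]
          rw [← Equiv.sum_comp e.symm (fun x : {x // x ∈ Fp} => a' (x : Fin s) * v (x : Fin s))]
          exact Finset.sum_congr rfl fun t _ => by rw [hqa]
      have hmemB : B ∈ qnnSpan (Set.range v \ Set.range ((↑) : ℚ → ℝ)) ∩
          (Set.range ((↑) : ℚ → ℝ) \ {0}) :=
        ⟨hBqnn, ⟨qB, hBq.symm⟩, by simpa using ne_of_gt hBpos⟩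
      rw [hspan] at hmemB
      exact absurd hmemB (Set.notMem_empty B)
  · -- no free coordinate: v is rational, contradiction
    exfalso
    apply hvirr
    intro i
    have : v i - p₀ i = 0 := by
      have := hz (v - p₀) hvsub i (fun h => hFPex ⟨i, h⟩)
      simpa using this
    obtain ⟨q, hq⟩ := hp₀rat i
    exact ⟨q, by rw [← hq]; linarith⟩
end

section
/- Let ‖·‖∞ be the maximum norm on ℝ², let e := (1,1) ∈ ℝ², and let g : [0,∞) → [0,∞) be a monotone nondecreasing function with g(x) → +∞ as x → +∞. Let m be a positive integer such that g(x) ≥ 2 for all x ≥ m. Then there exists a point v = (r₁, r₂) ∈ ℝ² satisfying the following: (1) 1, r₁, r₂ are linearly independent over ℚ (in particular v ∉ ℚ²); and (2) for every integer n ≥ m and every point vₙ ∈ ℝ² with n·vₙ ∈ ℤ² (which forces vₙ ∈ ℚ² and hence v ≠ vₙ), either ‖v − vₙ‖∞ > 1/(n·g(n)) or ‖ (v − vₙ)/‖v − vₙ‖∞ − e ‖∞ > 1. -/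
namespace Stmt12Aux

variable (XF : ℕ → ℕ) (mm : ℕ)

def step (s : ℕ × ℕ × ℕ × ℕ) : ℕ × ℕ × ℕ × ℕ :=
  let q' := 8 * s.1 ^ 2 * s.2.2.2
  let M' := max (s.2.2.2 + 1) (XF q')
  let r' := 8 * s.2.1 ^ 2 * M'
  let N' := max (M' + 1) (XF r')
  (q', r', M', N')

def T : ℕ → ℕ × ℕ × ℕ × ℕ
  | 0 =>
    let M0 := max (mm + 1) (XF 1)
    let r1 := 8 * 1 ^ 2 * M0
    let N0 := max (M0 + 1) (XF r1)
    (1, r1, M0, N0)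
  | k + 1 => step XF (T k)

def q (k : ℕ) : ℕ := (T XF mm k).1

def rr : ℕ → ℕ
  | 0 => 1
  | k + 1 => (T XF mm k).2.1

def M (k : ℕ) : ℕ := (T XF mm k).2.2.1

def N (k : ℕ) : ℕ := (T XF mm k).2.2.2

lemma q_zero : q XF mm 0 = 1 := rfl
lemma rr_zero : rr XF mm 0 = 1 := rfl
lemma M_zero : M XF mm 0 = max (mm + 1) (XF 1) := rfl
lemma q_succ (k : ℕ) : q XF mm (k + 1) = 8 * (q XF mm k) ^ 2 * N XF mm k := rfl
lemma M_succ (k : ℕ) :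
    M XF mm (k + 1) = max (N XF mm k + 1) (XF (q XF mm (k + 1))) := rfl

lemma rr_succ (k : ℕ) :
    rr XF mm (k + 1) = 8 * (rr XF mm k) ^ 2 * M XF mm k := by
  cases k with
  | zero => simp [rr, T, M, step]
  | succ j => rfl

lemma N_def (k : ℕ) :
    N XF mm k = max (M XF mm k + 1) (XF (rr XF mm (k + 1))) := by
  cases k with
  | zero => rfl
  | succ j => rfl

lemma M_pos (k : ℕ) : 1 ≤ M XF mm k := by
  cases k with
  | zero => rw [M_zero]; omega
  | succ j => rw [M_succ]; omega

lemma N_pos (k : ℕ) : 1 ≤ N XF mm k := by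
  rw [N_def]; have := M_pos XF mm k; omega

lemma q_pos : ∀ k, 1 ≤ q XF mm k := by
  intro k
  induction k with
  | zero => rw [q_zero]
  | succ j ih =>
    rw [q_succ]
    have h1 := N_pos XF mm j
    calc 1 ≤ 8 * 1 * 1 := by norm_num
    _ ≤ 8 * (q XF mm j) ^ 2 * N XF mm j := by
        apply Nat.mul_le_mul (Nat.mul_le_mul le_rfl (by nlinarith)) h1

lemma rr_pos : ∀ k, 1 ≤ rr XF mm k := by
  intro k
  induction k with
  | zero => rw [rr_zero]
  | succ j ih =>
    rw [rr_succ]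
    have h1 := M_pos XF mm j
    calc 1 ≤ 8 * 1 * 1 := by norm_num
    _ ≤ 8 * (rr XF mm j) ^ 2 * M XF mm j := by
        apply Nat.mul_le_mul (Nat.mul_le_mul le_rfl (by nlinarith)) h1

-- doubling growth

lemma q_double (k : ℕ) : 2 * q XF mm k ≤ q XF mm (k + 1) := by
  rw [q_succ]
  have h1 := N_pos XF mm k
  have h2 := q_pos XF mm k
  nlinarith

lemma rr_double (k : ℕ) : 2 * rr XF mm k ≤ rr XF mm (k + 1) := by
  rw [rr_succ]
  have h1 := M_pos XF mm k
  have h2 := rr_pos XF mm k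
  nlinarith

lemma q_mono {j k : ℕ} (h : j ≤ k) : q XF mm j ≤ q XF mm k := by
  induction k with
  | zero =>
    have : j = 0 := by omega
    subst this; rfl
  | succ i ih =>
    rcases Nat.lt_or_ge j (i+1) with h' | h'
    · have := ih (by omega)
      have := q_double XF mm i
      omega
    · have : j = i + 1 := by omega
      subst this; rfl

lemma rr_mono {j k : ℕ} (h : j ≤ k) : rr XF mm j ≤ rr XF mm k := by
  induction k with
  | zero =>
    have : j = 0 := by omega
    subst this; rfl
  | succ i ih =>
    rcases Nat.lt_or_ge j (i+1) with h' | h'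
    · have := ih (by omega)
      have := rr_double XF mm i
      omega
    · have : j = i + 1 := by omega
      subst this; rfl

lemma two_pow_le_q (k : ℕ) : 2 ^ k ≤ q XF mm k := by
  induction k with
  | zero => simp [q_zero]
  | succ j ih =>
    have := q_double XF mm j
    calc 2 ^ (j+1) = 2 * 2 ^ j := by ring
    _ ≤ 2 * q XF mm j := by omega
    _ ≤ _ := q_double XF mm j

lemma two_pow_le_rr (k : ℕ) : 2 ^ k ≤ rr XF mm k := by
  induction k with
  | zero => simp [rr_zero]
  | succ j ih =>
    calc 2 ^ (j+1) = 2 * 2 ^ j := by ring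
    _ ≤ 2 * rr XF mm j := by omega
    _ ≤ _ := rr_double XF mm j

-- divisibility

lemma q_dvd_succ (k : ℕ) : q XF mm k ∣ q XF mm (k + 1) := by
  rw [q_succ]; exact ⟨8 * q XF mm k * N XF mm k, by ring⟩

lemma rr_dvd_succ (k : ℕ) : rr XF mm k ∣ rr XF mm (k + 1) := by
  rw [rr_succ]; exact ⟨8 * rr XF mm k * M XF mm k, by ring⟩

lemma q_dvd {j k : ℕ} (h : j ≤ k) : q XF mm j ∣ q XF mm k := by
  induction k with
  | zero =>
    have : j = 0 := by omega
    subst this; rfl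
  | succ i ih =>
    rcases Nat.lt_or_ge j (i+1) with h' | h'
    · exact (ih (by omega)).trans (q_dvd_succ XF mm i)
    · have : j = i + 1 := by omega
      subst this; rfl

lemma rr_dvd {j k : ℕ} (h : j ≤ k) : rr XF mm j ∣ rr XF mm k := by
  induction k with
  | zero =>
    have : j = 0 := by omega
    subst this; rfl
  | succ i ih =>
    rcases Nat.lt_or_ge j (i+1) with h' | h'
    · exact (ih (by omega)).trans (rr_dvd_succ XF mm i)
    · have : j = i + 1 := by omega
      subst this; rfl



-- ### series

lemma summable_inv_q : Summable (fun j => (1 : ℝ) / (q XF mm j)) := by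
  refine Summable.of_nonneg_of_le (fun j => by positivity) (fun j => ?_)
    (summable_geometric_of_lt_one (r := (1/2 : ℝ)) (by norm_num) (by norm_num))
  rw [div_pow, one_pow]
  apply one_div_le_one_div_of_le (by positivity)
  calc ((2 : ℝ) ^ j) = ((2 ^ j : ℕ) : ℝ) := by push_cast; ring
  _ ≤ ((q XF mm j : ℕ) : ℝ) := by exact_mod_cast two_pow_le_q XF mm j

lemma summable_inv_rr : Summable (fun j => (1 : ℝ) / (rr XF mm j)) := by
  refine Summable.of_nonneg_of_le (fun j => by positivity) (fun j => ?_)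
    (summable_geometric_of_lt_one (r := (1/2 : ℝ)) (by norm_num) (by norm_num))
  rw [div_pow, one_pow]
  apply one_div_le_one_div_of_le (by positivity)
  calc ((2 : ℝ) ^ j) = ((2 ^ j : ℕ) : ℝ) := by push_cast; ring
  _ ≤ ((rr XF mm j : ℕ) : ℝ) := by exact_mod_cast two_pow_le_rr XF mm j

noncomputable def lamq : ℝ := ∑' j, (1 : ℝ) / (q XF mm j)

noncomputable def lamr : ℝ := ∑' j, (1 : ℝ) / (rr XF mm j)

noncomputable def tailq (k : ℕ) : ℝ := ∑' j, (1 : ℝ) / (q XF mm (j + (k + 1)))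

noncomputable def tailr (k : ℕ) : ℝ := ∑' j, (1 : ℝ) / (rr XF mm (j + (k + 1)))

lemma summable_tail_q (k : ℕ) : Summable (fun j => (1 : ℝ) / (q XF mm (j + (k + 1)))) :=
  (summable_nat_add_iff (f := fun j => (1:ℝ)/(q XF mm j)) (k + 1)).2 (summable_inv_q XF mm)

lemma summable_tail_rr (k : ℕ) : Summable (fun j => (1 : ℝ) / (rr XF mm (j + (k + 1)))) :=
  (summable_nat_add_iff (f := fun j => (1:ℝ)/(rr XF mm j)) (k + 1)).2 (summable_inv_rr XF mm)

lemma tailq_pos (k : ℕ) : 0 < tailq XF mm k := by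
  apply Summable.tsum_pos (summable_tail_q XF mm k) (fun j => by positivity) 0
  have := q_pos XF mm (0 + (k+1))
  positivity

lemma tailr_pos (k : ℕ) : 0 < tailr XF mm k := by
  apply Summable.tsum_pos (summable_tail_rr XF mm k) (fun j => by positivity) 0
  have := rr_pos XF mm (0 + (k+1))
  positivity

lemma tailq_le (k : ℕ) : tailq XF mm k ≤ 2 / (q XF mm (k + 1)) := by
  have h1 : ∀ j : ℕ, (1 : ℝ) / (q XF mm (j + (k + 1))) ≤ (1/2 : ℝ) ^ j * (1 / q XF mm (k + 1)) := by
    intro j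
    have hq1 : (0:ℝ) < q XF mm (k+1) := by exact_mod_cast q_pos XF mm (k+1)
    have hgrow : (2:ℕ) ^ j * q XF mm (k + 1) ≤ q XF mm (j + (k + 1)) := by
      induction j with
      | zero => simpa using le_rfl
      | succ i ih =>
        have := q_double XF mm (i + (k + 1))
        calc 2 ^ (i+1) * q XF mm (k+1) = 2 * (2 ^ i * q XF mm (k+1)) := by ring
        _ ≤ 2 * q XF mm (i + (k+1)) := by omega
        _ ≤ q XF mm (i + (k+1) + 1) := q_double XF mm (i + (k+1))
        _ = q XF mm (i + 1 + (k+1)) := by ring_nf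
    have heq : (1/2 : ℝ) ^ j * (1 / q XF mm (k+1)) = 1 / (2 ^ j * q XF mm (k+1)) := by
      rw [div_pow, one_pow, div_mul_div_comm, one_mul]
    rw [heq]
    apply one_div_le_one_div_of_le (by positivity)
    calc ((2:ℝ) ^ j * q XF mm (k+1)) = ((2 ^ j * q XF mm (k+1) : ℕ) : ℝ) := by push_cast; ring
    _ ≤ ((q XF mm (j + (k+1)) : ℕ) : ℝ) := by exact_mod_cast hgrow
  calc tailq XF mm k ≤ ∑' j, (1/2 : ℝ) ^ j * (1 / q XF mm (k + 1)) :=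
        Summable.tsum_le_tsum h1 (summable_tail_q XF mm k)
          (Summable.mul_right _ (summable_geometric_of_lt_one (by norm_num) (by norm_num)))
  _ = (∑' j, (1/2 : ℝ) ^ j) * (1 / q XF mm (k + 1)) := tsum_mul_right
  _ = 2 / (q XF mm (k + 1)) := by rw [tsum_geometric_two]; ring

lemma tailr_le (k : ℕ) : tailr XF mm k ≤ 2 / (rr XF mm (k + 1)) := by
  have h1 : ∀ j : ℕ, (1 : ℝ) / (rr XF mm (j + (k + 1))) ≤ (1/2 : ℝ) ^ j * (1 / rr XF mm (k + 1)) := by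
    intro j
    have hq1 : (0:ℝ) < rr XF mm (k+1) := by exact_mod_cast rr_pos XF mm (k+1)
    have hgrow : (2:ℕ) ^ j * rr XF mm (k + 1) ≤ rr XF mm (j + (k + 1)) := by
      induction j with
      | zero => simpa using le_rfl
      | succ i ih =>
        calc 2 ^ (i+1) * rr XF mm (k+1) = 2 * (2 ^ i * rr XF mm (k+1)) := by ring
        _ ≤ 2 * rr XF mm (i + (k+1)) := by omega
        _ ≤ rr XF mm (i + (k+1) + 1) := rr_double XF mm (i + (k+1))
        _ = rr XF mm (i + 1 + (k+1)) := by ring_nf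
    have heq : (1/2 : ℝ) ^ j * (1 / rr XF mm (k+1)) = 1 / (2 ^ j * rr XF mm (k+1)) := by
      rw [div_pow, one_pow, div_mul_div_comm, one_mul]
    rw [heq]
    apply one_div_le_one_div_of_le (by positivity)
    calc ((2:ℝ) ^ j * rr XF mm (k+1)) = ((2 ^ j * rr XF mm (k+1) : ℕ) : ℝ) := by push_cast; ring
    _ ≤ ((rr XF mm (j + (k+1)) : ℕ) : ℝ) := by exact_mod_cast hgrow
  calc tailr XF mm k ≤ ∑' j, (1/2 : ℝ) ^ j * (1 / rr XF mm (k + 1)) :=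
        Summable.tsum_le_tsum h1 (summable_tail_rr XF mm k)
          (Summable.mul_right _ (summable_geometric_of_lt_one (by norm_num) (by norm_num)))
  _ = (∑' j, (1/2 : ℝ) ^ j) * (1 / rr XF mm (k + 1)) := tsum_mul_right
  _ = 2 / (rr XF mm (k + 1)) := by rw [tsum_geometric_two]; ring

-- head

noncomputable def Aq (k : ℕ) : ℕ := ∑ j ∈ Finset.range (k + 1), q XF mm k / q XF mm j

noncomputable def Ar (k : ℕ) : ℕ := ∑ j ∈ Finset.range (k + 1), rr XF mm k / rr XF mm j

lemma lamq_split (k : ℕ) :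
    lamq XF mm = (Aq XF mm k : ℝ) / (q XF mm k) + tailq XF mm k := by
  have h := Summable.sum_add_tsum_nat_add (k + 1) (summable_inv_q XF mm)
  rw [lamq, ← h]
  congr 1
  rw [Aq]
  push_cast
  rw [Finset.sum_div]
  apply Finset.sum_congr rfl
  intro j hj
  have hj' : j ≤ k := by
    have := Finset.mem_range.1 hj; omega
  have hdvd := q_dvd XF mm hj'
  have hj0 : (q XF mm j : ℝ) ≠ 0 := by
    have := q_pos XF mm j; positivity
  have hk0 : (q XF mm k : ℝ) ≠ 0 := by
    have := q_pos XF mm k; positivity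
  rw [Nat.cast_div hdvd hj0]
  field_simp

lemma lamr_split (k : ℕ) :
    lamr XF mm = (Ar XF mm k : ℝ) / (rr XF mm k) + tailr XF mm k := by
  have h := Summable.sum_add_tsum_nat_add (k + 1) (summable_inv_rr XF mm)
  rw [lamr, ← h]
  congr 1
  rw [Ar]
  push_cast
  rw [Finset.sum_div]
  apply Finset.sum_congr rfl
  intro j hj
  have hj' : j ≤ k := by
    have := Finset.mem_range.1 hj; omega
  have hdvd := rr_dvd XF mm hj'
  have hj0 : (rr XF mm j : ℝ) ≠ 0 := by
    have := rr_pos XF mm j; positivity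
  have hk0 : (rr XF mm k : ℝ) ≠ 0 := by
    have := rr_pos XF mm k; positivity
  rw [Nat.cast_div hdvd hj0]
  field_simp




lemma core_fract (Q : ℕ) (hQ : 1 ≤ Q) (lam : ℝ) (A : ℕ) (t : ℝ) (ht : 0 < t)
    (hsplit : lam = (A : ℝ) / Q + t) (n : ℕ) (hn : 1 ≤ n)
    (hv : (n : ℝ) * t ≤ 1 / (4 * Q)) :
    3 / (4 * Q) ≤ Int.fract ((n : ℝ) * (1 - lam)) := by
  have hQ0 : (0 : ℝ) < Q := by exact_mod_cast hQ
  have hn0 : (0 : ℝ) < n := by exact_mod_cast hn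
  set v : ℝ := ((n * A % Q : ℕ) : ℝ) / Q + n * t with hvdef
  have hnt : 0 < (n : ℝ) * t := by positivity
  have hmodnn : (0:ℝ) ≤ ((n * A % Q : ℕ) : ℝ) / Q := by positivity
  have hv0 : 0 < v := by rw [hvdef]; linarith
  have hmodlt : ((n * A % Q : ℕ) : ℝ) ≤ (Q : ℝ) - 1 := by
    have h : n * A % Q ≤ Q - 1 := by
      have := Nat.mod_lt (n * A) (show 0 < Q by omega)
      omega
    calc ((n * A % Q : ℕ) : ℝ) ≤ ((Q - 1 : ℕ) : ℝ) := by exact_mod_cast h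
    _ = (Q : ℝ) - 1 := by
      have h1 : (1:ℕ) ≤ Q := hQ
      push_cast [h1]; ring
  have hv1 : v ≤ 1 - 3 / (4 * Q) := by
    have h5 : v * (4 * Q) ≤ 4 * Q - 3 := by
      have e1 : v * (4 * Q) = 4 * ((n * A % Q : ℕ) : ℝ) + ((n:ℝ) * t) * (4 * Q) := by
        rw [hvdef]; field_simp
      have e2 : ((n:ℝ) * t) * (4 * Q) ≤ 1 := by
        have := mul_le_mul_of_nonneg_right hv (show (0:ℝ) ≤ 4 * Q by positivity)
        have heq : 1 / (4 * (Q:ℝ)) * (4 * Q) = 1 := by field_simp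
        linarith
      nlinarith
    have e3 : v ≤ (4 * (Q:ℝ) - 3) / (4 * Q) := (le_div_iff₀ (by positivity)).2 h5
    have e4 : (4 * (Q:ℝ) - 3) / (4 * Q) = 1 - 3 / (4 * Q) := by field_simp
    linarith [e3, e4.symm.le, e4.le]
  have hvlt1 : v < 1 := by
    calc v ≤ 1 - 3 / (4 * (Q:ℝ)) := hv1
    _ < 1 := sub_lt_self 1 (by positivity)
  have e1 : (n:ℝ) * ((A:ℝ)/Q) = ((n*A : ℕ) : ℝ) / Q := by push_cast; ring
  have e2 : ((n*A : ℕ) : ℝ) = (Q:ℝ) * ((n*A/Q : ℕ) : ℝ) + ((n*A%Q : ℕ) : ℝ) := by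
    exact_mod_cast congrArg (Nat.cast : ℕ → ℝ) (Nat.div_add_mod (n*A) Q).symm
  have e3 : ((n*A : ℕ) : ℝ) / Q = ((n*A/Q : ℕ) : ℝ) + ((n*A%Q : ℕ) : ℝ) / Q := by
    rw [e2, add_div, mul_div_cancel_left₀ _ (ne_of_gt hQ0)]
  have hnl : (n : ℝ) * lam = ((n * A / Q : ℕ) : ℝ) + v := by
    rw [hsplit, mul_add, e1, e3, hvdef]; ring
  have hkey : (n:ℝ) * (1 - lam) = (((n : ℤ) - ((n * A / Q : ℕ) : ℤ) : ℤ) : ℝ) + (-v) := by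
    rw [mul_sub, hnl, Int.cast_sub, Int.cast_natCast, Int.cast_natCast]; ring
  have hfv : Int.fract v = v := Int.fract_eq_self.2 ⟨hv0.le, hvlt1⟩
  have hne : Int.fract v ≠ 0 := by rw [hfv]; exact ne_of_gt hv0
  rw [hkey, Int.fract_intCast_add, Int.fract_neg hne, hfv]
  linarith

-- ### XF entry bounds

lemma XF_le_M (k : ℕ) : XF (q XF mm k) ≤ M XF mm k := by
  cases k with
  | zero => rw [M_zero, q_zero]; exact le_max_right _ _
  | succ j => rw [M_succ]; exact le_max_right _ _

lemma XF_le_N (k : ℕ) : XF (rr XF mm (k + 1)) ≤ N XF mm k := by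
  rw [N_def]; exact le_max_right _ _

lemma mm_lt_M0 : mm + 1 ≤ M XF mm 0 := by rw [M_zero]; exact le_max_left _ _

lemma M_lt_N (k : ℕ) : M XF mm k + 1 ≤ N XF mm k := by
  rw [N_def]; exact le_max_left _ _

lemma N_lt_M (k : ℕ) : N XF mm k + 1 ≤ M XF mm (k + 1) := by
  rw [M_succ]; exact le_max_left _ _

-- ### the two numbers

noncomputable def xval : ℝ := 1 - lamq XF mm

noncomputable def yval : ℝ := 1 - lamr XF mm

variable (g : ℝ → ℝ)

lemma cover_x (hXF : ∀ Q : ℕ, ∀ x : ℝ, (XF Q : ℝ) ≤ x → 2 * Q ≤ g x)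
    (k n : ℕ) (h1 : M XF mm k ≤ n) (h2 : n ≤ N XF mm k) :
    1 / g n < Int.fract ((n : ℝ) * xval XF mm) := by
  have hq := q_pos XF mm k
  have hq0 : (0:ℝ) < q XF mm k := by exact_mod_cast hq
  have hn1 : 1 ≤ n := le_trans (M_pos XF mm k) h1
  have hN0 : (0:ℝ) < N XF mm k := by exact_mod_cast N_pos XF mm k
  have hsucc : ((q XF mm (k+1) : ℕ) : ℝ) = 8 * (q XF mm k : ℝ)^2 * N XF mm k := by
    rw [q_succ]; push_cast; ring
  have hv : (n : ℝ) * tailq XF mm k ≤ 1 / (4 * q XF mm k) := by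
    have hb1 : (n:ℝ) ≤ (N XF mm k : ℝ) := by exact_mod_cast h2
    have hb2 := tailq_le XF mm k
    have hb3 : (0:ℝ) ≤ tailq XF mm k := (tailq_pos XF mm k).le
    calc (n : ℝ) * tailq XF mm k ≤ (N XF mm k : ℝ) * (2 / q XF mm (k+1)) := by
          apply mul_le_mul hb1 hb2 hb3 hN0.le
    _ = (N XF mm k : ℝ) * (2 / (8 * (q XF mm k : ℝ)^2 * N XF mm k)) := by rw [hsucc]
    _ = 1 / (4 * (q XF mm k : ℝ)^2) := by field_simp; ring
    _ ≤ 1 / (4 * q XF mm k) := by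
        apply one_div_le_one_div_of_le (by positivity)
        nlinarith [show (1:ℝ) ≤ (q XF mm k : ℝ) from by exact_mod_cast hq]
  have hcore := core_fract (q XF mm k) hq (lamq XF mm) (Aq XF mm k) (tailq XF mm k)
    (tailq_pos XF mm k) (lamq_split XF mm k) n hn1 hv
  have hentry : (2 : ℝ) * q XF mm k ≤ g n := by
    have : (XF (q XF mm k) : ℝ) ≤ n := by
      have := le_trans (XF_le_M XF mm k) h1
      exact_mod_cast this
    exact_mod_cast hXF (q XF mm k) n this
  have hg0 : (0:ℝ) < g n := lt_of_lt_of_le (by positivity) hentry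
  have : 1 / g n ≤ 1 / (2 * q XF mm k) :=
    one_div_le_one_div_of_le (by positivity) hentry
  have hlt : 1 / (2 * (q XF mm k : ℝ)) < 3 / (4 * q XF mm k) := by
    rw [div_lt_div_iff₀ (by positivity) (by positivity)]
    nlinarith
  calc 1 / g n ≤ 1 / (2 * (q XF mm k : ℝ)) := this
  _ < 3 / (4 * q XF mm k) := hlt
  _ ≤ _ := by
      have : xval XF mm = 1 - lamq XF mm := rfl
      rw [this]; exact hcore

lemma cover_y0 (n : ℕ) (hn1 : 1 ≤ n) (h2 : n ≤ M XF mm 0) (hg2 : (2:ℝ) ≤ g n) :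
    1 / g n < Int.fract ((n : ℝ) * yval XF mm) := by
  have hM0 : (0:ℝ) < M XF mm 0 := by exact_mod_cast M_pos XF mm 0
  have hsucc : ((rr XF mm 1 : ℕ) : ℝ) = 8 * (rr XF mm 0 : ℝ)^2 * M XF mm 0 := by
    rw [rr_succ]; push_cast; ring
  have hr0 : rr XF mm 0 = 1 := rr_zero XF mm
  have hv : (n : ℝ) * tailr XF mm 0 ≤ 1 / (4 * rr XF mm 0) := by
    have hb1 : (n:ℝ) ≤ (M XF mm 0 : ℝ) := by exact_mod_cast h2
    have hb2 := tailr_le XF mm 0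
    have hb3 : (0:ℝ) ≤ tailr XF mm 0 := (tailr_pos XF mm 0).le
    calc (n : ℝ) * tailr XF mm 0 ≤ (M XF mm 0 : ℝ) * (2 / rr XF mm 1) := by
          apply mul_le_mul hb1 hb2 hb3 hM0.le
    _ = (M XF mm 0 : ℝ) * (2 / (8 * (rr XF mm 0 : ℝ)^2 * M XF mm 0)) := by rw [hsucc]
    _ = 1 / (4 * (rr XF mm 0 : ℝ)^2) := by
        rw [hr0]; push_cast; field_simp; ring
    _ ≤ 1 / (4 * rr XF mm 0) := by rw [hr0]; norm_num
  have hcore := core_fract (rr XF mm 0) (rr_pos XF mm 0) (lamr XF mm) (Ar XF mm 0)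
    (tailr XF mm 0) (tailr_pos XF mm 0) (lamr_split XF mm 0) n hn1 hv
  rw [hr0] at hcore
  have hg0 : (0:ℝ) < g n := lt_of_lt_of_le (by positivity) hg2
  have h12 : 1 / g n ≤ 1 / 2 := by
    apply one_div_le_one_div_of_le (by positivity) hg2
  calc 1 / g n ≤ 1 / 2 := h12
  _ < 3 / (4 * 1) := by norm_num
  _ ≤ _ := by
      have heq : yval XF mm = 1 - lamr XF mm := rfl
      rw [heq]
      exact_mod_cast hcore

lemma cover_ysucc (hXF : ∀ Q : ℕ, ∀ x : ℝ, (XF Q : ℝ) ≤ x → 2 * Q ≤ g x)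
    (k n : ℕ) (h1 : N XF mm k ≤ n) (h2 : n ≤ M XF mm (k + 1)) :
    1 / g n < Int.fract ((n : ℝ) * yval XF mm) := by
  have hr := rr_pos XF mm (k+1)
  have hr0 : (0:ℝ) < rr XF mm (k+1) := by exact_mod_cast hr
  have hn1 : 1 ≤ n := le_trans (N_pos XF mm k) h1
  have hM0 : (0:ℝ) < M XF mm (k+1) := by exact_mod_cast M_pos XF mm (k+1)
  have hsucc : ((rr XF mm (k+2) : ℕ) : ℝ) = 8 * (rr XF mm (k+1) : ℝ)^2 * M XF mm (k+1) := by
    rw [rr_succ]; push_cast; ring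
  have hv : (n : ℝ) * tailr XF mm (k+1) ≤ 1 / (4 * rr XF mm (k+1)) := by
    have hb1 : (n:ℝ) ≤ (M XF mm (k+1) : ℝ) := by exact_mod_cast h2
    have hb2 := tailr_le XF mm (k+1)
    have hb3 : (0:ℝ) ≤ tailr XF mm (k+1) := (tailr_pos XF mm (k+1)).le
    calc (n : ℝ) * tailr XF mm (k+1) ≤ (M XF mm (k+1) : ℝ) * (2 / rr XF mm (k+2)) := by
          apply mul_le_mul hb1 hb2 hb3 hM0.le
    _ = (M XF mm (k+1) : ℝ) * (2 / (8 * (rr XF mm (k+1) : ℝ)^2 * M XF mm (k+1))) := by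
        rw [hsucc]
    _ = 1 / (4 * (rr XF mm (k+1) : ℝ)^2) := by field_simp; ring
    _ ≤ 1 / (4 * rr XF mm (k+1)) := by
        apply one_div_le_one_div_of_le (by positivity)
        nlinarith [show (1:ℝ) ≤ (rr XF mm (k+1) : ℝ) from by exact_mod_cast hr]
  have hcore := core_fract (rr XF mm (k+1)) hr (lamr XF mm) (Ar XF mm (k+1))
    (tailr XF mm (k+1)) (tailr_pos XF mm (k+1)) (lamr_split XF mm (k+1)) n hn1 hv
  have hentry : (2 : ℝ) * rr XF mm (k+1) ≤ g n := by
    have : (XF (rr XF mm (k+1)) : ℝ) ≤ n := by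
      have := le_trans (XF_le_N XF mm k) h1
      exact_mod_cast this
    exact_mod_cast hXF (rr XF mm (k+1)) n this
  have hg0 : (0:ℝ) < g n := lt_of_lt_of_le (by positivity) hentry
  have h12 : 1 / g n ≤ 1 / (2 * rr XF mm (k+1)) :=
    one_div_le_one_div_of_le (by positivity) hentry
  calc 1 / g n ≤ 1 / (2 * (rr XF mm (k+1) : ℝ)) := h12
  _ < 3 / (4 * rr XF mm (k+1)) := by
      rw [div_lt_div_iff₀ (by positivity) (by positivity)]
      nlinarith
  _ ≤ _ := by
      have heq : yval XF mm = 1 - lamr XF mm := rfl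
      rw [heq]; exact hcore

lemma coverage (hXF : ∀ Q : ℕ, ∀ x : ℝ, (XF Q : ℝ) ≤ x → 2 * Q ≤ g x)
    (hgm2 : ∀ n : ℕ, mm ≤ n → (2:ℝ) ≤ g n) (hmm : 1 ≤ mm) :
    ∀ n : ℕ, mm ≤ n →
      1 / g n < Int.fract ((n : ℝ) * xval XF mm) ∨
      1 / g n < Int.fract ((n : ℝ) * yval XF mm) := by
  have upto : ∀ k, ∀ n : ℕ, mm ≤ n → n ≤ M XF mm k →
      1 / g n < Int.fract ((n : ℝ) * xval XF mm) ∨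
      1 / g n < Int.fract ((n : ℝ) * yval XF mm) := by
    intro k
    induction k with
    | zero =>
      intro n hn h2
      exact Or.inr (cover_y0 XF mm g n (le_trans hmm hn) h2 (hgm2 n hn))
    | succ j ih =>
      intro n hn h2
      rcases le_or_gt n (M XF mm j) with h | h
      · exact ih n hn h
      · rcases le_or_gt n (N XF mm j) with h' | h'
        · exact Or.inl (cover_x XF mm g hXF j n (le_of_lt h) h')
        · exact Or.inr (cover_ysucc XF mm g hXF j n (le_of_lt h') h2)
  intro n hn
  have hM : n ≤ M XF mm n := by
    have : ∀ k, k ≤ M XF mm k := by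
      intro k
      induction k with
      | zero => exact Nat.zero_le _
      | succ j ih =>
        have := N_lt_M XF mm j
        have := M_lt_N XF mm j
        omega
    exact this n
  exact upto n n hn hM


-- ### rational independence

/-- purely real-variable helper: the integer combination is small. -/
lemma indep_zabs (Q R R' tq tr b c : ℝ) (z : ℝ)
    (hQ0 : 0 < Q) (hR0 : 0 < R) (hR'0 : 0 < R') (hRR' : R ≤ R')
    (htq0 : 0 < tq) (htr0 : 0 < tr)
    (htq' : tq ≤ 1 / (16 * Q^2 * R')) (htr' : tr ≤ 1 / (16 * R^2 * Q))
    (hbQ : |b| ≤ Q) (hcR : |c| ≤ R)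
    (hz : z = b * (Q * R * tq) + c * (Q * R * tr)) :
    |z| < 1 := by
  have hb1 : Q * R * tq ≤ 1 / (16 * Q) := by
    calc Q * R * tq ≤ Q * R * (1 / (16 * Q^2 * R')) :=
          mul_le_mul_of_nonneg_left htq' (by positivity)
    _ ≤ Q * R' * (1 / (16 * Q^2 * R')) := by
          apply mul_le_mul_of_nonneg_right _ (by positivity)
          nlinarith
    _ = 1 / (16 * Q) := by field_simp
  have hb2 : Q * R * tr ≤ 1 / (16 * R) := by
    calc Q * R * tr ≤ Q * R * (1 / (16 * R^2 * Q)) :=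
          mul_le_mul_of_nonneg_left htr' (by positivity)
    _ = 1 / (16 * R) := by field_simp
  have hQi : Q * (1 / (16 * Q)) = 1 / 16 := by field_simp
  have hRi : R * (1 / (16 * R)) = 1 / 16 := by field_simp
  calc |z| ≤ |b * (Q * R * tq)| + |c * (Q * R * tr)| := by rw [hz]; exact abs_add_le _ _
  _ = |b| * (Q * R * tq) + |c| * (Q * R * tr) := by
      rw [abs_mul b (Q * R * tq), abs_mul c (Q * R * tr),
        abs_of_pos (show (0:ℝ) < Q * R * tq by positivity),
        abs_of_pos (show (0:ℝ) < Q * R * tr by positivity)]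
  _ ≤ Q * (1 / (16 * Q)) + R * (1 / (16 * R)) := by
      have g1 : |b| * (Q * R * tq) ≤ Q * (1 / (16 * Q)) :=
        mul_le_mul hbQ hb1 (by positivity) hQ0.le
      have g2 : |c| * (Q * R * tr) ≤ R * (1 / (16 * R)) :=
        mul_le_mul hcR hb2 (by positivity) hR0.le
      linarith
  _ = 1 / 16 + 1 / 16 := by rw [hQi, hRi]
  _ < 1 := by norm_num

/-- purely real-variable helper: from the vanishing combination, `|c| < 1`. -/
lemma indep_small (Q R' tq tr b c : ℝ)
    (hQ0 : 0 < Q) (hQ1 : 1 ≤ Q) (hR'0 : 0 < R')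
    (htq0 : 0 < tq) (htr0 : 0 < tr)
    (htq' : tq ≤ 1 / (16 * Q^2 * R')) (htrge : 1 / R' ≤ tr)
    (hbQ : |b| ≤ Q) (hS : b * tq + c * tr = 0) :
    |c| < 1 := by
  have habs : |c| * tr = |b| * tq := by
    have h1 : c * tr = -(b * tq) := by linarith
    calc |c| * tr = |c * tr| := by rw [abs_mul, abs_of_pos htr0]
    _ = |b * tq| := by rw [h1, abs_neg]
    _ = |b| * tq := by rw [abs_mul, abs_of_pos htq0]
  have hrhs : |b| * tq ≤ Q * (1 / (16 * Q^2 * R')) :=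
    mul_le_mul hbQ htq' htq0.le hQ0.le
  have heq2 : Q * (1 / (16 * Q^2 * R')) = 1 / (16 * Q * R') := by field_simp
  have hlhs : |c| * (1 / R') ≤ |c| * tr :=
    mul_le_mul_of_nonneg_left htrge (abs_nonneg c)
  have hchain : |c| * (1 / R') ≤ 1 / (16 * Q * R') := by
    rw [← heq2]; exact le_trans hlhs (le_trans habs.le hrhs)
  by_contra hc
  push_neg at hc
  have h17 : 1 * (1 / R') ≤ |c| * (1 / R') :=
    mul_le_mul_of_nonneg_right hc (by positivity)
  have h16 : (1:ℝ) / R' ≤ 1 / (16 * Q * R') := by linarith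
  rw [div_le_div_iff₀ (by positivity) (by positivity)] at h16
  nlinarith [mul_pos hQ0 hR'0]

lemma indep (hXFge : ∀ Q : ℕ, 4 * Q ≤ XF Q)
    (B C A : ℤ) (h : (A : ℝ) = B * lamq XF mm + C * lamr XF mm) :
    B = 0 ∧ C = 0 := by
  obtain ⟨K, hKB, hKC⟩ : ∃ K : ℕ, B.natAbs ≤ K ∧ C.natAbs ≤ K :=
    ⟨B.natAbs + C.natAbs, by omega, by omega⟩
  have hQ0 : (0:ℝ) < (q XF mm K : ℝ) := by exact_mod_cast q_pos XF mm K
  have hR0 : (0:ℝ) < (rr XF mm K : ℝ) := by exact_mod_cast rr_pos XF mm K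
  have hQ'0 : (0:ℝ) < (q XF mm (K+1) : ℝ) := by exact_mod_cast q_pos XF mm (K+1)
  have hR'0 : (0:ℝ) < (rr XF mm (K+1) : ℝ) := by exact_mod_cast rr_pos XF mm (K+1)
  have hM0 : (0:ℝ) < (M XF mm K : ℝ) := by exact_mod_cast M_pos XF mm K
  have hN0 : (0:ℝ) < (N XF mm K : ℝ) := by exact_mod_cast N_pos XF mm K
  have f1 : (q XF mm (K+1) : ℝ) = 8 * (q XF mm K : ℝ)^2 * (N XF mm K : ℝ) := by
    rw [q_succ]; push_cast; ring
  have f2 : (rr XF mm (K+1) : ℝ) = 8 * (rr XF mm K : ℝ)^2 * (M XF mm K : ℝ) := by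
    rw [rr_succ]; push_cast; ring
  have f3 : 4 * (q XF mm K : ℝ) ≤ (M XF mm K : ℝ) := by
    have := le_trans (hXFge (q XF mm K)) (XF_le_M XF mm K)
    exact_mod_cast this
  have f4 : 4 * (rr XF mm (K+1) : ℝ) ≤ (N XF mm K : ℝ) := by
    have := le_trans (hXFge (rr XF mm (K+1))) (XF_le_N XF mm K)
    exact_mod_cast this
  have f5 : (rr XF mm K : ℝ) ≤ (rr XF mm (K+1) : ℝ) := by
    exact_mod_cast rr_mono XF mm (Nat.le_succ K)
  have htq0 : 0 < tailq XF mm K := tailq_pos XF mm K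
  have htr0 : 0 < tailr XF mm K := tailr_pos XF mm K
  have htqle : tailq XF mm K ≤ 2 / (q XF mm (K+1) : ℝ) := tailq_le XF mm K
  have htrle : tailr XF mm K ≤ 2 / (rr XF mm (K+1) : ℝ) := tailr_le XF mm K
  have htrge : 1 / (rr XF mm (K+1) : ℝ) ≤ tailr XF mm K := by
    have h0 : (1:ℝ) / (rr XF mm (0 + (K + 1))) ≤ ∑' j, (1:ℝ) / (rr XF mm (j + (K+1))) :=
      Summable.le_tsum (summable_tail_rr XF mm K) 0 (fun j _ => by positivity)
    simp only [Nat.zero_add] at h0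
    exact h0
  have hBQ : |(B:ℝ)| ≤ (q XF mm K : ℝ) := by
    have h1 : B.natAbs ≤ q XF mm K := by
      calc B.natAbs ≤ K := hKB
      _ ≤ 2 ^ K := (Nat.lt_two_pow_self (n := K)).le
      _ ≤ q XF mm K := two_pow_le_q XF mm K
    calc |(B:ℝ)| = ((B.natAbs : ℕ) : ℝ) := by rw [Nat.cast_natAbs, Int.cast_abs]
    _ ≤ _ := by exact_mod_cast h1
  have hCR : |(C:ℝ)| ≤ (rr XF mm K : ℝ) := by
    have h1 : C.natAbs ≤ rr XF mm K := by
      calc C.natAbs ≤ K := hKC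
      _ ≤ 2 ^ K := (Nat.lt_two_pow_self (n := K)).le
      _ ≤ rr XF mm K := two_pow_le_rr XF mm K
    calc |(C:ℝ)| = ((C.natAbs : ℕ) : ℝ) := by rw [Nat.cast_natAbs, Int.cast_abs]
    _ ≤ _ := by exact_mod_cast h1
  have h32q : 32 * (q XF mm K : ℝ)^2 * (rr XF mm (K+1) : ℝ) ≤ (q XF mm (K+1) : ℝ) := by
    nlinarith
  have htq' : tailq XF mm K ≤ 1 / (16 * (q XF mm K : ℝ)^2 * (rr XF mm (K+1) : ℝ)) := by
    calc tailq XF mm K ≤ 2 / (q XF mm (K+1) : ℝ) := htqle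
    _ ≤ 2 / (32 * (q XF mm K : ℝ)^2 * (rr XF mm (K+1) : ℝ)) :=
        div_le_div_of_nonneg_left (by norm_num) (by positivity) h32q
    _ = 1 / (16 * (q XF mm K : ℝ)^2 * (rr XF mm (K+1) : ℝ)) := by ring
  have h32r : 32 * (rr XF mm K : ℝ)^2 * (q XF mm K : ℝ) ≤ (rr XF mm (K+1) : ℝ) := by
    nlinarith
  have htr' : tailr XF mm K ≤ 1 / (16 * (rr XF mm K : ℝ)^2 * (q XF mm K : ℝ)) := by
    calc tailr XF mm K ≤ 2 / (rr XF mm (K+1) : ℝ) := htrle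
    _ ≤ 2 / (32 * (rr XF mm K : ℝ)^2 * (q XF mm K : ℝ)) :=
        div_le_div_of_nonneg_left (by norm_num) (by positivity) h32r
    _ = 1 / (16 * (rr XF mm K : ℝ)^2 * (q XF mm K : ℝ)) := by ring
  have hQlam : (q XF mm K : ℝ) * lamq XF mm = (Aq XF mm K : ℝ) + (q XF mm K : ℝ) * tailq XF mm K := by
    rw [lamq_split XF mm K, mul_add, mul_div_cancel₀]
    exact ne_of_gt hQ0
  have hRlam : (rr XF mm K : ℝ) * lamr XF mm = (Ar XF mm K : ℝ) + (rr XF mm K : ℝ) * tailr XF mm K := by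
    rw [lamr_split XF mm K, mul_add, mul_div_cancel₀]
    exact ne_of_gt hR0
  have hz : ((A * (q XF mm K) * (rr XF mm K) - B * (rr XF mm K) * (Aq XF mm K)
      - C * (q XF mm K) * (Ar XF mm K) : ℤ) : ℝ) =
      (B:ℝ) * ((q XF mm K : ℝ) * (rr XF mm K : ℝ) * tailq XF mm K)
      + (C:ℝ) * ((q XF mm K : ℝ) * (rr XF mm K : ℝ) * tailr XF mm K) := by
    push_cast
    linear_combination ((q XF mm K : ℝ) * (rr XF mm K : ℝ)) * h
      + ((B:ℝ) * (rr XF mm K : ℝ)) * hQlam + ((C:ℝ) * (q XF mm K : ℝ)) * hRlam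
  have hzabs : |((A * (q XF mm K) * (rr XF mm K) - B * (rr XF mm K) * (Aq XF mm K)
      - C * (q XF mm K) * (Ar XF mm K) : ℤ) : ℝ)| < 1 :=
    indep_zabs (q XF mm K : ℝ) (rr XF mm K : ℝ) (rr XF mm (K+1) : ℝ)
      (tailq XF mm K) (tailr XF mm K) (B:ℝ) (C:ℝ) _
      hQ0 hR0 hR'0 f5 htq0 htr0 htq' htr' hBQ hCR hz
  have hz0 : (A * (q XF mm K) * (rr XF mm K) - B * (rr XF mm K) * (Aq XF mm K)
      - C * (q XF mm K) * (Ar XF mm K) : ℤ) = 0 := by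
    have h1 : |(A * (q XF mm K) * (rr XF mm K) - B * (rr XF mm K) * (Aq XF mm K)
        - C * (q XF mm K) * (Ar XF mm K) : ℤ)| < 1 := by
      have h2 := hzabs
      rw [← Int.cast_abs] at h2
      exact_mod_cast h2
    exact Int.abs_lt_one_iff.mp h1
  have hS : (B:ℝ) * tailq XF mm K + (C:ℝ) * tailr XF mm K = 0 := by
    have h1 : (0:ℝ) = (B:ℝ) * ((q XF mm K : ℝ) * (rr XF mm K : ℝ) * tailq XF mm K)
        + (C:ℝ) * ((q XF mm K : ℝ) * (rr XF mm K : ℝ) * tailr XF mm K) := by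
      rw [← hz, hz0]; norm_num
    have h2 : ((q XF mm K : ℝ) * (rr XF mm K : ℝ))
        * ((B:ℝ) * tailq XF mm K + (C:ℝ) * tailr XF mm K) = 0 := by
      linear_combination -h1
    rcases mul_eq_zero.1 h2 with h3 | h3
    · exact absurd h3 (ne_of_gt (by positivity))
    · exact h3
  have hCsmall : |(C:ℝ)| < 1 :=
    indep_small (q XF mm K : ℝ) (rr XF mm (K+1) : ℝ) (tailq XF mm K) (tailr XF mm K)
      (B:ℝ) (C:ℝ) hQ0 (by exact_mod_cast q_pos XF mm K) hR'0 htq0 htr0 htq' htrge hBQ hS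
  have hC : C = 0 := by
    have h1 : |C| < 1 := by
      rw [← Int.cast_abs] at hCsmall
      exact_mod_cast hCsmall
    exact Int.abs_lt_one_iff.mp h1
  have hB : B = 0 := by
    rw [hC] at hS
    push_cast at hS
    have h1 : (B:ℝ) * tailq XF mm K = 0 := by linarith
    rcases mul_eq_zero.1 h1 with h3 | h3
    · exact_mod_cast h3
    · exact absurd h3 (ne_of_gt htq0)
  exact ⟨hB, hC⟩

end Stmt12Aux


/-- Example-Proposition 6.12 (`prop: optimum diophantine approximation`): the approximation
part of Theorem 6.1 is optimal in dimension 2. The norm on `Fin 2 → ℝ` is the maximum norm. -/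
theorem stmt_12 (g : ℝ → ℝ) (hgmono : MonotoneOn g (Set.Ici 0))
    (hgnonneg : ∀ x : ℝ, 0 ≤ x → 0 ≤ g x)
    (hgtop : Filter.Tendsto g Filter.atTop Filter.atTop)
    (m : ℕ) (hm : 0 < m) (hgm : ∀ x : ℝ, (m : ℝ) ≤ x → 2 ≤ g x) :
    ∃ r : Fin 2 → ℝ,
      (∀ q₀ q₁ q₂ : ℚ, (q₀ : ℝ) + (q₁ : ℝ) * r 0 + (q₂ : ℝ) * r 1 = 0 →
        q₀ = 0 ∧ q₁ = 0 ∧ q₂ = 0) ∧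
      ∀ n : ℕ, m ≤ n → ∀ vn : Fin 2 → ℝ, (∀ i, ∃ z : ℤ, (n : ℝ) * vn i = (z : ℝ)) →
        (1 / ((n : ℝ) * g n) < ‖r - vn‖ ∨
          1 < ‖(‖r - vn‖)⁻¹ • (r - vn) - ![1, 1]‖) := by
  classical
  -- choose the threshold function XF
  have hex : ∀ Q : ℕ, ∃ NQ : ℕ, 4 * Q ≤ NQ ∧ ∀ x : ℝ, (NQ : ℝ) ≤ x → 2 * (Q:ℝ) ≤ g x := by
    intro Q
    have h1 : ∀ᶠ x in Filter.atTop, 2 * (Q:ℝ) ≤ g x :=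
      Filter.tendsto_atTop.mp hgtop (2 * Q)
    obtain ⟨a, ha⟩ := Filter.eventually_atTop.mp h1
    refine ⟨max (4 * Q) ⌈a⌉₊, le_max_left _ _, ?_⟩
    intro x hx
    apply ha
    calc a ≤ (⌈a⌉₊ : ℝ) := Nat.le_ceil a
    _ ≤ ((max (4 * Q) ⌈a⌉₊ : ℕ) : ℝ) := by exact_mod_cast le_max_right _ _
    _ ≤ x := hx
  choose XF hXF1 hXF2 using hex
  set x0 : ℝ := Stmt12Aux.xval XF m with hx0def
  set y0 : ℝ := Stmt12Aux.yval XF m with hy0def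
  refine ⟨![x0, y0], ?_, ?_⟩
  · -- rational independence
    intro q0 q1 q2 heq
    simp only [Matrix.cons_val_zero, Matrix.cons_val_one, Matrix.head_cons] at heq
    rw [hx0def, hy0def, Stmt12Aux.xval, Stmt12Aux.yval] at heq
    have hsum : ((q0 + q1 + q2 : ℚ) : ℝ) =
        (q1 : ℝ) * Stmt12Aux.lamq XF m + (q2 : ℝ) * Stmt12Aux.lamr XF m := by
      push_cast
      linear_combination heq
    have e0 : (((q0 + q1 + q2).num : ℤ) : ℝ) =
        ((q0 + q1 + q2 : ℚ) : ℝ) * (((q0 + q1 + q2).den : ℕ) : ℝ) := by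
      rw [Rat.cast_def]
      field_simp
    have e1 : ((q1.num : ℤ) : ℝ) = (q1 : ℝ) * ((q1.den : ℕ) : ℝ) := by
      rw [Rat.cast_def]; field_simp
    have e2 : ((q2.num : ℤ) : ℝ) = (q2 : ℝ) * ((q2.den : ℕ) : ℝ) := by
      rw [Rat.cast_def]; field_simp
    set d0 : ℤ := ((q0 + q1 + q2).den : ℤ) with hd0
    set d1 : ℤ := (q1.den : ℤ) with hd1
    set d2 : ℤ := (q2.den : ℤ) with hd2
    have hABC : (((q0 + q1 + q2).num * (d1 * d2) : ℤ) : ℝ) =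
        ((q1.num * (d0 * d2) : ℤ) : ℝ) * Stmt12Aux.lamq XF m
        + ((q2.num * (d0 * d1) : ℤ) : ℝ) * Stmt12Aux.lamr XF m := by
      push_cast [hd0, hd1, hd2]
      linear_combination ((q1.den : ℝ) * (q2.den : ℝ)) * e0
        - (((q0 + q1 + q2).den : ℝ) * (q2.den : ℝ) * Stmt12Aux.lamq XF m) * e1
        - (((q0 + q1 + q2).den : ℝ) * (q1.den : ℝ) * Stmt12Aux.lamr XF m) * e2
        + (((q0 + q1 + q2).den : ℝ) * (q1.den : ℝ) * (q2.den : ℝ)) * hsum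
    obtain ⟨hB, hC⟩ := Stmt12Aux.indep XF m hXF1
      (q1.num * (d0 * d2)) (q2.num * (d0 * d1)) ((q0 + q1 + q2).num * (d1 * d2)) hABC
    have hd0ne : d0 ≠ 0 := by
      rw [hd0]; exact_mod_cast (q0 + q1 + q2).den_nz
    have hd1ne : d1 ≠ 0 := by rw [hd1]; exact_mod_cast q1.den_nz
    have hd2ne : d2 ≠ 0 := by rw [hd2]; exact_mod_cast q2.den_nz
    have hq1 : q1 = 0 := by
      rcases mul_eq_zero.1 hB with h | h
      · exact Rat.num_eq_zero.mp h
      · exact absurd h (mul_ne_zero hd0ne hd2ne)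
    have hq2 : q2 = 0 := by
      rcases mul_eq_zero.1 hC with h | h
      · exact Rat.num_eq_zero.mp h
      · exact absurd h (mul_ne_zero hd0ne hd1ne)
    have hq0 : q0 = 0 := by
      rw [hq1, hq2] at heq
      push_cast at heq
      have : (q0 : ℝ) = 0 := by linarith
      exact_mod_cast this
    exact ⟨hq0, hq1, hq2⟩
  · -- approximation property
    intro n hn vn hvn
    have hn1 : 1 ≤ n := le_trans hm hn
    have hn0 : (0:ℝ) < n := by exact_mod_cast hn1
    have hgn2 : (2:ℝ) ≤ g n := hgm n (by exact_mod_cast hn)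
    have hgn0 : (0:ℝ) < g n := lt_of_lt_of_le (by norm_num) hgn2
    set r : Fin 2 → ℝ := ![x0, y0] with hrdef
    by_cases hcase : ∀ i, 0 ≤ r i - vn i
    · left
      -- one coordinate has large fractional part
      have hcov := Stmt12Aux.coverage XF m g hXF2
        (fun k hk => hgm k (by exact_mod_cast hk)) hm n hn
      have key : ∀ i : Fin 2, 1 / g n < Int.fract ((n:ℝ) * r i) →
          1 / ((n : ℝ) * g n) < ‖r - vn‖ := by
        intro i hfr
        obtain ⟨z, hz⟩ := hvn i
        have hvr : 0 ≤ r i - vn i := hcase i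
        have hzle : (z : ℝ) ≤ (n:ℝ) * r i := by
          rw [← hz]
          have : vn i ≤ r i := by linarith
          nlinarith
        have hfloor : (z : ℝ) ≤ (⌊(n:ℝ) * r i⌋ : ℤ) := by
          exact_mod_cast Int.le_floor.mpr hzle
        have hfract : Int.fract ((n:ℝ) * r i) ≤ (n:ℝ) * r i - z := by
          rw [Int.fract]
          linarith
        have hri : r i - vn i = ((n:ℝ) * r i - z) / n := by
          rw [← hz]
          field_simp
        have h5 : 1 / g n < (n:ℝ) * r i - z := lt_of_lt_of_le hfr hfract
        have h2 : 1 / ((n:ℝ) * g n) < r i - vn i := by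
          rw [hri, lt_div_iff₀ hn0]
          have h6 : 1 / ((n:ℝ) * g n) * n = 1 / g n := by
            field_simp
          rw [h6]
          exact h5
        calc 1 / ((n:ℝ) * g n) < r i - vn i := h2
        _ = |r i - vn i| := (abs_of_nonneg hvr).symm
        _ = ‖(r - vn) i‖ := by rw [Pi.sub_apply, Real.norm_eq_abs]
        _ ≤ ‖r - vn‖ := norm_le_pi_norm (r - vn) i
      rcases hcov with hx | hy
      · apply key 0
        have : r 0 = x0 := by rw [hrdef]; simp
        rw [this, hx0def]
        exact hx
      · apply key 1
        have : r 1 = y0 := by rw [hrdef]; simp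
        rw [this, hy0def]
        exact hy
    · right
      set nv : ℝ := ‖r - vn‖ with hnv
      push_neg at hcase
      obtain ⟨i, hi⟩ := hcase
      have hi' : r i - vn i < 0 := by linarith
      have hwne : r - vn ≠ 0 := by
        intro h0
        have : (r - vn) i = 0 := by rw [h0]; rfl
        rw [Pi.sub_apply] at this
        linarith
      have hnorm0 : 0 < nv := norm_pos_iff.mpr hwne
      have hui : nv⁻¹ * ((r - vn) i) < 0 := by
        apply mul_neg_of_pos_of_neg (inv_pos.mpr hnorm0)
        rw [Pi.sub_apply]; exact hi'
      have hei : (![1, 1] : Fin 2 → ℝ) i = 1 := by fin_cases i <;> simp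
      calc (1:ℝ) < 1 - nv⁻¹ * ((r - vn) i) := by linarith
      _ ≤ |nv⁻¹ * ((r - vn) i) - 1| := by
          rw [abs_sub_comm]
          exact le_abs_self _
      _ = ‖((nv⁻¹ • (r - vn) - ![1, 1] : Fin 2 → ℝ)) i‖ := by
          simp only [Pi.sub_apply, Pi.smul_apply, smul_eq_mul, hei, Real.norm_eq_abs]
      _ ≤ ‖(nv⁻¹ • (r - vn) - ![1, 1] : Fin 2 → ℝ)‖ :=
          norm_le_pi_norm ((nv⁻¹ • (r - vn) - ![1, 1] : Fin 2 → ℝ)) i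
end

section
/- Let (dᵢ)_{i≥0} be a sequence of positive integers with d₀ = 3, dᵢ dividing d_{i+1}, and d_{i+1} > 2·dᵢ² for every i ≥ 0. Then the series Σ_{k≥0} 1/d_{4k} and Σ_{k≥0} 1/d_{4k+2} converge, and setting r₁ := 1 − Σ_{k≥0} 1/d_{4k} and r₂ := 1 − Σ_{k≥0} 1/d_{4k+2}, the real numbers 1, r₁, r₂ are linearly independent over ℚ; that is, if a, b, c are integers with a + b·r₁ + c·r₂ = 0, then a = b = c = 0. -/
/-- Part (1) of Example-Proposition 6.12: for a sequence `dᵢ` with `d₀ = 3`, `dᵢ ∣ d_{i+1}`,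
and `d_{i+1} > 2dᵢ²`, the series `Σ 1/d_{4k}` and `Σ 1/d_{4k+2}` converge, and with
`r₁ := 1 − Σ 1/d_{4k}` and `r₂ := 1 − Σ 1/d_{4k+2}` the reals `1, r₁, r₂` are
linearly independent over `ℚ`. -/
theorem stmt_13 (d : ℕ → ℕ) (hpos : ∀ i, 0 < d i) (hd0 : d 0 = 3)
    (hdvd : ∀ i, d i ∣ d (i + 1)) (hgrow : ∀ i, 2 * (d i) ^ 2 < d (i + 1)) :
    (Summable fun k : ℕ => (1 : ℝ) / (d (4 * k) : ℝ)) ∧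
    (Summable fun k : ℕ => (1 : ℝ) / (d (4 * k + 2) : ℝ)) ∧
    (∀ a b c : ℤ,
      (a : ℝ) + (b : ℝ) * (1 - ∑' k : ℕ, (1 : ℝ) / (d (4 * k) : ℝ)) +
        (c : ℝ) * (1 - ∑' k : ℕ, (1 : ℝ) / (d (4 * k + 2) : ℝ)) = 0 →
      a = 0 ∧ b = 0 ∧ c = 0) := by
  have h3 : ∀ n, 3 ≤ d n := by
    intro n
    induction n with
    | zero => omega
    | succ n ih => have := hgrow n; nlinarith
  have h6 : ∀ n, 6 * d n < d (n + 1) := fun n => by nlinarith [hgrow n, h3 n]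
  have hmono : ∀ i j, i ≤ j → d i ≤ d j := by
    intro i j hij
    induction j, hij using Nat.le_induction with
    | base => exact le_rfl
    | succ j hj ih => have := h6 j; omega
  have hdvd2 : ∀ i j, i ≤ j → d i ∣ d j := by
    intro i j hij
    induction j, hij using Nat.le_induction with
    | base => exact dvd_rfl
    | succ j hj ih => exact ih.trans (hdvd j)
  have hpow2 : ∀ n k, 2 ^ k * d n ≤ d (n + k) := by
    intro n k
    induction k with
    | zero => simp
    | succ k ih =>
      have := h6 (n + k)
      calc 2 ^ (k+1) * d n = 2 * (2^k * d n) := by ring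
        _ ≤ 2 * d (n + k) := by omega
        _ ≤ d (n + k + 1) := by omega
  have hlin : ∀ n, n + 3 ≤ d n := by
    intro n
    induction n with
    | zero => omega
    | succ n ih => have := h6 n; omega
  have hdpos : ∀ n, (0:ℝ) < (d n : ℝ) := fun n => by exact_mod_cast hpos n
  have hbound : ∀ m k : ℕ, (1 : ℝ) / (d (4 * k + m) : ℝ) ≤ (1 / (d m : ℝ)) * (1/2) ^ k := by
    intro m k
    have h1 : 2 ^ k * d m ≤ d (4 * k + m) := by
      calc 2 ^ k * d m ≤ 2 ^ (4*k) * d m :=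
            Nat.mul_le_mul_right _ (Nat.pow_le_pow_right (by norm_num) (by omega))
        _ ≤ d (m + 4 * k) := hpow2 m (4*k)
        _ = d (4 * k + m) := by rw [Nat.add_comm]
    calc (1 : ℝ) / (d (4 * k + m) : ℝ) ≤ 1 / ((2:ℝ) ^ k * (d m : ℝ)) :=
          one_div_le_one_div_of_le (by have := hdpos m; positivity) (by exact_mod_cast h1)
      _ = (1 / (d m : ℝ)) * (1/2) ^ k := by
          rw [mul_comm, one_div_pow, one_div_mul_one_div, mul_comm]
  have hsum : ∀ m, Summable (fun k : ℕ => (1 : ℝ) / (d (4 * k + m) : ℝ)) :=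
    fun m => Summable.of_nonneg_of_le (fun k => by positivity) (hbound m)
      ((summable_geometric_two).mul_left _)
  have htail : ∀ m, ∑' k : ℕ, (1 : ℝ) / (d (4 * k + m) : ℝ) ≤ 2 / (d m : ℝ) := by
    intro m
    calc ∑' k : ℕ, (1 : ℝ) / (d (4 * k + m) : ℝ)
        ≤ ∑' k : ℕ, (1 / (d m : ℝ)) * (1/2) ^ k :=
          Summable.tsum_le_tsum (hbound m) (hsum m) ((summable_geometric_two).mul_left _)
      _ = (1 / (d m : ℝ)) * 2 := by rw [tsum_mul_left, tsum_geometric_two]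
      _ = 2 / (d m : ℝ) := by ring
  have htnn : ∀ m, (0:ℝ) ≤ ∑' k : ℕ, (1 : ℝ) / (d (4 * k + m) : ℝ) :=
    fun m => tsum_nonneg (fun k => by positivity)
  have hsum0 : Summable (fun k : ℕ => (1 : ℝ) / (d (4 * k) : ℝ)) := by
    simpa using hsum 0
  refine ⟨hsum0, hsum 2, ?_⟩
  intro a b c hab
  -- split the series at N+1
  have hsplit : ∀ N : ℕ,
      (a:ℝ) + b + c =
        (b * (∑ i ∈ Finset.range (N+1), (1:ℝ)/(d (4*i):ℝ)) +
         c * (∑ i ∈ Finset.range (N+1), (1:ℝ)/(d (4*i+2):ℝ))) +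
        (b * (∑' k : ℕ, (1:ℝ)/(d (4*k+(4*N+4)):ℝ)) +
         c * (∑' k : ℕ, (1:ℝ)/(d (4*k+(4*N+6)):ℝ))) := by
    intro N
    have h1 := (Summable.sum_add_tsum_nat_add (N+1) hsum0).symm
    have h2 := (Summable.sum_add_tsum_nat_add (N+1) (hsum 2)).symm
    have e1 : (∑' k : ℕ, (1:ℝ)/(d (4*(k+(N+1))):ℝ)) = ∑' k : ℕ, (1:ℝ)/(d (4*k+(4*N+4)):ℝ) :=
      tsum_congr (fun k => by congr 2; ring)
    have e2 : (∑' k : ℕ, (1:ℝ)/(d (4*(k+(N+1))+2):ℝ)) = ∑' k : ℕ, (1:ℝ)/(d (4*k+(4*N+6)):ℝ) :=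
      tsum_congr (fun k => by congr 2; ring)
    rw [e1] at h1
    rw [e2] at h2
    have hm : (a:ℝ) + b + c =
        b * (∑' k : ℕ, (1:ℝ)/(d (4*k):ℝ)) + c * (∑' k : ℕ, (1:ℝ)/(d (4*k+2):ℝ)) := by
      linarith [hab]
    rw [hm, h1, h2]
    ring
  -- integrality
  have hint : ∀ N : ℕ, ∃ z : ℤ, (z:ℝ) = (d (4*N+2) : ℝ) *
      (((a:ℝ) + b + c) -
        (b * (∑ i ∈ Finset.range (N+1), (1:ℝ)/(d (4*i):ℝ)) +
         c * (∑ i ∈ Finset.range (N+1), (1:ℝ)/(d (4*i+2):ℝ)))) := by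
    intro N
    have hterm : ∀ m, m ≤ 4*N+2 → (d (4*N+2):ℝ) * ((1:ℝ)/(d m:ℝ)) = ((d (4*N+2) / d m : ℕ) : ℝ) := by
      intro m hm
      obtain ⟨q, hq⟩ := hdvd2 m (4*N+2) hm
      rw [hq, Nat.mul_div_cancel_left _ (hpos m)]
      push_cast
      rw [mul_comm, one_div, inv_mul_cancel_left₀ (ne_of_gt (hdpos m))]
    have hA : (d (4*N+2):ℝ) * (∑ i ∈ Finset.range (N+1), (1:ℝ)/(d (4*i):ℝ)) =
        ∑ i ∈ Finset.range (N+1), ((d (4*N+2) / d (4*i) : ℕ) : ℝ) := by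
      rw [Finset.mul_sum]
      exact Finset.sum_congr rfl (fun i hi => hterm (4*i) (by simp at hi; omega))
    have hB : (d (4*N+2):ℝ) * (∑ i ∈ Finset.range (N+1), (1:ℝ)/(d (4*i+2):ℝ)) =
        ∑ i ∈ Finset.range (N+1), ((d (4*N+2) / d (4*i+2) : ℕ) : ℝ) := by
      rw [Finset.mul_sum]
      exact Finset.sum_congr rfl (fun i hi => hterm (4*i+2) (by simp at hi; omega))
    refine ⟨(a + b + c) * (d (4*N+2) : ℤ) -
      (b * ∑ i ∈ Finset.range (N+1), ((d (4*N+2) / d (4*i) : ℕ) : ℤ) +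
       c * ∑ i ∈ Finset.range (N+1), ((d (4*N+2) / d (4*i+2) : ℕ) : ℤ)), ?_⟩
    simp only [Int.cast_sub, Int.cast_add, Int.cast_mul, Int.cast_sum, Int.cast_natCast]
    linear_combination (b:ℝ) * hA + (c:ℝ) * hB
  -- the integer is eventually zero
  have hEzero : ∀ N : ℕ, 2 * (b.natAbs + c.natAbs) < d (4*N+3) →
      (a:ℝ) + b + c =
        b * (∑ i ∈ Finset.range (N+1), (1:ℝ)/(d (4*i):ℝ)) +
        c * (∑ i ∈ Finset.range (N+1), (1:ℝ)/(d (4*i+2):ℝ)) := by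
    intro N hN
    obtain ⟨z, hz⟩ := hint N
    have hT1 := htail (4*N+4)
    have hT2 := htail (4*N+6)
    have hT1n := htnn (4*N+4)
    have hT2n := htnn (4*N+6)
    set T1 := ∑' k : ℕ, (1:ℝ)/(d (4*k+(4*N+4)):ℝ) with hT1def
    set T2 := ∑' k : ℕ, (1:ℝ)/(d (4*k+(4*N+6)):ℝ) with hT2def
    have hmP : ((a:ℝ) + b + c) -
        (b * (∑ i ∈ Finset.range (N+1), (1:ℝ)/(d (4*i):ℝ)) +
         c * (∑ i ∈ Finset.range (N+1), (1:ℝ)/(d (4*i+2):ℝ))) =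
        b * T1 + c * T2 := by
      have := hsplit N
      linarith [this]
    have key : 2 * (b.natAbs + c.natAbs) * d (4*N+2) < d (4*N+4) := by
      have hg := hgrow (4*N+3)
      have hmn := hmono (4*N+2) (4*N+3) (by omega)
      have hp := hpos (4*N+3)
      nlinarith
    have keyR : 2 * ((b.natAbs : ℝ) + (c.natAbs : ℝ)) * (d (4*N+2):ℝ) < (d (4*N+4):ℝ) := by
      exact_mod_cast key
    have habsT : |(b:ℝ) * T1 + (c:ℝ) * T2| ≤ (b.natAbs : ℝ) * T1 + (c.natAbs : ℝ) * T2 := by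
      refine (abs_add_le _ _).trans ?_
      rw [abs_mul, abs_mul, abs_of_nonneg hT1n, abs_of_nonneg hT2n,
        Nat.cast_natAbs, Nat.cast_natAbs]
      push_cast
      exact le_rfl
    have hT2' : T2 ≤ 2 / (d (4*N+4):ℝ) := by
      refine hT2.trans ?_
      have := hmono (4*N+4) (4*N+6) (by omega)
      gcongr
      all_goals first | exact hdpos _ | exact_mod_cast this
    have habs : |(z:ℝ)| < 1 := by
      rw [hz, hmP, abs_mul, abs_of_nonneg (le_of_lt (hdpos (4*N+2)))]
      calc (d (4*N+2):ℝ) * |(b:ℝ) * T1 + (c:ℝ) * T2|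
          ≤ (d (4*N+2):ℝ) * ((b.natAbs : ℝ) * T1 + (c.natAbs : ℝ) * T2) := by
            exact mul_le_mul_of_nonneg_left habsT (le_of_lt (hdpos _))
        _ ≤ (d (4*N+2):ℝ) * ((b.natAbs : ℝ) * (2/(d (4*N+4):ℝ)) + (c.natAbs : ℝ) * (2/(d (4*N+4):ℝ))) := by
            gcongr
        _ = (2 * ((b.natAbs : ℝ) + (c.natAbs : ℝ)) * (d (4*N+2):ℝ)) / (d (4*N+4):ℝ) := by
            ring
        _ < 1 := by
            rw [div_lt_one (hdpos (4*N+4))]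
            exact keyR
    have hz0 : z = 0 := by
      have : |z| < 1 := by
        have h' : ((|z| : ℤ) : ℝ) < 1 := by push_cast; exact habs
        exact_mod_cast h'
      have h2 := abs_lt.mp this
      omega
    rw [hz0, Int.cast_zero] at hz
    have hD2ne : (d (4*N+2):ℝ) ≠ 0 := ne_of_gt (hdpos _)
    have := (mul_eq_zero.mp hz.symm).resolve_left hD2ne
    linarith [this]
  -- conclude
  set N0 := b.natAbs + c.natAbs with hN0
  have h1 := hEzero N0 (by have := hlin (4*N0+3); omega)
  have h2 := hEzero (N0+1) (by have := hlin (4*(N0+1)+3); omega)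
  rw [Finset.sum_range_succ (fun i => (1:ℝ)/(d (4*i):ℝ)) (N0+1), Finset.sum_range_succ (fun i => (1:ℝ)/(d (4*i+2):ℝ)) (N0+1)] at h2
  have hkey : (b:ℝ) * ((1:ℝ)/(d (4*(N0+1)):ℝ)) + (c:ℝ) * ((1:ℝ)/(d (4*(N0+1)+2):ℝ)) = 0 := by
    linear_combination h1 - h2
  have hd1ne : (d (4*(N0+1)):ℝ) ≠ 0 := ne_of_gt (hdpos _)
  have hd2ne : (d (4*(N0+1)+2):ℝ) ≠ 0 := ne_of_gt (hdpos _)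
  have hku : (b:ℝ) * (d (4*(N0+1)+2):ℝ) + (c:ℝ) * (d (4*(N0+1)):ℝ) = 0 := by
    have := congrArg (fun x => x * ((d (4*(N0+1)):ℝ) * (d (4*(N0+1)+2):ℝ))) hkey
    simp only [zero_mul] at this
    field_simp at this
    linarith [this]
  have hZ : b * (d (4*(N0+1)+2):ℤ) + c * (d (4*(N0+1)):ℤ) = 0 := by exact_mod_cast hku
  have hD : 2 * (d (4*(N0+1)))^2 < d (4*(N0+1)+2) := by
    have hg := hgrow (4*(N0+1)+1)
    have hmn := hmono (4*(N0+1)) (4*(N0+1)+1) (by omega)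
    nlinarith
  have hcD1 : c.natAbs < d (4*(N0+1)) := by
    have := hlin (4*(N0+1))
    omega
  have hb : b = 0 := by
    by_contra hb
    have h1b : 1 ≤ b.natAbs := Int.natAbs_pos.mpr hb
    have heq : b.natAbs * d (4*(N0+1)+2) = c.natAbs * d (4*(N0+1)) := by
      have e : b * (d (4*(N0+1)+2):ℤ) = (-c) * (d (4*(N0+1)):ℤ) := by linarith [hZ]
      have := congrArg Int.natAbs e
      simpa [Int.natAbs_mul] using this
    have hle : d (4*(N0+1)+2) ≤ b.natAbs * d (4*(N0+1)+2) :=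
      Nat.le_mul_of_pos_left _ h1b
    have hlt : c.natAbs * d (4*(N0+1)) < d (4*(N0+1)) * d (4*(N0+1)) := by
      exact Nat.mul_lt_mul_of_lt_of_le hcD1 le_rfl (hpos _)
    nlinarith [hD, heq, hle, hlt]
  have hc : c = 0 := by
    rw [hb] at hZ
    simp only [zero_mul, zero_add] at hZ
    have hD1ne : (d (4*(N0+1)):ℤ) ≠ 0 := by exact_mod_cast (hpos (4*(N0+1))).ne'
    exact (mul_eq_zero.mp hZ).resolve_right hD1ne
  refine ⟨?_, hb, hc⟩
  rw [hb, hc] at hab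
  simp only [Int.cast_zero, zero_mul, add_zero] at hab
  exact_mod_cast hab
end

section
/- Let g : [0,∞) → [0,∞) be a monotone nondecreasing function and m a positive integer with g(x) ≥ 2 for all x ≥ m. Let (dᵢ)_{i≥0} be a sequence of positive integers with d₀ = 3, dᵢ dividing d_{i+1}, g(d_{i+1}) > 2·dᵢ, and d_{i+1} > 2·dᵢ² for every i ≥ 0. Set r₁ := 1 − Σ_{k≥0} 1/d_{4k} and r₂ := 1 − Σ_{k≥0} 1/d_{4k+2} (both series converge). Then for every integer n ≥ m one has max({n·r₁}, {n·r₂}) > 1/g(n), where {x} denotes the fractional part of x. -/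
section Aux
variable {d : ℕ → ℕ}

private lemma d_ge3 (hd0 : d 0 = 3) (hpos : ∀ i, 0 < d i)
    (hgrow : ∀ i, 2 * (d i) ^ 2 < d (i + 1)) : ∀ i, 3 ≤ d i := by
  intro i
  induction i with
  | zero => omega
  | succ k ih =>
    have h := hgrow k
    nlinarith

private lemma d_step (hd0 : d 0 = 3) (hpos : ∀ i, 0 < d i)
    (hgrow : ∀ i, 2 * (d i) ^ 2 < d (i + 1)) : ∀ i, 2 * d i ≤ d (i + 1) := by
  intro i
  have h := hgrow i
  have h2 := hpos i
  nlinarith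

private lemma d_mono (hd0 : d 0 = 3) (hpos : ∀ i, 0 < d i)
    (hgrow : ∀ i, 2 * (d i) ^ 2 < d (i + 1)) : StrictMono d := by
  apply strictMono_nat_of_lt_succ
  intro i
  have := d_step hd0 hpos hgrow i
  have := hpos i
  omega

private lemma d_dvd_le (hdvd : ∀ i, d i ∣ d (i + 1)) :
    ∀ a b : ℕ, a ≤ b → d a ∣ d b := by
  intro a b hab
  induction b, hab using Nat.le_induction with
  | base => rfl
  | succ b hab ih => exact ih.trans (hdvd b)

private lemma d_pow2 (hd0 : d 0 = 3) (hpos : ∀ i, 0 < d i)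
    (hgrow : ∀ i, 2 * (d i) ^ 2 < d (i + 1)) :
    ∀ M k : ℕ, 2 ^ k * d M ≤ d (M + 4 * k) := by
  intro M k
  induction k with
  | zero => simp
  | succ k ih =>
    have h1 := d_step hd0 hpos hgrow (M + 4 * k + 3)
    have h2 : d (M + 4 * k) ≤ d (M + 4 * k + 3) :=
      (d_mono hd0 hpos hgrow).monotone (by omega)
    have : M + 4 * (k + 1) = M + 4 * k + 3 + 1 := by ring
    rw [this]
    calc 2 ^ (k+1) * d M = 2 * (2 ^ k * d M) := by ring
    _ ≤ 2 * d (M + 4 * k) := by omega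
    _ ≤ 2 * d (M + 4 * k + 3) := by omega
    _ ≤ d (M + 4 * k + 3 + 1) := h1

private lemma summable_tail (hd0 : d 0 = 3) (hpos : ∀ i, 0 < d i)
    (hgrow : ∀ i, 2 * (d i) ^ 2 < d (i + 1)) (M : ℕ) :
    Summable (fun k : ℕ => (1 : ℝ) / d (M + 4 * k)) := by
  have hle : ∀ k : ℕ, (1 : ℝ) / d (M + 4 * k) ≤ (1/2:ℝ)^k * (1 / (d M : ℝ)) := by
    intro k
    have h := d_pow2 hd0 hpos hgrow M k
    have hM : (0:ℝ) < d M := by exact_mod_cast hpos M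
    have h' : (2:ℝ) ^ k * d M ≤ d (M + 4 * k) := by exact_mod_cast h
    have heq : (1/2:ℝ)^k * (1/(d M:ℝ)) = 1/((2:ℝ)^k * d M) := by
      rw [div_pow, one_pow]; field_simp
    rw [heq]
    exact one_div_le_one_div_of_le (by positivity) h'
  exact Summable.of_nonneg_of_le (fun k => by positivity) hle
    ((summable_geometric_of_lt_one (by norm_num) (by norm_num)).mul_right _)

private lemma tail_le (hd0 : d 0 = 3) (hpos : ∀ i, 0 < d i)
    (hgrow : ∀ i, 2 * (d i) ^ 2 < d (i + 1)) (M : ℕ) :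
    ∑' k : ℕ, (1 : ℝ) / d (M + 4 * k) ≤ 2 / d M := by
  have hM : (0:ℝ) < d M := by exact_mod_cast hpos M
  have hle : ∀ k : ℕ, (1 : ℝ) / d (M + 4 * k) ≤ (1/2:ℝ)^k * (1 / d M) := by
    intro k
    have h := d_pow2 hd0 hpos hgrow M k
    have h' : (2:ℝ) ^ k * d M ≤ d (M + 4 * k) := by exact_mod_cast h
    have heq : (1/2:ℝ)^k * (1/(d M:ℝ)) = 1/((2:ℝ)^k * d M) := by
      rw [div_pow, one_pow]; field_simp
    rw [heq]
    exact one_div_le_one_div_of_le (by positivity) h'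
  calc ∑' k : ℕ, (1 : ℝ) / d (M + 4 * k)
      ≤ ∑' k : ℕ, (1/2:ℝ)^k * (1 / d M) := by
        apply Summable.tsum_le_tsum hle (summable_tail hd0 hpos hgrow M)
        exact (summable_geometric_of_lt_one (by norm_num) (by norm_num)).mul_right _
    _ = (∑' k : ℕ, (1/2:ℝ)^k) * (1 / d M) := tsum_mul_right
    _ = 2 / d M := by
        rw [tsum_geometric_of_lt_one (by norm_num) (by norm_num)]
        norm_num
        rw [div_eq_mul_inv]

private lemma tail_pos (hd0 : d 0 = 3) (hpos : ∀ i, 0 < d i)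
    (hgrow : ∀ i, 2 * (d i) ^ 2 < d (i + 1)) (M : ℕ) :
    0 < ∑' k : ℕ, (1 : ℝ) / d (M + 4 * k) := by
  have h0 : (0:ℝ) < 1 / d (M + 4 * 0) := by
    have := hpos (M + 4 * 0); positivity
  exact lt_of_lt_of_le h0 (Summable.le_tsum (summable_tail hd0 hpos hgrow M) 0
    (fun j _ => by positivity))

end Aux

section Key
variable {d : ℕ → ℕ}

/-- fract of `n (1 - T_j)` when the whole sum is tail. -/
private lemma key0 (hd0 : d 0 = 3) (hpos : ∀ i, 0 < d i)
    (hgrow : ∀ i, 2 * (d i) ^ 2 < d (i + 1)) (j n : ℕ) (hn : 0 < n)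
    (hlt : (n : ℝ) * ∑' k : ℕ, (1 : ℝ) / d (j + 4 * k) < 1) :
    Int.fract ((n : ℝ) * (1 - ∑' k : ℕ, (1 : ℝ) / d (j + 4 * k)))
      = 1 - (n : ℝ) * ∑' k : ℕ, (1 : ℝ) / d (j + 4 * k) := by
  set T := ∑' k : ℕ, (1 : ℝ) / d (j + 4 * k) with hT
  have hTpos : 0 < T := tail_pos hd0 hpos hgrow j
  have hnT : 0 < (n:ℝ) * T := by
    have : (0:ℝ) < n := by exact_mod_cast hn
    positivity
  have h1 : (n:ℝ) * (1 - T) = (n:ℝ) + (-((n:ℝ)*T)) := by ring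
  rw [h1, Int.fract_natCast_add, Int.fract_neg, Int.fract_eq_self.mpr ⟨le_of_lt hnT, hlt⟩]
  rw [Int.fract_eq_self.mpr ⟨le_of_lt hnT, hlt⟩]
  exact ne_of_gt hnT

/-- Main per-class lower bound for the fractional part. -/
private lemma key (hd0 : d 0 = 3) (hpos : ∀ i, 0 < d i)
    (hdvd : ∀ i, d i ∣ d (i + 1))
    (hgrow : ∀ i, 2 * (d i) ^ 2 < d (i + 1)) (j K n : ℕ) (hn : 0 < n)
    (hτ : (n : ℝ) * ∑' k : ℕ, (1 : ℝ) / d (j + 4 * (K + 1) + 4 * k)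
        < 1 / d (j + 4 * K)) :
    1 / (d (j + 4 * K) : ℝ)
        - (n : ℝ) * ∑' k : ℕ, (1 : ℝ) / d (j + 4 * (K + 1) + 4 * k)
      ≤ Int.fract ((n : ℝ) * (1 - ∑' k : ℕ, (1 : ℝ) / d (j + 4 * k))) := by
  set D := d (j + 4 * K) with hDdef
  set τ := ∑' k : ℕ, (1 : ℝ) / d (j + 4 * (K + 1) + 4 * k) with hτdef
  set T := ∑' k : ℕ, (1 : ℝ) / d (j + 4 * k) with hTdef
  have hDpos : 0 < D := hpos _
  have hDR : (0:ℝ) < D := by exact_mod_cast hDpos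
  have hτpos : 0 < τ := tail_pos hd0 hpos hgrow _
  have hnR : (0:ℝ) < n := by exact_mod_cast hn
  have hnτ : 0 < (n:ℝ) * τ := by positivity
  have hnτ1 : (n:ℝ) * τ < 1 := by
    have h1D : 1 / (D:ℝ) ≤ 1 := by
      rw [div_le_one hDR]; exact_mod_cast hDpos
    linarith
  -- split the total sum
  have hsum := summable_tail hd0 hpos hgrow (d := d) j
  have hsplit := Summable.sum_add_tsum_nat_add (K + 1) hsum
  have htail : (∑' k : ℕ, (1 : ℝ) / d (j + 4 * (k + (K + 1)))) = τ := by
    refine tsum_congr fun k => ?_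
    have e : j + 4 * (k + (K + 1)) = j + 4 * (K + 1) + 4 * k := by ring
    rw [e]
  -- head as P / D
  set P : ℕ := ∑ k ∈ Finset.range (K + 1), D / d (j + 4 * k) with hPdef
  have hhead : (∑ k ∈ Finset.range (K + 1), (1:ℝ) / d (j + 4 * k)) = (P:ℝ) / D := by
    rw [hPdef, Nat.cast_sum, Finset.sum_div]
    refine Finset.sum_congr rfl fun k hk => ?_
    have hk' : k < K + 1 := Finset.mem_range.mp hk
    have hdvd' : d (j + 4 * k) ∣ D := d_dvd_le hdvd _ _ (by omega)
    have hne0 : (0:ℝ) < (d (j + 4 * k) : ℝ) := by exact_mod_cast hpos _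
    rw [Nat.cast_div hdvd' hne0.ne']
    rw [div_right_comm, div_self hDR.ne']
  have hT : T = (P:ℝ) / D + τ := by
    rw [hTdef, ← hsplit, hhead, htail]
  -- rewrite the product
  set N : ℤ := (n:ℤ) * D - (n:ℤ) * P with hNdef
  have hx : (n:ℝ) * (1 - T) = (N:ℝ) / D - (n:ℝ) * τ := by
    rw [hT, hNdef]
    push_cast
    field_simp
    ring
  set q : ℤ := N / D with hq
  set ρ : ℤ := N % D with hρ
  have hDz : ((D:ℤ)) ≠ 0 := by exact_mod_cast hDpos.ne'
  have hNq : ((D:ℤ)) * q + ρ = N := Int.mul_ediv_add_emod N D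
  have hρ0 : 0 ≤ ρ := Int.emod_nonneg N hDz
  have hρD : ρ < D := Int.emod_lt_of_pos N (by exact_mod_cast hDpos)
  have hNr : (N:ℝ) / D = (q:ℝ) + (ρ:ℝ) / D := by
    have : (N:ℝ) = (D:ℝ) * q + ρ := by exact_mod_cast hNq.symm
    rw [this]
    field_simp
  have hfr : Int.fract ((n:ℝ) * (1 - T)) = Int.fract ((ρ:ℝ)/D - (n:ℝ)*τ) := by
    rw [hx, hNr, add_sub_assoc, Int.fract_intCast_add]
  rw [hfr]
  rcases eq_or_lt_of_le hρ0 with h0 | h1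
  · -- ρ = 0
    rw [← h0]
    simp only [Int.cast_zero, zero_div, zero_sub]
    rw [Int.fract_neg, Int.fract_eq_self.mpr ⟨le_of_lt hnτ, hnτ1⟩]
    · have h1D : 1 / (D:ℝ) ≤ 1 := by
        rw [div_le_one hDR]; exact_mod_cast hDpos
      linarith
    · rw [Int.fract_eq_self.mpr ⟨le_of_lt hnτ, hnτ1⟩]
      exact ne_of_gt hnτ
  · -- 1 ≤ ρ
    have hρ1 : (1:ℝ) ≤ (ρ:ℝ) := by exact_mod_cast h1
    have hρDR : (ρ:ℝ) < D := by exact_mod_cast hρD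
    have h1ρ : 1/(D:ℝ) ≤ (ρ:ℝ)/D := by gcongr
    have hv0 : 0 ≤ (ρ:ℝ)/D - (n:ℝ)*τ := by linarith
    have hv1 : (ρ:ℝ)/D - (n:ℝ)*τ < 1 := by
      have : (ρ:ℝ)/D < 1 := (div_lt_one hDR).mpr hρDR
      linarith
    rw [Int.fract_eq_self.mpr ⟨hv0, hv1⟩]
    linarith
end Key



/-- Part (2) of Example-Proposition 6.12: with `r₁ := 1 − Σ 1/d_{4k}` and
`r₂ := 1 − Σ 1/d_{4k+2}` built from a sequence `dᵢ` with `d₀ = 3`, `dᵢ ∣ d_{i+1}`,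
`g(d_{i+1}) > 2dᵢ` and `d_{i+1} > 2dᵢ²`, every integer `n ≥ m` satisfies
`max({n r₁}, {n r₂}) > 1/g(n)`. -/
theorem stmt_14 (g : ℝ → ℝ) (hgmono : MonotoneOn g (Set.Ici 0))
    (hgnonneg : ∀ x : ℝ, 0 ≤ x → 0 ≤ g x)
    (m : ℕ) (hm : 0 < m) (hgm : ∀ x : ℝ, (m : ℝ) ≤ x → 2 ≤ g x)
    (d : ℕ → ℕ) (hpos : ∀ i, 0 < d i) (hd0 : d 0 = 3)
    (hdvd : ∀ i, d i ∣ d (i + 1))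
    (hgd : ∀ i, 2 * (d i : ℝ) < g (d (i + 1)))
    (hgrow : ∀ i, 2 * (d i) ^ 2 < d (i + 1)) :
    ∀ n : ℕ, m ≤ n →
      1 / g n < max (Int.fract ((n : ℝ) * (1 - ∑' k : ℕ, (1 : ℝ) / (d (4 * k) : ℝ))))
        (Int.fract ((n : ℝ) * (1 - ∑' k : ℕ, (1 : ℝ) / (d (4 * k + 2) : ℝ)))) := by

  intro n hn
  have hmn : (m:ℝ) ≤ (n:ℝ) := by exact_mod_cast hn
  have hg2 : 2 ≤ g n := hgm n hmn
  have hgpos : (0:ℝ) < g n := by linarith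
  have hn0 : 0 < n := lt_of_lt_of_le hm hn
  have hnn : (0:ℝ) < n := by exact_mod_cast hn0
  have hsm : StrictMono d := d_mono hd0 hpos hgrow
  have e0 : (∑' k : ℕ, (1:ℝ)/(d (4*k))) = ∑' k : ℕ, (1:ℝ)/d (0 + 4*k) :=
    tsum_congr fun k => by rw [Nat.zero_add]
  have e2 : (∑' k : ℕ, (1:ℝ)/(d (4*k+2))) = ∑' k : ℕ, (1:ℝ)/d (2 + 4*k) :=
    tsum_congr fun k => by rw [Nat.add_comm]
  rw [e0, e2]
  by_cases hc : d 1 ≤ n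
  · -- main case : find s with d (s+1) ≤ n < d (s+2)
    have dlb : ∀ t, t + 3 ≤ d t := by
      intro t
      induction t with
      | zero => omega
      | succ k ih => have := hsm (lt_add_one k); omega
    obtain ⟨s, hs1, hs2⟩ : ∃ s, d (s+1) ≤ n ∧ n < d (s+2) := by
      by_contra hno
      push_neg at hno
      have hall : ∀ s, d (s+1) ≤ n := by
        intro s
        induction s with
        | zero => exact hc
        | succ k ih => exact hno k ih
      have h1 := hall n
      have h2 := dlb (n+1)
      omega
    obtain ⟨i, hi_or, hi_even⟩ : ∃ i, (i = s + 3 ∨ i = s + 4) ∧ i % 2 = 0 := by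
      rcases Nat.even_or_odd s with he | ho
      · exact ⟨s + 4, Or.inr rfl, by have := Nat.even_iff.mp he; omega⟩
      · exact ⟨s + 3, Or.inl rfl, by have := Nat.odd_iff.mp ho; omega⟩
    obtain ⟨j, K, hj02, hjK⟩ : ∃ j K : ℕ, (j = 0 ∨ j = 2) ∧ j + 4 * (K + 1) = i := by
      have h4 : i % 4 = 0 ∨ i % 4 = 2 := by omega
      rcases h4 with h | h
      · exact ⟨0, i/4 - 1, Or.inl rfl, by omega⟩
      · exact ⟨2, i/4 - 1, Or.inr rfl, by omega⟩
    -- numeric facts over ℕ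
    have hKs : j + 4 * K ≤ s := by omega
    have hmono1 : d (j + 4*K) ≤ d s := hsm.monotone hKs
    have hmono2 : d (s+3) ≤ d (j + 4*(K+1)) := hsm.monotone (by omega)
    have hs2R : (0:ℝ) < d (s+2) := by exact_mod_cast hpos _
    have hnatR : 2 * (n:ℝ) * d (s+2) < d (j + 4*(K+1)) := by
      have a1 : (n:ℝ) < d (s+2) := by exact_mod_cast hs2
      have a2 : 2*(d (s+2):ℝ)^2 < d (s+3) := by exact_mod_cast hgrow (s+2)
      have a3 : (d (s+3):ℝ) ≤ d (j+4*(K+1)) := by exact_mod_cast hmono2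
      nlinarith [mul_pos (sub_pos.mpr a1) hs2R]
    have hds2 : 2 * d s < d (s+2) := by
      have h1 : 2 * d (s+1) ≤ d (s+2) := d_step hd0 hpos hgrow (s+1)
      have h2 : d s < d (s+1) := hsm (Nat.lt_succ_self s)
      omega
    -- cast to ℝ
    have hDR : (0:ℝ) < d (j + 4*K) := by exact_mod_cast hpos _
    have hiR : (0:ℝ) < d (j + 4*(K+1)) := by exact_mod_cast hpos _
    have hsR : (0:ℝ) < d s := by exact_mod_cast hpos s
    have hτle : (∑' k : ℕ, (1:ℝ)/d (j + 4*(K+1) + 4*k)) ≤ 2 / d (j + 4*(K+1)) :=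
      tail_le hd0 hpos hgrow _
    have hτpos : 0 < ∑' k : ℕ, (1:ℝ)/d (j + 4*(K+1) + 4*k) :=
      tail_pos hd0 hpos hgrow _
    have hnτ : (n:ℝ) * (∑' k : ℕ, (1:ℝ)/d (j + 4*(K+1) + 4*k)) < 1 / d (s+2) := by
      have h1 : (n:ℝ) * (∑' k : ℕ, (1:ℝ)/d (j + 4*(K+1) + 4*k))
          ≤ (n:ℝ) * (2 / d (j + 4*(K+1))) :=
        mul_le_mul_of_nonneg_left hτle hnn.le
      have h2 : (n:ℝ) * (2 / d (j + 4*(K+1))) < 1 / d (s+2) := by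
        rw [show (n:ℝ) * (2 / d (j + 4*(K+1))) = (2*n) / d (j + 4*(K+1)) by ring]
        rw [div_lt_div_iff₀ hiR hs2R]
        linarith [hnatR]
      linarith
    have hτkey : (n:ℝ) * (∑' k : ℕ, (1:ℝ)/d (j + 4*(K+1) + 4*k)) < 1 / d (j + 4*K) := by
      have h1 : (1:ℝ)/ d (s+2) < 1 / d (j + 4*K) := by
        apply one_div_lt_one_div_of_lt hDR
        have hlt : d (j + 4*K) < d (s+2) := lt_of_le_of_lt hmono1 (hsm (by omega : s < s+2))
        exact_mod_cast hlt
      linarith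
    have hkey := key hd0 hpos hdvd hgrow j K n hn0 hτkey
    have hfin : 1 / g n < 1 / (d (j + 4*K) : ℝ)
        - (n:ℝ) * (∑' k : ℕ, (1:ℝ)/d (j + 4*(K+1) + 4*k)) := by
      have c1 : 2 * (d s : ℝ) < g n := by
        have hmem1 : ((d (s+1):ℝ)) ∈ Set.Ici (0:ℝ) := Set.mem_Ici.mpr (by positivity)
        have hmem2 : ((n:ℝ)) ∈ Set.Ici (0:ℝ) := Set.mem_Ici.mpr (by positivity)
        have hle : ((d (s+1):ℝ)) ≤ (n:ℝ) := by exact_mod_cast hs1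
        have := hgmono hmem1 hmem2 hle
        have := hgd s
        linarith
      have c2 : 1 / g n < 1 / (2 * (d s:ℝ)) := one_div_lt_one_div_of_lt (by positivity) c1
      have c3 : 1 / (d s:ℝ) ≤ 1 / (d (j + 4*K):ℝ) := by
        apply one_div_le_one_div_of_le hDR
        exact_mod_cast hmono1
      have c5 : 1 / (d (s+2):ℝ) ≤ 1 / (2 * (d s:ℝ)) := by
        apply one_div_le_one_div_of_le (by positivity)
        exact_mod_cast le_of_lt hds2
      have c6 : 1 / (2 * (d s:ℝ)) + 1 / (2 * (d s:ℝ)) = 1 / (d s:ℝ) := by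
        have hne : (d s:ℝ) ≠ 0 := ne_of_gt hsR
        field_simp
        norm_num
      linarith
    rcases hj02 with rfl | rfl
    · exact lt_of_lt_of_le (lt_of_lt_of_le hfin hkey) (le_max_left _ _)
    · exact lt_of_lt_of_le (lt_of_lt_of_le hfin hkey) (le_max_right _ _)
  · -- small case : n < d 1, use the j = 2 series entirely as tail
    push_neg at hc
    have hd1 : 19 ≤ d 1 := by
      have h := hgrow 0
      rw [hd0] at h
      norm_num at h
      omega
    have hd2 : 2 * d 1 ^ 2 < d 2 := hgrow 1
    have hT2le := tail_le hd0 hpos hgrow (d := d) 2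
    have hT2pos := tail_pos hd0 hpos hgrow (d := d) 2
    have hd2R : (0:ℝ) < d 2 := by exact_mod_cast hpos 2
    have hkey : (n:ℝ) * (∑' k : ℕ, (1:ℝ)/d (2+4*k)) < 1/2 := by
      have h1 : (n:ℝ) * (∑' k : ℕ, (1:ℝ)/d (2+4*k)) ≤ (n:ℝ) * (2 / d 2) :=
        mul_le_mul_of_nonneg_left hT2le hnn.le
      have h2 : (n:ℝ) * (2 / d 2) < 1/2 := by
        rw [show (n:ℝ) * (2 / d 2) = (2*n) / d 2 by ring]
        rw [div_lt_div_iff₀ hd2R (by norm_num : (0:ℝ) < 2)]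
        have hnat : 4 * n < d 2 := by
          have h3 : n < d 1 := hc
          nlinarith
        have : ((4 * n : ℕ):ℝ) < d 2 := by exact_mod_cast hnat
        push_cast at this ⊢
        linarith
      linarith
    have hfr := key0 hd0 hpos hgrow 2 n hn0 (lt_trans hkey (by norm_num))
    refine lt_of_lt_of_le ?_ (le_max_right _ _)
    rw [hfr]
    have h12 : 1 / g n ≤ 1/2 := one_div_le_one_div_of_le (by norm_num) hg2
    linarith
end

section
/- Let (a_k)_{k≥1} be a monotone nondecreasing sequence of real numbers and (b_k)_{k≥1} a sequence of real numbers such that b_k < a_k for every k and lim_{k→∞} (a_k − b_k) = 0. Then (b_k) admits a strictly increasing subsequence; that is, there exists a strictly increasing function φ : ℕ → ℕ such that the sequence (b_{φ(k)})_{k≥1} is strictly increasing. -/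
/-- Lemma 5.7 (`lem: strictly increasing seq b_k`): if `(a_k)` is monotone nondecreasing,
`b_k < a_k` for all `k`, and `a_k − b_k → 0`, then `(b_k)` has a strictly increasing
subsequence. -/
theorem stmt_15 (a b : ℕ → ℝ) (ha : Monotone a) (hlt : ∀ k, b k < a k)
    (hlim : Filter.Tendsto (fun k => a k - b k) Filter.atTop (nhds 0)) :
    ∃ φ : ℕ → ℕ, StrictMono φ ∧ StrictMono (b ∘ φ) := by
  have key : ∀ n : ℕ, ∃ m, n < m ∧ b n < b m := by
    intro n
    have hpos : 0 < a n - b n := sub_pos.mpr (hlt n)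
    have hev : ∀ᶠ k in Filter.atTop, a k - b k < a n - b n := by
      have := hlim.eventually (eventually_lt_nhds hpos)
      simpa using this
    obtain ⟨N, hN⟩ := hev.exists_forall_of_atTop
    refine ⟨max N (n + 1), lt_of_lt_of_le (Nat.lt_succ_self n) (le_max_right _ _), ?_⟩
    set m := max N (n + 1)
    have h1 : a m - b m < a n - b n := hN m (le_max_left _ _)
    have h2 : a n ≤ a m := ha (le_trans (Nat.le_succ n) (le_max_right _ _))
    linarith
  choose f hf hbf using key
  refine ⟨fun k => f^[k] 0, ?_, ?_⟩ <;> apply strictMono_nat_of_lt_succ <;> intro k <;>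
    simp only [Function.comp_apply, Function.iterate_succ_apply']
  · exact hf _
  · exact hbf _
end
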